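/- arXiv:1508.02580 — 6 statements merged into one kernel-verified Lean document; each statement's English description precedes it below -/
import Mathlib

section
/- Let p be a prime and γ a positive integer. If A(z,t) ∈ ℤ[z][t] is monic in t of t-degree d and satisfies A(z, Φ_p(z)) = 0 modulo p^γ (i.e. every coefficient of the power series A(z,Φ_p(z)) is divisible by p^γ), then v_p(d!) ≥ γ, where v_p denotes the p-adic valuation. In particular, the power series Φ_p(z) is transcendental over ℤ[z]: there is no nonzero polynomial A(z,t) ∈ ℤ[z][t] with A(z,Φ_p(z)) = 0 as a formal power series. -/
open PowerSeries
open scoped Classical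

/-- `Φ_p(z) = Σ_{n≥0} z^{p^n}` as a formal power series over `ℤ`. -/
noncomputable def Phi (p : ℕ) : PowerSeries ℤ :=
  PowerSeries.mk fun m => if ∃ n : ℕ, m = p ^ n then 1 else 0

/-- Evaluation of a polynomial `A(z,t) ∈ ℤ[z][t]` at `t = Φ_p(z)`, yielding a
formal power series in `z`. -/
noncomputable def evalPhi (p : ℕ) (A : Polynomial (Polynomial ℤ)) : PowerSeries ℤ :=
  Polynomial.eval₂ Polynomial.coeToPowerSeries.ringHom (Phi p) A

namespace PhiAux

/-- base-`p` digit sum -/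
def sd (p M : ℕ) : ℕ := (Nat.digits p M).sum

variable {p : ℕ}

lemma sd_zero : sd p 0 = 0 := by simp [sd]

lemma sd_eq (hp : 2 ≤ p) {M : ℕ} (hM : M ≠ 0) :
    sd p M = M % p + sd p (M / p) := by
  unfold sd
  rw [Nat.digits_def' hp (Nat.pos_of_ne_zero hM)]
  simp

lemma sd_mul_add (hp : 2 ≤ p) (q r : ℕ) (hr : r < p) :
    sd p (p * q + r) = r + sd p q := by
  rcases Nat.eq_zero_or_pos (p * q + r) with h | h
  · have hq : q = 0 := by
      rcases Nat.eq_zero_or_pos q with h' | h'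
      · exact h'
      · exfalso
        have : p * 1 ≤ p * q := Nat.mul_le_mul_left p h'
        omega
    have hr0 : r = 0 := by omega
    simp [hq, hr0, sd_zero]
  · rw [sd_eq hp h.ne']
    have h1 : (p * q + r) % p = r := by
      rw [Nat.mul_add_mod]; exact Nat.mod_eq_of_lt hr
    have h2 : (p * q + r) / p = q := by
      rw [Nat.mul_add_div (by omega) q r, Nat.div_eq_of_lt hr, add_zero]
    rw [h1, h2]

lemma sd_one (hp : 2 ≤ p) : sd p 1 = 1 := by
  have := sd_mul_add hp 0 1 (by omega)
  simpa [sd_zero] using this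

lemma sd_le (M : ℕ) : sd p M ≤ M := Nat.digit_sum_le p M

lemma sd_subadd (hp : p.Prime) (a b : ℕ) : sd p (a + b) ≤ sd p a + sd p b := by
  haveI : Fact p.Prime := ⟨hp⟩
  have la := sub_one_mul_padicValNat_factorial (p := p) a
  have lb := sub_one_mul_padicValNat_factorial (p := p) b
  have lab := sub_one_mul_padicValNat_factorial (p := p) (a + b)
  have hdvd := Nat.factorial_mul_factorial_dvd_factorial_add a b
  have hle : padicValNat p a.factorial + padicValNat p b.factorial ≤
      padicValNat p (a + b).factorial := by
    have h1 := (Nat.factorization_le_iff_dvd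
      (Nat.mul_ne_zero (Nat.factorial_ne_zero a) (Nat.factorial_ne_zero b))
      (Nat.factorial_ne_zero (a + b))).mpr hdvd
    have h2 := h1 p
    rwa [Nat.factorization_mul (Nat.factorial_ne_zero a) (Nat.factorial_ne_zero b),
      Finsupp.add_apply, Nat.factorization_def _ hp, Nat.factorization_def _ hp,
      Nat.factorization_def _ hp] at h2
  have hmul : (p - 1) * (padicValNat p a.factorial + padicValNat p b.factorial) ≤
      (p - 1) * padicValNat p (a + b).factorial := Nat.mul_le_mul_left _ hle
  rw [Nat.mul_add, la, lb, lab] at hmul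
  have h1 : sd p a ≤ a := sd_le a
  have h2 : sd p b ≤ b := sd_le b
  have h3 : sd p (a + b) ≤ a + b := sd_le (a + b)
  unfold sd at *
  omega

lemma sd_pow_mul_add (hp : 2 ≤ p) (n : ℕ) :
    ∀ K r : ℕ, r < p ^ n → sd p (p ^ n * K + r) = sd p K + sd p r := by
  induction n with
  | zero =>
    intro K r hr
    rw [pow_zero] at hr
    obtain rfl : r = 0 := by omega
    simp [sd_zero]
  | succ n ih =>
    intro K r hr
    have key : p ^ (n + 1) * K + r = p * (p ^ n * K + r / p) + r % p := by
      have hr' : p * (r / p) + r % p = r := Nat.div_add_mod r p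
      calc p ^ (n + 1) * K + r = p * (p ^ n * K) + (p * (r / p) + r % p) := by
            rw [hr']; ring
        _ = p * (p ^ n * K + r / p) + r % p := by ring
    rw [key, sd_mul_add hp _ _ (Nat.mod_lt _ (by omega))]
    have hdiv : r / p < p ^ n := by
      rw [Nat.div_lt_iff_lt_mul (by omega)]
      calc r < p ^ (n + 1) := hr
        _ = p ^ n * p := by rw [pow_succ]
    rw [ih K (r / p) hdiv]
    rcases Nat.eq_zero_or_pos r with h0 | h0
    · simp [h0, sd_zero, Nat.zero_div, Nat.zero_mod]
    · rw [sd_eq hp h0.ne']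
      omega

lemma sd_pow (hp : 2 ≤ p) (n : ℕ) : sd p (p ^ n) = 1 := by
  have := sd_pow_mul_add hp n 1 0 (by positivity)
  simpa [sd_zero, sd_one hp] using this

lemma sd_eq_zero_iff (hp : 2 ≤ p) (M : ℕ) : sd p M = 0 ↔ M = 0 := by
  constructor
  · intro h
    induction M using Nat.strong_induction_on with
    | _ M ih =>
      by_contra hM
      rw [sd_eq hp hM] at h
      have h1 : M % p = 0 := by omega
      have h2 : sd p (M / p) = 0 := by omega
      have h3 : M / p < M := Nat.div_lt_self (Nat.pos_of_ne_zero hM) (by omega)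
      have h4 := ih (M / p) h3 h2
      have hdm := Nat.div_add_mod M p
      rw [h4, mul_zero] at hdm
      omega
  · rintro rfl; exact sd_zero

lemma sd_eq_one (hp : 2 ≤ p) (M : ℕ) (h : sd p M = 1) : ∃ t, M = p ^ t := by
  induction M using Nat.strong_induction_on with
  | _ M ih =>
    have hM : M ≠ 0 := by
      rintro rfl; rw [sd_zero] at h; omega
    rw [sd_eq hp hM] at h
    have hdm : p * (M / p) + M % p = M := Nat.div_add_mod M p
    rcases Nat.eq_zero_or_pos (M % p) with h0 | h0
    · have h1 : sd p (M / p) = 1 := by omega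
      have h3 : M / p < M := Nat.div_lt_self (Nat.pos_of_ne_zero hM) (by omega)
      obtain ⟨t, ht⟩ := ih (M / p) h3 h1
      refine ⟨t + 1, ?_⟩
      rw [pow_succ, mul_comm (p ^ t) p, ← ht]
      omega
    · have h1 : M % p = 1 := by omega
      have h2 : sd p (M / p) = 0 := by omega
      have h3 : M / p = 0 := (sd_eq_zero_iff hp _).mp h2
      rw [h3, mul_zero] at hdm
      exact ⟨0, by rw [pow_zero]; omega⟩

/-- repunit in base `p` -/
def repunit (p d : ℕ) : ℕ := ∑ k ∈ Finset.range d, p ^ k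

lemma repunit_succ : repunit p (d + 1) = p * repunit p d + 1 := by
  unfold repunit
  rw [Finset.sum_range_succ' (fun k => p ^ k) d]
  simp [pow_succ, Finset.mul_sum, mul_comm]

lemma repunit_pos (hd : 1 ≤ d) : 1 ≤ repunit p d := by
  rcases d with _ | d
  · omega
  · rw [repunit_succ]; omega

lemma sd_repunit (hp : 2 ≤ p) (d : ℕ) : sd p (repunit p d) = d := by
  induction d with
  | zero => simp [repunit, sd_zero]
  | succ d ih =>
    rw [repunit_succ, sd_mul_add hp _ _ (by omega), ih]
    omega

lemma sd_pow_sub_one (hp : 2 ≤ p) (c : ℕ) : sd p (p ^ c - 1) = c * (p - 1) := by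
  induction c with
  | zero => simp [sd_zero]
  | succ c ih =>
    have h1 : 1 ≤ p ^ c := Nat.one_le_pow _ _ (by omega)
    have h2 : p * (p ^ c - 1) + p * 1 = p * p ^ c := by
      rw [← Nat.mul_add]; congr 1; omega
    have h3 : p ^ (c + 1) = p * p ^ c := by rw [pow_succ, mul_comm]
    have key : p ^ (c + 1) - 1 = p * (p ^ c - 1) + (p - 1) := by omega
    rw [key, sd_mul_add hp _ _ (by omega), ih]
    ring

/-- the sum `Σ_{n ∈ S} p^n` -/
def nsum (p : ℕ) (S : Finset ℕ) : ℕ := ∑ n ∈ S, p ^ n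

lemma nsum_lt (hp : 2 ≤ p) {S : Finset ℕ} {m : ℕ} (h : ∀ s ∈ S, s < m) :
    nsum p S < p ^ m := by
  have hsub : S ⊆ Finset.range m := fun s hs => Finset.mem_range.mpr (h s hs)
  have h1 : nsum p S ≤ ∑ n ∈ Finset.range m, p ^ n :=
    Finset.sum_le_sum_of_subset hsub
  have h2 : ∀ m : ℕ, ∑ n ∈ Finset.range m, p ^ n < p ^ m := by
    intro m
    induction m with
    | zero => simp
    | succ m ih =>
      rw [Finset.sum_range_succ, pow_succ]
      have : p ^ m * 2 ≤ p ^ m * p := Nat.mul_le_mul_left _ hp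
      omega
  exact lt_of_le_of_lt h1 (h2 m)

lemma nsum_eq_pow_mul {S : Finset ℕ} {a : ℕ} (h : ∀ s ∈ S, a ≤ s) :
    nsum p S = p ^ a * nsum p (S.image (· - a)) := by
  unfold nsum
  rw [Finset.sum_image (fun x hx y hy hxy => by have := h x hx; have := h y hy; omega),
    Finset.mul_sum]
  refine Finset.sum_congr rfl fun s hs => ?_
  rw [← pow_add]
  congr 1
  have := h s hs
  omega

lemma sd_nsum (hp : 2 ≤ p) (S : Finset ℕ) : sd p (nsum p S) = S.card := by
  induction S using Finset.induction_on_max with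
  | empty => simp [nsum, sd_zero]
  | insert a S ha ih =>
    have h1 : nsum p (insert a S) = p ^ a * 1 + nsum p S := by
      unfold nsum
      rw [Finset.sum_insert (fun h => absurd (ha a h) (lt_irrefl a))]
      ring
    have h2 : nsum p S < p ^ a := nsum_lt hp (fun s hs => ha s hs)
    rw [h1, sd_pow_mul_add hp _ _ _ h2, sd_one hp, ih,
      Finset.card_insert_of_notMem (fun h => absurd (ha a h) (lt_irrefl a))]
    omega

/-- key subtraction lemma: removing a `p`-power not among the digits
keeps the digit sum large -/
lemma sd_nsum_sub (hp : 2 ≤ p) {S : Finset ℕ} {t : ℕ} (ht : t ∉ S)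
    (hle : p ^ t ≤ nsum p S) : S.card ≤ sd p (nsum p S - p ^ t) := by
  classical
  set S₁ := S.filter (fun s => t < s) with hS₁
  set S₀ := S.filter (fun s => s < t) with hS₀
  have hsplit : nsum p S₁ + nsum p S₀ = nsum p S := by
    unfold nsum
    rw [hS₁, hS₀]
    have : S.filter (fun s => s < t) = S.filter (fun s => ¬ t < s) := by
      apply Finset.filter_congr
      intro s hs
      have : s ≠ t := fun h => ht (h ▸ hs)
      omega
    rw [this]
    exact Finset.sum_filter_add_sum_filter_not S _ _
  have hS₀lt : nsum p S₀ < p ^ t :=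
    nsum_lt hp (fun s hs => (Finset.mem_filter.mp hs).2)
  have hS₁ne : S₁.Nonempty := by
    rcases Finset.eq_empty_or_nonempty S₁ with h | h
    · exfalso
      rw [h] at hsplit
      have hz : nsum p ∅ = 0 := by simp [nsum]
      rw [hz] at hsplit
      omega
    · exact h
  set a := S₁.min' hS₁ne with ha
  have haS₁ : a ∈ S₁ := Finset.min'_mem _ _
  have hta : t < a := (Finset.mem_filter.mp haS₁).2
  set S₁' := S₁.erase a with hS₁'
  have hsum1 : nsum p S₁' + p ^ a = nsum p S₁ := by
    unfold nsum
    exact Finset.sum_erase_add _ _ haS₁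
  have hS₁'ge : ∀ s ∈ S₁', a + 1 ≤ s := by
    intro s hs
    have h1 : s ≠ a := Finset.ne_of_mem_erase hs
    have h2 : a ≤ s := Finset.min'_le _ _ (Finset.mem_of_mem_erase hs)
    omega
  -- nsum S₁' = p^(a+1) * K
  set K := nsum p (S₁'.image (· - (a + 1))) with hK
  have hS₁'eq : nsum p S₁' = p ^ (a + 1) * K := nsum_eq_pow_mul hS₁'ge
  have hsdK : sd p K = S₁'.card := by
    rw [hK, sd_nsum hp, Finset.card_image_of_injOn]
    intro x hx y hy hxy
    have := hS₁'ge x hx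
    have := hS₁'ge y hy
    simp only at hxy
    omega
  -- residual
  have hpt_le_pa : p ^ t < p ^ a := Nat.pow_lt_pow_right (by omega) hta
  set r := (p ^ a - p ^ t) + nsum p S₀ with hr
  have hrlt : r < p ^ a := by omega
  have hra1 : r < p ^ (a + 1) := lt_of_lt_of_le hrlt (Nat.pow_le_pow_right (by omega) (by omega))
  have hmain : nsum p S - p ^ t = p ^ (a + 1) * K + r := by omega
  rw [hmain, sd_pow_mul_add hp _ _ _ hra1, hsdK]
  -- sd of residual
  have hres : sd p r = (a - t) * (p - 1) + sd p (nsum p S₀) := by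
    have h1 : p ^ a - p ^ t = p ^ t * (p ^ (a - t) - 1) := by
      have h2 : p ^ t * p ^ (a - t) = p ^ a := by
        rw [← pow_add]; congr 1; omega
      have h3 : p ^ t * (p ^ (a - t) - 1) + p ^ t * 1 = p ^ t * p ^ (a - t) := by
        rw [← Nat.mul_add]
        congr 1
        have : 1 ≤ p ^ (a - t) := Nat.one_le_pow _ _ (by omega)
        omega
      omega
    rw [hr, h1, sd_pow_mul_add hp _ _ _ hS₀lt, sd_pow_sub_one hp]
  rw [hres, sd_nsum hp]
  -- card counting
  have hcard : S₀.card + S₁.card = S.card := by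
    have hdisj : Disjoint S₀ S₁ := by
      rw [Finset.disjoint_left]
      intro s hs0 hs1
      have := (Finset.mem_filter.mp hs0).2
      have := (Finset.mem_filter.mp hs1).2
      omega
    have hunion : S₀ ∪ S₁ = S := by
      ext s
      simp only [Finset.mem_union, hS₀, hS₁, Finset.mem_filter]
      constructor
      · rintro (⟨h, _⟩ | ⟨h, _⟩) <;> exact h
      · intro hs
        have : s ≠ t := fun h => ht (h ▸ hs)
        rcases lt_or_gt_of_ne this with h | h
        · exact Or.inl ⟨hs, h⟩
        · exact Or.inr ⟨hs, h⟩
    rw [← hunion, Finset.card_union_of_disjoint hdisj]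
  have hS₁'card : S₁'.card + 1 = S₁.card := by
    rw [hS₁', Finset.card_erase_of_mem haS₁]
    have : 1 ≤ S₁.card := Finset.card_pos.mpr hS₁ne
    omega
  have hat : 1 ≤ a - t := by omega
  have hp1 : 1 ≤ p - 1 := by omega
  have : 1 ≤ (a - t) * (p - 1) := Nat.one_le_iff_ne_zero.mpr (by positivity)
  omega


lemma coeff_Phi (m : ℕ) :
    (PowerSeries.coeff m) (Phi p) = if ∃ n, m = p ^ n then 1 else 0 := by
  simp [Phi]

lemma coeff_Phi_pow_eq_zero (hp : p.Prime) :
    ∀ j M : ℕ, j < sd p M → (PowerSeries.coeff M) (Phi p ^ j) = 0 := by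
  intro j
  induction j with
  | zero =>
    intro M hM
    rw [pow_zero, PowerSeries.coeff_one]
    have hM0 : M ≠ 0 := by
      intro h; rw [h, sd_zero] at hM; omega
    simp [hM0]
  | succ j ih =>
    intro M hM
    rw [pow_succ', PowerSeries.coeff_mul]
    apply Finset.sum_eq_zero
    rintro ⟨u, v⟩ hx
    have huv : u + v = M := Finset.HasAntidiagonal.mem_antidiagonal.mp hx
    by_cases hu : ∃ n, u = p ^ n
    · have h1 : sd p u = 1 := by
        obtain ⟨n, rfl⟩ := hu; exact sd_pow hp.two_le n
      have h2 : j < sd p v := by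
        have h3 := sd_subadd hp u v
        rw [huv] at h3
        omega
      rw [ih v h2, mul_zero]
    · rw [coeff_Phi, if_neg hu, zero_mul]

lemma coeff_Phi_pow_nsum (hp : p.Prime) :
    ∀ (c : ℕ) (S : Finset ℕ), S.card = c →
      (PowerSeries.coeff (nsum p S)) (Phi p ^ c) = (c.factorial : ℤ) := by
  intro c
  induction c with
  | zero =>
    intro S hS
    rw [Finset.card_eq_zero] at hS
    subst hS
    simp [nsum, PowerSeries.coeff_one]
  | succ c ih =>
    intro S hS
    set N := nsum p S with hN
    rw [pow_succ', PowerSeries.coeff_mul,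
      Finset.Nat.sum_antidiagonal_eq_sum_range_succ_mk]
    have hple : ∀ t ∈ S, p ^ t ≤ N := by
      intro t htS
      exact Finset.single_le_sum (f := fun n => p ^ n) (fun i _ => Nat.zero_le _) htS
    have hsub : S.image (p ^ ·) ⊆ Finset.range (N + 1) := by
      intro u hu
      obtain ⟨t, htS, rfl⟩ := Finset.mem_image.mp hu
      have := hple t htS
      exact Finset.mem_range.mpr (by omega)
    have hzero : ∀ u ∈ Finset.range (N + 1), u ∉ S.image (p ^ ·) →
        (PowerSeries.coeff u) (Phi p) * (PowerSeries.coeff (N - u)) (Phi p ^ c) = 0 := by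
      intro u hu hnotim
      by_cases hex : ∃ n, u = p ^ n
      · obtain ⟨n, rfl⟩ := hex
        have hnS : n ∉ S := by
          intro hn
          exact hnotim (Finset.mem_image.mpr ⟨n, hn, rfl⟩)
        have hle : p ^ n ≤ N := by
          have := Finset.mem_range.mp hu; omega
        have hsd : c < sd p (N - p ^ n) := by
          have h4 := sd_nsum_sub hp.two_le hnS (hN ▸ hle)
          rw [hS] at h4
          rw [hN]
          omega
        rw [coeff_Phi_pow_eq_zero hp c _ hsd, mul_zero]
      · rw [coeff_Phi, if_neg hex, zero_mul]
    rw [← Finset.sum_subset hsub hzero,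
      Finset.sum_image (fun x hx y hy hxy => Nat.pow_right_injective hp.two_le hxy)]
    have hterm : ∀ t ∈ S,
        (PowerSeries.coeff (p ^ t)) (Phi p) *
          (PowerSeries.coeff (N - p ^ t)) (Phi p ^ c) = (c.factorial : ℤ) := by
      intro t htS
      have h1 : (PowerSeries.coeff (p ^ t)) (Phi p) = 1 := by
        rw [coeff_Phi, if_pos ⟨t, rfl⟩]
      have h2 : N - p ^ t = nsum p (S.erase t) := by
        have h3 : nsum p (S.erase t) + p ^ t = N :=
          Finset.sum_erase_add S (fun n => p ^ n) htS
        omega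
      rw [h1, h2, ih (S.erase t) (by rw [Finset.card_erase_of_mem htS, hS]; rfl), one_mul]
    rw [Finset.sum_congr rfl hterm, Finset.sum_const, hS, Nat.factorial_succ]
    push_cast
    ring

lemma main_coeff (hp : p.Prime) (A : Polynomial (Polynomial ℤ)) :
    ∃ M : ℕ, (PowerSeries.coeff M) (evalPhi p A) =
      (A.leadingCoeff.coeff A.leadingCoeff.natDegree) * ((A.natDegree).factorial : ℤ) := by
  classical
  have hp2 := hp.two_le
  set d := A.natDegree with hd
  set i₀ := A.leadingCoeff.natDegree with hi₀
  set e := (Finset.range (d + 1)).sup (fun j => (A.coeff j).natDegree) with he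
  set m := e + 1 with hm
  set N := p ^ m * repunit p d with hN
  refine ⟨N + i₀, ?_⟩
  have hem : e < p ^ e := Nat.lt_pow_self (by omega : 1 < p)
  have hemm : p ^ e ≤ p ^ m := Nat.pow_le_pow_right (by omega) (by omega)
  have hcoeffdeg : ∀ j ∈ Finset.range (d + 1), (A.coeff j).natDegree ≤ e := by
    intro j hj
    exact Finset.le_sup (f := fun j => (A.coeff j).natDegree) hj
  have hi₀e : i₀ ≤ e := by
    have h1 : A.leadingCoeff = A.coeff d := rfl
    rw [hi₀, h1]
    exact hcoeffdeg d (Finset.self_mem_range_succ d)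
  have hNsum : N = nsum p (Finset.Ico m (m + d)) := by
    rw [hN, nsum, Finset.sum_Ico_eq_sum_range]
    simp only [add_tsub_cancel_left]
    rw [repunit, Finset.mul_sum]
    exact Finset.sum_congr rfl fun k hk => (pow_add p m k).symm
  have hcard : (Finset.Ico m (m + d)).card = d := by
    rw [Nat.card_Ico]; omega
  have hsdN : sd p N = d := by
    rw [hNsum, sd_nsum hp2, hcard]
  -- the key term-vanishing lemma
  have hterm0 : ∀ j, j ≤ d → ∀ u v : ℕ, u + v = N + i₀ → (j ≠ d ∨ u ≠ i₀) →
      (A.coeff j).coeff u * (PowerSeries.coeff v) (Phi p ^ j) = 0 := by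
    intro j hj u v huv hne
    by_cases hue : e < u
    · rw [Polynomial.coeff_eq_zero_of_natDegree_lt
        (lt_of_le_of_lt (hcoeffdeg j (Finset.mem_range.mpr (by omega))) hue), zero_mul]
    push_neg at hue
    rcases lt_trichotomy u i₀ with h | h | h
    · -- v = N + (i₀ - u), digit sum ≥ d + 1
      have hv : v = N + (i₀ - u) := by omega
      have hr1 : 1 ≤ i₀ - u := by omega
      have hr2 : i₀ - u < p ^ m := by
        have : i₀ - u ≤ e := by omega
        omega
      have hsdv : d + 1 ≤ sd p v := by
        rw [hv, hN, sd_pow_mul_add hp2 m _ _ hr2, sd_repunit hp2]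
        have : sd p (i₀ - u) ≠ 0 := by
          rw [Ne, sd_eq_zero_iff hp2]; omega
        omega
      rw [coeff_Phi_pow_eq_zero hp j v (by omega), mul_zero]
    · -- u = i₀, so j < d, v = N
      have hjd : j < d := by
        rcases hne with h' | h'
        · omega
        · omega
      have hv : v = N := by omega
      rw [hv, coeff_Phi_pow_eq_zero hp j N (by omega), mul_zero]
    · -- u > i₀ : v = N - (u - i₀)
      rcases Nat.eq_zero_or_pos d with hd0 | hd0
      · exfalso
        have : N = 0 := by
          rw [hN, hd0]; simp [repunit]
        omega
      have hRpos : 1 ≤ repunit p d := repunit_pos hd0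
      have hNm : p ^ m ≤ N := by
        rw [hN]
        calc p ^ m = p ^ m * 1 := by ring
          _ ≤ p ^ m * repunit p d := Nat.mul_le_mul_left _ hRpos
      set r := u - i₀ with hrdef
      have hr1 : 1 ≤ r := by omega
      have hre : r ≤ e := by omega
      have hrm : r < p ^ m := by omega
      have hv : v = N - r := by omega
      have hmulsub : p ^ m * (repunit p d - 1) + p ^ m * 1 = p ^ m * repunit p d := by
        rw [← Nat.mul_add]; congr 1; omega
      have hsplit : N - r = p ^ m * (repunit p d - 1) + (p ^ m - r) := by
        rw [hN]; omega
      have hrsub : p ^ m - r < p ^ m := by omega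
      have hrep1 : repunit p d - 1 = p * repunit p (d - 1) := by
        have h1 : repunit p ((d - 1) + 1) = p * repunit p (d - 1) + 1 := repunit_succ
        have h2 : d - 1 + 1 = d := by omega
        rw [h2] at h1
        omega
      have hsd1 : sd p (repunit p d - 1) = d - 1 := by
        rw [hrep1]
        have := sd_mul_add hp2 (repunit p (d - 1)) 0 (by omega)
        rw [add_zero] at this
        rw [this, sd_repunit hp2]
        omega
      have hsd2 : 2 ≤ sd p (p ^ m - r) := by
        have hne0 : sd p (p ^ m - r) ≠ 0 := by
          rw [Ne, sd_eq_zero_iff hp2]; omega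
      -- not equal to 1 :
        rcases Nat.lt_or_ge (sd p (p ^ m - r)) 2 with hlt | hge
        · exfalso
          have h1 : sd p (p ^ m - r) = 1 := by omega
          obtain ⟨t, ht⟩ := sd_eq_one hp2 _ h1
          have htm : t < m := by
            have : p ^ t < p ^ m := by omega
            exact (Nat.pow_lt_pow_iff_right (by omega)).mp this
          have htm1 : p ^ t ≤ p ^ (m - 1) := Nat.pow_le_pow_right (by omega) (by omega)
          have hpm : p ^ m = p * p ^ (m - 1) := by
            have h5 : m - 1 = e := by omega
            rw [h5, hm, pow_succ']
          have h2 : 2 * p ^ (m - 1) ≤ p ^ m := by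
            rw [hpm]
            exact Nat.mul_le_mul_right _ hp2
          have hee : e < p ^ (m - 1) := by
            have : m - 1 = e := by omega
            rwa [this]
          omega
        · exact hge
      have hsdv : d + 1 ≤ sd p v := by
        rw [hv, hsplit, sd_pow_mul_add hp2 m _ _ hrsub, hsd1]
        omega
      rw [coeff_Phi_pow_eq_zero hp j v (by omega), mul_zero]
  -- now compute the coefficient
  rw [evalPhi, Polynomial.eval₂_eq_sum_range, map_sum]
  have hsummand : ∀ j, (PowerSeries.coeff (N + i₀))
      (Polynomial.coeToPowerSeries.ringHom (A.coeff j) * Phi p ^ j) =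
      ∑ x ∈ Finset.HasAntidiagonal.antidiagonal (N + i₀),
        (A.coeff j).coeff x.1 * (PowerSeries.coeff x.2) (Phi p ^ j) := by
    intro j
    rw [PowerSeries.coeff_mul]
    exact Finset.sum_congr rfl fun x hx => by
      rw [Polynomial.coeToPowerSeries.ringHom_apply, Polynomial.coeff_coe]
  rw [Finset.sum_congr rfl fun j _ => hsummand j]
  rw [Finset.sum_eq_single_of_mem d (Finset.self_mem_range_succ d)
    (fun j hj hjd => Finset.sum_eq_zero fun x hx =>
      hterm0 j (by have := Finset.mem_range.mp hj; omega) x.1 x.2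
        (Finset.HasAntidiagonal.mem_antidiagonal.mp hx) (Or.inl hjd))]
  rw [Finset.sum_eq_single (i₀, N)
    (fun x hx hne => hterm0 d le_rfl x.1 x.2 (Finset.HasAntidiagonal.mem_antidiagonal.mp hx)
      (Or.inr (fun h1 => hne (by
        have h2 := Finset.HasAntidiagonal.mem_antidiagonal.mp hx
        have h3 : x.2 = N := by omega
        exact Prod.ext h1 h3))))
    (fun hnotmem => absurd (Finset.HasAntidiagonal.mem_antidiagonal.mpr (by omega)) hnotmem)]
  have hlc : A.leadingCoeff = A.coeff d := rfl
  rw [hNsum, coeff_Phi_pow_nsum hp d _ hcard, ← hlc]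

end PhiAux

/-- If `A(z,t) ∈ ℤ[z][t]` is monic in `t` of `t`-degree `d` and
`A(z, Φ_p(z)) = 0` modulo `p^γ`, then `v_p(d!) ≥ γ`.  In particular,
`Φ_p(z)` is transcendental over `ℤ[z]`. -/
theorem stmt_0 (p : ℕ) (hp : p.Prime) (γ : ℕ) (hγ : 0 < γ) :
    (∀ A : Polynomial (Polynomial ℤ), A.Monic →
        (∀ m : ℕ, (p : ℤ) ^ γ ∣ PowerSeries.coeff m (evalPhi p A)) →
        γ ≤ padicValNat p (Nat.factorial A.natDegree)) ∧
    (∀ A : Polynomial (Polynomial ℤ), A ≠ 0 → evalPhi p A ≠ 0) := by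
  constructor
  · intro A hMonic hdvd
    obtain ⟨M, hM⟩ := PhiAux.main_coeff hp A
    rw [hMonic.leadingCoeff] at hM
    rw [Polynomial.natDegree_one, Polynomial.coeff_one_zero, one_mul] at hM
    have h1 := hdvd M
    rw [hM] at h1
    have h2 : ((p : ℤ)) ^ γ = ((p ^ γ : ℕ) : ℤ) := by push_cast; ring
    rw [h2, Int.natCast_dvd_natCast] at h1
    have h3 := (Nat.Prime.pow_dvd_iff_le_factorization hp
      (Nat.factorial_ne_zero _)).mp h1
    rwa [Nat.factorization_def _ hp] at h3
  · intro A hA h0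
    obtain ⟨M, hM⟩ := PhiAux.main_coeff hp A
    rw [h0, map_zero] at hM
    have h1 : A.leadingCoeff ≠ 0 := Polynomial.leadingCoeff_ne_zero.mpr hA
    have h2 : A.leadingCoeff.coeff A.leadingCoeff.natDegree ≠ 0 := by
      have h3 : A.leadingCoeff.leadingCoeff ≠ 0 := Polynomial.leadingCoeff_ne_zero.mpr h1
      rwa [Polynomial.leadingCoeff] at h3
    exact (mul_ne_zero h2 (Int.natCast_ne_zero.mpr (Nat.factorial_ne_zero _))) hM.symm
end

section
/- Let p be a prime. Then, as an identity of formal power series with integer coefficients, Φ_p^p(z) − Φ_p(z) + z = Σ_{r=2}^{p} Σ_{(b_1,…,b_r)} (p!/(b_1!·b_2!·…·b_r!)) · H_{b_1,b_2,…,b_r}(z), where the inner sum ranges over all compositions (b_1,…,b_r) of p into r positive integer parts (b_i ≥ 1, b_1+…+b_r = p). In particular, every coefficient of Φ_p^p(z) − Φ_p(z) + z is divisible by p. -/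
open PowerSeries
open scoped Classical

noncomputable def Hser (p : ℕ) {r : ℕ} (b : Fin r → ℕ) : PowerSeries ℤ :=
  PowerSeries.mk fun m =>
    ((Set.ncard {n : Fin r → ℕ | StrictAnti n ∧ ∑ i, b i * p ^ n i = m} : ℕ) : ℤ)

namespace Stmt3

open Finset

variable {p m r : ℕ}

/-- support of `k` inside `range (m+1)` -/
noncomputable def Dk (m : ℕ) (k : ℕ → ℕ) : Finset ℕ :=
  (Finset.range (m+1)).filter (fun i => k i ≠ 0)

noncomputable def Kset (p m : ℕ) : Finset (ℕ → ℕ) :=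
  (Finset.piAntidiag (Finset.range (m+1)) p).filter
    (fun k => ∑ i ∈ Finset.range (m+1), p ^ i * k i = m)

noncomputable def Bset (r p : ℕ) : Finset (Fin r → ℕ) :=
  (Finset.Nat.antidiagonalTuple r p).filter (fun b => ∀ i, 0 < b i)

noncomputable def Sfin (p m : ℕ) {r : ℕ} (b : Fin r → ℕ) : Finset (Fin r → ℕ) :=
  (Fintype.piFinset fun _ : Fin r => Finset.range (m+1)).filter
    (fun n => StrictAnti n ∧ ∑ i, b i * p ^ n i = m)

noncomputable def Pset (p m r : ℕ) : Finset ((Fin r → ℕ) × (Fin r → ℕ)) :=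
  ((Bset r p) ×ˢ (Fintype.piFinset fun _ : Fin r => Finset.range (m+1))).filter
    (fun x => StrictAnti x.2 ∧ ∑ i, x.1 i * p ^ x.2 i = m)

/-- decreasing enumeration of a finset of naturals -/
noncomputable def enum (D : Finset ℕ) (h : D.card = r) : Fin r → ℕ :=
  fun i => D.orderEmbOfFin h i.rev

lemma enum_strictAnti (D : Finset ℕ) (h : D.card = r) : StrictAnti (enum D h) := by
  intro a b hab
  exact (D.orderEmbOfFin h).strictMono (by simpa [Fin.rev_lt_rev] using hab)

lemma enum_mem (D : Finset ℕ) (h : D.card = r) (i : Fin r) : enum D h i ∈ D :=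
  Finset.orderEmbOfFin_mem D h _

lemma enum_inj (D : Finset ℕ) (h : D.card = r) : Function.Injective (enum D h) :=
  (enum_strictAnti D h).injective

lemma enum_image (D : Finset ℕ) (h : D.card = r) :
    Finset.image (enum D h) Finset.univ = D := by
  ext j
  simp only [mem_image, mem_univ, true_and]
  constructor
  · rintro ⟨i, rfl⟩; exact enum_mem D h i
  · intro hj
    have : j ∈ Set.range (D.orderEmbOfFin h) := by
      rw [Finset.range_orderEmbOfFin]; exact_mod_cast hj
    obtain ⟨i, hi⟩ := this
    exact ⟨i.rev, by simpa [enum, Fin.rev_rev] using hi⟩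

lemma sum_enum {M : Type*} [AddCommMonoid M] (D : Finset ℕ) (h : D.card = r) (g : ℕ → M) :
    ∑ i, g (enum D h i) = ∑ j ∈ D, g j := by
  conv_rhs => rw [← enum_image D h]
  rw [Finset.sum_image (fun x _ y _ hxy => enum_inj D h hxy)]

lemma prod_enum {M : Type*} [CommMonoid M] (D : Finset ℕ) (h : D.card = r) (g : ℕ → M) :
    ∏ i, g (enum D h i) = ∏ j ∈ D, g j := by
  conv_rhs => rw [← enum_image D h]
  rw [Finset.prod_image (fun x _ y _ hxy => enum_inj D h hxy)]

lemma anti_eq_enum {n : Fin r → ℕ} {D : Finset ℕ} (h : D.card = r)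
    (hanti : StrictAnti n) (hmem : ∀ i, n i ∈ D) : n = enum D h := by
  have key : (fun i : Fin r => n i.rev) = ⇑(D.orderEmbOfFin h) := by
    apply Finset.orderEmbOfFin_unique h (fun i => hmem _)
    intro a b hab
    exact hanti (Fin.rev_lt_rev.2 hab)
  funext i
  have := congrFun key i.rev
  simpa [Fin.rev_rev, enum] using this

/-- reconstruction of `k` from `(b, n)` -/
noncomputable def recon {r : ℕ} (x : (Fin r → ℕ) × (Fin r → ℕ)) : ℕ → ℕ :=
  fun j => ∑ i, if x.2 i = j then x.1 i else 0

lemma recon_apply {b n : Fin r → ℕ} (hinj : Function.Injective n) (i₀ : Fin r) :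
    recon (b, n) (n i₀) = b i₀ := by
  unfold recon
  rw [Finset.sum_eq_single i₀]
  · simp
  · intro i _ hne
    exact if_neg (fun h => hne (hinj h))
  · simp

lemma recon_ne_zero {b n : Fin r → ℕ} {j : ℕ} (h : recon (b, n) j ≠ 0) : ∃ i, n i = j := by
  by_contra hc
  push_neg at hc
  exact h (Finset.sum_eq_zero fun i _ => if_neg (hc i))


lemma mem_Kset_iff {p m : ℕ} {k : ℕ → ℕ} : k ∈ Kset p m ↔
    (∑ i ∈ Finset.range (m+1), k i = p ∧ ∀ i, k i ≠ 0 → i ∈ Finset.range (m+1)) ∧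
      ∑ i ∈ Finset.range (m+1), p ^ i * k i = m := by
  simp [Kset, Finset.mem_piAntidiag]

lemma mem_Pset_iff {p m r : ℕ} {x : (Fin r → ℕ) × (Fin r → ℕ)} : x ∈ Pset p m r ↔
    ((∑ i, x.1 i = p ∧ ∀ i, 0 < x.1 i) ∧ ∀ i, x.2 i ∈ Finset.range (m+1)) ∧
      (StrictAnti x.2 ∧ ∑ i, x.1 i * p ^ x.2 i = m) := by
  simp [Pset, Bset, Finset.mem_product, Fintype.mem_piFinset,
    Finset.Nat.mem_antidiagonalTuple, and_assoc]

lemma sum_Dk {m : ℕ} (k : ℕ → ℕ) (g : ℕ → ℕ) (hg : ∀ j, k j = 0 → g j = 0) :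
    ∑ j ∈ Dk m k, g j = ∑ j ∈ Finset.range (m+1), g j := by
  rw [Dk]
  refine Finset.sum_filter_of_ne fun x _ hne h0 => hne (hg x h0)

lemma Dk_recon {m r : ℕ} {b n : Fin r → ℕ} (hpos : ∀ i, 0 < b i)
    (hn : ∀ i, n i ∈ Finset.range (m+1)) (hanti : StrictAnti n) :
    Dk m (recon (b, n)) = Finset.image n Finset.univ := by
  ext j
  simp only [Dk, Finset.mem_filter, Finset.mem_image, Finset.mem_univ, true_and]
  constructor
  · rintro ⟨-, hne⟩; exact recon_ne_zero hne
  · rintro ⟨i, rfl⟩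
    refine ⟨hn i, ?_⟩
    rw [recon_apply hanti.injective i]
    exact (hpos i).ne'

lemma recon_mem {p m r : ℕ} {x : (Fin r → ℕ) × (Fin r → ℕ)} (hx : x ∈ Pset p m r) :
    recon x ∈ (Kset p m).filter (fun k => (Dk m k).card = r) := by
  obtain ⟨⟨⟨hb, hpos⟩, hn⟩, hanti, hsum⟩ := mem_Pset_iff.mp hx
  obtain ⟨b, n⟩ := x
  simp only at hb hpos hn hanti hsum
  refine Finset.mem_filter.mpr ⟨mem_Kset_iff.mpr ⟨⟨?_, ?_⟩, ?_⟩, ?_⟩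
  · rw [show (recon (b, n)) = fun j => ∑ i, if n i = j then b i else 0 from rfl]
    rw [Finset.sum_comm]
    calc ∑ i : Fin r, ∑ j ∈ Finset.range (m+1), (if n i = j then b i else 0)
        = ∑ i : Fin r, b i := by
          refine Finset.sum_congr rfl fun i _ => ?_
          rw [Finset.sum_ite_eq (Finset.range (m+1)) (n i) (fun _ => b i), if_pos (hn i)]
      _ = p := hb
  · intro j hne
    obtain ⟨i, rfl⟩ := recon_ne_zero hne
    exact hn i
  · rw [show (recon (b, n)) = fun j => ∑ i, if n i = j then b i else 0 from rfl]
    calc ∑ j ∈ Finset.range (m+1), p ^ j * ∑ i, (if n i = j then b i else 0)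
        = ∑ j ∈ Finset.range (m+1), ∑ i, (if n i = j then p ^ j * b i else 0) := by
          refine Finset.sum_congr rfl fun j _ => ?_
          rw [Finset.mul_sum]
          exact Finset.sum_congr rfl fun i _ => by rw [mul_ite, mul_zero]
      _ = ∑ i : Fin r, ∑ j ∈ Finset.range (m+1), (if n i = j then p ^ j * b i else 0) :=
          Finset.sum_comm
      _ = ∑ i : Fin r, b i * p ^ n i := by
          refine Finset.sum_congr rfl fun i _ => ?_
          rw [Finset.sum_ite_eq (Finset.range (m+1)) (n i) (fun j => p ^ j * b i),
            if_pos (hn i), mul_comm]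
      _ = m := hsum
  · rw [Dk_recon hpos hn hanti, Finset.card_image_of_injective _ hanti.injective,
      Finset.card_univ, Fintype.card_fin]

lemma fiber_eq (p m r : ℕ) :
    ∑ k ∈ (Kset p m).filter (fun k => (Dk m k).card = r),
        ((Nat.multinomial (Finset.range (m+1)) k : ℕ) : ℤ)
      = ∑ x ∈ Pset p m r, ((Nat.multinomial Finset.univ x.1 : ℕ) : ℤ) := by
  refine Finset.sum_bij'
    (fun k hk =>
      ((fun i => k (enum (Dk m k) (Finset.mem_filter.mp hk).2 i)),
        enum (Dk m k) (Finset.mem_filter.mp hk).2))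
    (fun x _ => recon x) ?_ ?_ ?_ ?_ ?_
  · -- hi : image lands in Pset
    intro k hk
    obtain ⟨hK, hc⟩ := Finset.mem_filter.mp hk
    obtain ⟨⟨hsum, hsupp⟩, hm⟩ := mem_Kset_iff.mp hK
    have hene : ∀ i, k (enum (Dk m k) hc i) ≠ 0 := fun i =>
      (Finset.mem_filter.mp (enum_mem _ hc i)).2
    refine mem_Pset_iff.mpr ⟨⟨⟨?_, ?_⟩, ?_⟩, ?_, ?_⟩
    · rw [sum_enum (Dk m k) hc k, sum_Dk k k (fun _ h => h)]
      exact hsum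
    · exact fun i => Nat.pos_of_ne_zero (hene i)
    · exact fun i => (Finset.mem_filter.mp (enum_mem _ hc i)).1
    · exact enum_strictAnti _ hc
    · rw [sum_enum (Dk m k) hc (fun j => k j * p ^ j),
        sum_Dk k (fun j => k j * p ^ j) (fun j h => by simp [h])]
      simpa [mul_comm] using hm
  · -- hj
    intro x hx
    exact recon_mem hx
  · -- left inverse
    intro k hk
    obtain ⟨hK, hc⟩ := Finset.mem_filter.mp hk
    obtain ⟨⟨hsum, hsupp⟩, hm⟩ := mem_Kset_iff.mp hK
    funext j
    simp only [recon]
    by_cases hj : j ∈ Dk m k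
    · obtain ⟨i₀, -, hi₀⟩ := Finset.mem_image.mp ((enum_image (Dk m k) hc).symm ▸ hj)
      rw [← hi₀]
      exact recon_apply (enum_inj (Dk m k) hc) i₀
    · have hkj : k j = 0 := by
        by_contra hne
        exact hj (Finset.mem_filter.mpr ⟨hsupp j hne, hne⟩)
      rw [hkj]
      refine Finset.sum_eq_zero fun i _ => if_neg fun h => ?_
      exact hj (h ▸ enum_mem (Dk m k) hc i)
  · -- right inverse
    intro x hx
    have hcard : (Dk m (recon x)).card = r := (Finset.mem_filter.mp (recon_mem hx)).2
    obtain ⟨⟨⟨hb, hpos⟩, hn⟩, hanti, hsum⟩ := mem_Pset_iff.mp hx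
    obtain ⟨b, n⟩ := x
    simp only at hb hpos hn hanti hsum hcard
    have hne : n = enum (Dk m (recon (b, n))) hcard := by
      refine anti_eq_enum hcard hanti fun i => ?_
      rw [Dk_recon hpos hn hanti]
      exact Finset.mem_image.mpr ⟨i, Finset.mem_univ i, rfl⟩
    refine Prod.ext ?_ ?_
    · funext i
      simp only
      rw [show enum (Dk m (recon (b, n))) _ = n from hne.symm]
      exact recon_apply hanti.injective i
    · simp only
      rw [show enum (Dk m (recon (b, n))) _ = n from hne.symm]
  · -- weights
    intro k hk
    obtain ⟨hK, hc⟩ := Finset.mem_filter.mp hk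
    obtain ⟨⟨hsum, hsupp⟩, hm⟩ := mem_Kset_iff.mp hK
    congr 1
    simp only [Nat.multinomial]
    congr 1
    · congr 1
      rw [sum_enum (Dk m k) hc k, sum_Dk k k (fun _ h => h)]
    · rw [prod_enum (Dk m k) hc (fun j => (k j).factorial)]
      rw [show Dk m k = (Finset.range (m+1)).filter (fun i => k i ≠ 0) from rfl]
      exact (Finset.prod_filter_of_ne (s := Finset.range (m+1))
        (f := fun j => (k j).factorial) (p := fun i => k i ≠ 0)
        (fun x _ hne h0 => hne (by simp [h0]))).symm


lemma coeff_phi_pow {p : ℕ} (hp : 2 ≤ p) (m : ℕ) :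
    (PowerSeries.coeff m) (Phi p ^ p)
      = ∑ k ∈ Kset p m, ((Nat.multinomial (Finset.range (m+1)) k : ℕ) : ℤ) := by
  set T : PowerSeries ℤ := ∑ n ∈ Finset.range (m+1), (PowerSeries.X) ^ (p ^ n) with hT
  have hstep1 : (PowerSeries.coeff m) (Phi p ^ p) = (PowerSeries.coeff m) (T ^ p) := by
    have hdvd : (PowerSeries.X : PowerSeries ℤ) ^ (m+1) ∣ (Phi p - T) := by
      rw [PowerSeries.X_pow_dvd_iff]
      intro j hj
      rw [map_sub, hT, map_sum]
      simp only [PowerSeries.coeff_X_pow]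
      rw [show (PowerSeries.coeff j) (Phi p) = (if ∃ n : ℕ, j = p ^ n then 1 else 0) from
        PowerSeries.coeff_mk _ _]
      by_cases h : ∃ n : ℕ, j = p ^ n
      · obtain ⟨t, rfl⟩ := h
        rw [if_pos ⟨t, rfl⟩, Finset.sum_eq_single t
          (fun n _ hne => if_neg (fun he => hne ((Nat.pow_right_injective hp he).symm)))
          (fun habs => absurd (Finset.mem_range.mpr (by
            have h1 : t < p ^ t := Nat.lt_pow_self (n := t) (by omega : 1 < p)
            omega)) habs), if_pos rfl, sub_self]
      · rw [if_neg h, Finset.sum_eq_zero (fun n _ => if_neg (fun he => h ⟨n, he⟩)), sub_self]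
    have h2 : (PowerSeries.X : PowerSeries ℤ) ^ (m+1) ∣ (Phi p ^ p - T ^ p) :=
      dvd_trans hdvd (sub_dvd_pow_sub_pow _ _ p)
    have h3 := PowerSeries.X_pow_dvd_iff.mp h2 m (Nat.lt_succ_self m)
    rw [map_sub] at h3
    exact sub_eq_zero.mp h3
  rw [hstep1, hT, Finset.sum_pow_eq_sum_piAntidiag]
  simp_rw [← pow_mul, Finset.prod_pow_eq_pow_sum]
  rw [map_sum]
  have hterm : ∀ k : ℕ → ℕ,
      (PowerSeries.coeff m) ((Nat.multinomial (Finset.range (m+1)) k : PowerSeries ℤ)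
          * PowerSeries.X ^ (∑ i ∈ Finset.range (m+1), p ^ i * k i))
        = if ∑ i ∈ Finset.range (m+1), p ^ i * k i = m
            then ((Nat.multinomial (Finset.range (m+1)) k : ℕ) : ℤ) else 0 := by
    intro k
    rw [← map_natCast (PowerSeries.C (R := ℤ)), PowerSeries.coeff_C_mul, PowerSeries.coeff_X_pow,
      mul_ite, mul_one, mul_zero]
    exact if_congr eq_comm rfl rfl
  rw [Finset.sum_congr rfl (fun k _ => hterm k)]
  rw [Kset, Finset.sum_filter]


lemma kset_split {p : ℕ} (hp : 2 ≤ p) (m : ℕ) :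
    ∑ k ∈ Kset p m, ((Nat.multinomial (Finset.range (m+1)) k : ℕ) : ℤ)
      = ∑ r ∈ Finset.Icc 1 p, ∑ k ∈ (Kset p m).filter (fun k => (Dk m k).card = r),
          ((Nat.multinomial (Finset.range (m+1)) k : ℕ) : ℤ) := by
  refine (Finset.sum_fiberwise_of_maps_to ?_ _).symm
  intro k hk
  obtain ⟨⟨hsum, hsupp⟩, hm⟩ := mem_Kset_iff.mp hk
  rw [Finset.mem_Icc]
  constructor
  · rw [Nat.one_le_iff_ne_zero, ne_eq, Finset.card_eq_zero]
    intro h0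
    have hz : ∑ i ∈ Finset.range (m+1), k i = 0 := Finset.sum_eq_zero fun i hi => by
      by_contra hne
      have : i ∈ Dk m k := Finset.mem_filter.mpr ⟨hi, hne⟩
      simp [h0] at this
    omega
  · calc (Dk m k).card = ∑ j ∈ Dk m k, 1 := (Finset.card_eq_sum_ones _)
      _ ≤ ∑ j ∈ Dk m k, k j :=
          Finset.sum_le_sum fun j hj =>
            Nat.one_le_iff_ne_zero.mpr (Finset.mem_filter.mp hj).2
      _ ≤ ∑ j ∈ Finset.range (m+1), k j :=
          Finset.sum_le_sum_of_subset (Finset.filter_subset _ _)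
      _ = p := hsum

lemma pset_split (p m r : ℕ) (g : (Fin r → ℕ) → ℤ) :
    ∑ x ∈ Pset p m r, g x.1
      = ∑ b ∈ Bset r p, ((Sfin p m b).card : ℤ) * g b := by
  rw [Finset.sum_finset_product (Pset p m r) (Bset r p) (fun b => Sfin p m b)
    (fun x => by
      simp only [Pset, Sfin, Finset.mem_filter, Finset.mem_product]
      tauto)]
  refine Finset.sum_congr rfl fun b _ => ?_
  rw [show (∑ a ∈ Sfin p m b, g (b, a).1) = ∑ _a ∈ Sfin p m b, g b from rfl,
    Finset.sum_const, nsmul_eq_mul]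

lemma ncard_eq_card {p : ℕ} (hp : 2 ≤ p) {r : ℕ} {b : Fin r → ℕ}
    (hpos : ∀ i, 0 < b i) (m : ℕ) :
    {n : Fin r → ℕ | StrictAnti n ∧ ∑ i, b i * p ^ n i = m}.ncard = (Sfin p m b).card := by
  rw [← Set.ncard_coe_finset]
  congr 1
  ext n
  simp only [Sfin, Finset.coe_filter, Set.mem_setOf_eq, Fintype.mem_piFinset,
    Finset.mem_range]
  constructor
  · rintro ⟨hanti, hsum⟩
    refine ⟨fun i => ?_, hanti, hsum⟩
    have h1 : b i * p ^ n i ≤ m := hsum ▸ Finset.single_le_sum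
      (f := fun i => b i * p ^ n i) (fun j _ => Nat.zero_le _) (Finset.mem_univ i)
    have h2 : p ^ n i ≤ b i * p ^ n i := Nat.le_mul_of_pos_left _ (hpos i)
    have h3 : n i < p ^ n i := Nat.lt_pow_self (n := n i) (by omega : 1 < p)
    omega
  · rintro ⟨-, hanti, hsum⟩
    exact ⟨hanti, hsum⟩

lemma strictAnti_fin_one (n : Fin 1 → ℕ) : StrictAnti n := by
  intro a b h
  exact absurd h (by simp [Subsingleton.elim a b])

lemma r_one {p : ℕ} (hp : 2 ≤ p) (m : ℕ) :
    ∑ b ∈ Bset 1 p, ((Nat.multinomial Finset.univ b : ℕ) : ℤ) * ((Sfin p m b).card : ℤ)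
      = (if ∃ n : ℕ, m = p ^ n then 1 else 0) - (if m = 1 then 1 else 0) := by
  have hB : Bset 1 p = {![p]} := by
    rw [Bset, Finset.Nat.antidiagonalTuple_one, Finset.filter_singleton, if_pos]
    intro i
    simp only [Matrix.cons_val_fin_one]
    omega
  rw [hB, Finset.sum_singleton]
  have hmult : Nat.multinomial (Finset.univ : Finset (Fin 1)) ![p] = 1 := by
    simp [Nat.multinomial, Nat.div_self (Nat.factorial_pos p)]
  rw [hmult, Nat.cast_one, one_mul]
  have hcond : ∀ n : Fin 1 → ℕ, (∑ i, ![p] i * p ^ n i) = p ^ (n 0 + 1) := by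
    intro n
    rw [Fin.sum_univ_one]
    simp [pow_succ, mul_comm]
  by_cases h1 : ∃ t : ℕ, m = p ^ t
  · obtain ⟨t, rfl⟩ := h1
    rw [if_pos ⟨t, rfl⟩]
    match t with
    | 0 =>
      rw [pow_zero, if_pos rfl]
      have hset : Sfin p 1 ![p] = ∅ := by
        rw [Sfin, Finset.filter_eq_empty_iff]
        intro n _
        rw [not_and_or]
        right
        intro hsum
        rw [hcond n] at hsum
        have := Nat.one_lt_pow (n := n 0 + 1) (by omega) (by omega : 1 < p)
        omega
      rw [hset]
      simp
    | (s+1) =>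
      rw [if_neg (by
        have := Nat.one_lt_pow (n := s + 1) (by omega) (by omega : 1 < p)
        omega)]
      have hset : Sfin p (p ^ (s+1)) ![p] = {fun _ => s} := by
        ext n
        simp only [Sfin, Finset.mem_filter, Fintype.mem_piFinset, Finset.mem_range,
          Finset.mem_singleton]
        constructor
        · rintro ⟨-, -, hsum⟩
          rw [hcond n] at hsum
          have hn0 : n 0 = s := by
            have := Nat.pow_right_injective hp hsum
            omega
          funext i
          rw [Subsingleton.elim i 0, hn0]
        · rintro rfl
          refine ⟨fun i => ?_, strictAnti_fin_one _, by rw [hcond]⟩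
          show s < p ^ (s+1) + 1
          have h3 : s < p ^ s := Nat.lt_pow_self (n := s) (by omega : 1 < p)
          have h4 : p ^ s ≤ p ^ (s+1) := Nat.pow_le_pow_right (by omega) (Nat.le_succ s)
          omega
      rw [hset, Finset.card_singleton]
      simp
  · rw [if_neg h1, if_neg (fun hm => h1 ⟨0, by simpa using hm⟩)]
    have hset : Sfin p m ![p] = ∅ := by
      rw [Sfin, Finset.filter_eq_empty_iff]
      intro n _
      rw [not_and_or]
      right
      intro hsum
      rw [hcond n] at hsum
      exact h1 ⟨n 0 + 1, hsum.symm⟩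
    rw [hset]
    simp

lemma dvd_multinomial {p : ℕ} (hp : p.Prime) {r : ℕ} (hr : 2 ≤ r) {b : Fin r → ℕ}
    (hb : ∑ i, b i = p) (hpos : ∀ i, 0 < b i) :
    p ∣ Nat.multinomial Finset.univ b := by
  have hspec := Nat.multinomial_spec (Finset.univ : Finset (Fin r)) b
  have hlt : ∀ i, b i < p := by
    intro i
    have h2 : (Finset.univ.erase i).Nonempty := by
      rw [← Finset.card_pos, Finset.card_erase_of_mem (Finset.mem_univ i),
        Finset.card_univ, Fintype.card_fin]
      omega
    have h3 : 0 < ∑ j ∈ Finset.univ.erase i, b j := Finset.sum_pos (fun j _ => hpos j) h2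
    have h4 : b i + ∑ j ∈ Finset.univ.erase i, b j = p := by
      rw [Finset.add_sum_erase _ _ (Finset.mem_univ i)]
      exact hb
    omega
  have hdvd : p ∣ (∏ i, (b i).factorial) * Nat.multinomial Finset.univ b := by
    rw [hspec, hb]
    exact Nat.dvd_factorial hp.pos le_rfl
  rcases (Nat.Prime.dvd_mul hp).mp hdvd with h | h
  · exfalso
    obtain ⟨i, -, hi⟩ := (Prime.dvd_finset_prod_iff hp.prime _).mp h
    have := (Nat.Prime.dvd_factorial hp).mp hi
    have := hlt i
    omega
  · exact h


lemma master {p : ℕ} (hp : p.Prime) (m : ℕ) :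
    (PowerSeries.coeff m) (Phi p ^ p)
      = ((if ∃ n : ℕ, m = p ^ n then 1 else 0 : ℤ) - (if m = 1 then 1 else 0))
        + ∑ r ∈ Finset.Icc 2 p, ∑ b ∈ Bset r p,
            ((Nat.multinomial Finset.univ b : ℕ) : ℤ) * ((Sfin p m b).card : ℤ) := by
  have hp2 : 2 ≤ p := hp.two_le
  rw [coeff_phi_pow hp2 m, kset_split hp2 m]
  have hIcc : Finset.Icc 1 p = insert 1 (Finset.Icc 2 p) := by
    ext x; simp only [Finset.mem_Icc, Finset.mem_insert]; omega
  rw [hIcc, Finset.sum_insert (by simp [Finset.mem_Icc])]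
  have hfib : ∀ r, ∑ k ∈ (Kset p m).filter (fun k => (Dk m k).card = r),
      ((Nat.multinomial (Finset.range (m+1)) k : ℕ) : ℤ)
      = ∑ b ∈ Bset r p,
          ((Nat.multinomial Finset.univ b : ℕ) : ℤ) * ((Sfin p m b).card : ℤ) := by
    intro r
    rw [fiber_eq p m r,
      pset_split p m r (fun b => ((Nat.multinomial Finset.univ b : ℕ) : ℤ))]
    exact Finset.sum_congr rfl fun b _ => mul_comm _ _
  rw [hfib 1, r_one hp2 m, Finset.sum_congr rfl (fun r _ => hfib r)]

end Stmt3

/-- `Φ_p^p(z) − Φ_p(z) + z = Σ_{r=2}^{p} Σ_{b_1+…+b_r=p, b_i ≥ 1}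
(p!/(b_1!⋯b_r!)) H_{b_1,…,b_r}(z)`; in particular every coefficient of
`Φ_p^p(z) − Φ_p(z) + z` is divisible by `p`. -/
theorem stmt_3 (p : ℕ) (hp : p.Prime) :
    (Phi p ^ p - Phi p + PowerSeries.X =
      ∑ r ∈ Finset.Icc 2 p,
        ∑ b ∈ (Finset.Nat.antidiagonalTuple r p).filter (fun b => ∀ i, 0 < b i),
          ((Nat.multinomial Finset.univ b : ℤ) : PowerSeries ℤ) * Hser p b) ∧
    (∀ m : ℕ, (p : ℤ) ∣ PowerSeries.coeff m (Phi p ^ p - Phi p + PowerSeries.X)) := by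
  have hp2 : 2 ≤ p := hp.two_le
  have hcoeff_rhs : ∀ m : ℕ, (PowerSeries.coeff m)
      (∑ r ∈ Finset.Icc 2 p,
        ∑ b ∈ (Finset.Nat.antidiagonalTuple r p).filter (fun b => ∀ i, 0 < b i),
          ((Nat.multinomial Finset.univ b : ℤ) : PowerSeries ℤ) * Hser p b)
      = ∑ r ∈ Finset.Icc 2 p, ∑ b ∈ Stmt3.Bset r p,
          ((Nat.multinomial Finset.univ b : ℕ) : ℤ) * ((Stmt3.Sfin p m b).card : ℤ) := by
    intro m
    rw [map_sum]
    refine Finset.sum_congr rfl fun r hr => ?_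
    rw [map_sum]
    refine Finset.sum_congr rfl fun b hb => ?_
    have hpos : ∀ i, 0 < b i := (Finset.mem_filter.mp hb).2
    rw [← map_intCast (PowerSeries.C (R := ℤ)) ((Nat.multinomial Finset.univ b : ℕ) : ℤ),
      PowerSeries.coeff_C_mul]
    rw [show (PowerSeries.coeff m) (Hser p b)
        = ((Set.ncard {n : Fin r → ℕ | StrictAnti n ∧ ∑ i, b i * p ^ n i = m} : ℕ) : ℤ) from
      PowerSeries.coeff_mk _ _]
    rw [Stmt3.ncard_eq_card hp2 hpos m]
    norm_cast
  have hpart1 : Phi p ^ p - Phi p + PowerSeries.X =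
      ∑ r ∈ Finset.Icc 2 p,
        ∑ b ∈ (Finset.Nat.antidiagonalTuple r p).filter (fun b => ∀ i, 0 < b i),
          ((Nat.multinomial Finset.univ b : ℤ) : PowerSeries ℤ) * Hser p b := by
    ext m
    rw [map_add, map_sub, hcoeff_rhs m, Stmt3.master hp m]
    rw [show (PowerSeries.coeff m) (Phi p)
        = (if ∃ n : ℕ, m = p ^ n then 1 else 0) from PowerSeries.coeff_mk _ _,
      PowerSeries.coeff_X]
    ring
  refine ⟨hpart1, fun m => ?_⟩
  rw [hpart1, hcoeff_rhs m]
  refine Finset.dvd_sum fun r hr => Finset.dvd_sum fun b hb => ?_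
  have hbmem := Finset.mem_filter.mp hb
  have hdvd : (p : ℤ) ∣ ((Nat.multinomial Finset.univ b : ℕ) : ℤ) :=
    Int.natCast_dvd_natCast.mpr (Stmt3.dvd_multinomial hp (Finset.mem_Icc.mp hr).1
      (Finset.Nat.mem_antidiagonalTuple.mp hbmem.1) hbmem.2)
  exact Dvd.dvd.mul_right hdvd _
end

section
/- Let p be a prime, and let d, r, s be positive integers with r ≥ s, and c an integer with |c| ≤ d. Let a_1, a_2, …, a_r and b_1, b_2, …, b_s be integers, none of which is divisible by p, with 1 ≤ a_i ≤ d for 1 ≤ i ≤ r and 1 ≤ b_i ≤ d for 1 ≤ i ≤ s. If a_1 p^{2rd} + a_2 p^{2(r−1)d} + … + a_r p^{2d} = b_1 p^{n_1} + b_2 p^{n_2} + … + b_s p^{n_s} + c for integers n_1 > n_2 > … > n_s ≥ 0, then r = s, c = 0, a_i = b_i for all i, and n_i = 2d(r+1−i) for i = 1, 2, …, r. -/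
open Finset

-- d*d - d + 1 ≤ 2^d, stated subtraction-free
private lemma aux_sq1 : ∀ d : ℕ, d * d + 1 ≤ 2 ^ d + d := by
  intro d
  induction d with
  | zero => simp
  | succ m ih =>
    rcases Nat.lt_or_ge m 3 with h | h
    · interval_cases m <;> norm_num
    · rw [pow_succ]
      nlinarith [ih, h]

private lemma aux_sq2 : ∀ d : ℕ, 2 * (d * d) + 2 ≤ 3 ^ (d + 1) := by
  intro d
  induction d with
  | zero => norm_num
  | succ m ih =>
    rw [pow_succ]
    nlinarith [ih]

private lemma aux_two_pow (d : ℕ) : d + 1 ≤ 2 ^ d := @Nat.lt_two_pow_self d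

-- core inequality
private lemma aux_core (p d k : ℕ) (hp : 2 ≤ p) (hd : 1 ≤ d) (hk : 1 ≤ k)
    (hsm : p ^ k < 2 * d) : d * p ^ k + 2 ≤ p ^ (d + 1) := by
  rcases eq_or_lt_of_le hp with hp2 | hp3
  · -- p = 2
    subst hp2
    obtain ⟨e, rfl⟩ : ∃ e, d = e + 1 := ⟨d - 1, by omega⟩
    have hk1 : 2 ^ k = 2 * 2 ^ (k - 1) := by
      conv_lhs => rw [show k = (k-1) + 1 by omega]
      rw [pow_succ]; ring
    have h2 : 2 ^ (k - 1) < e + 1 := by omega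
    have h3 : 2 ^ k ≤ 2 * e := by omega
    have h4 : (e+1) * 2 ^ k ≤ (e+1) * (2 * e) := Nat.mul_le_mul_left _ h3
    have h5 := aux_sq1 (e+1)
    have h6 : 2 ^ (e + 1 + 1) = 2 * 2 ^ (e+1) := by rw [pow_succ]; ring
    nlinarith [h4, h5]
  · -- p ≥ 3
    have hp3' : 3 ≤ p := hp3
    have h1 : p ^ k ≤ 2 * d - 1 := by omega
    have h2 : d * p ^ k ≤ d * (2 * d - 1) := Nat.mul_le_mul_left d h1
    have h3 : d * (2 * d - 1) ≤ 2 * (d * d) := by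
      have : d * (2 * d) = 2 * (d * d) := by ring
      calc d * (2 * d - 1) ≤ d * (2 * d) := Nat.mul_le_mul_left d (by omega)
        _ = 2 * (d * d) := this
    have h4 := aux_sq2 d
    have h5 : (3:ℕ) ^ (d+1) ≤ p ^ (d+1) := Nat.pow_le_pow_left hp3' _
    omega

-- geometric sum bound
private lemma aux_geom (p : ℕ) (hp : 2 ≤ p) : ∀ u : ℕ, (∑ e ∈ Finset.range u, p ^ e) + 1 ≤ p ^ u := by
  intro u
  induction u with
  | zero => simp
  | succ m ih =>
    rw [Finset.sum_range_succ, pow_succ]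
    have h1 : p ^ m * 2 ≤ p ^ m * p := Nat.mul_le_mul_left _ hp
    omega

-- Master upper bound: y * U < P  where U = d*p^(d-1)*H + d
private lemma aux_MU (p d : ℕ) (hp : 2 ≤ p) (hd : 1 ≤ d) (H P y : ℤ)
    (hH : 0 ≤ H)
    (hQH : ((p:ℤ) ^ (2*d) - 1) * H = P - (p:ℤ) ^ (2*d))
    (hPB : (p:ℤ) ^ (2*d) ≤ P)
    (hy : 1 ≤ y) (hcore : (d:ℤ) * y + 2 ≤ (p:ℤ) ^ (d+1)) :
    y * ((d:ℤ) * (p:ℤ) ^ (d-1) * H + (d:ℤ)) < P := by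
  have hp1 : (2:ℤ) ≤ (p:ℤ) := by exact_mod_cast hp
  have hp0 : (0:ℤ) ≤ (p:ℤ) := by linarith
  have hA1 : (1:ℤ) ≤ (p:ℤ) ^ (d-1) := one_le_pow₀ (by linarith)
  have hBD : (p:ℤ) ^ (d+1) * (p:ℤ) ^ (d-1) = (p:ℤ) ^ (2*d) := by
    rw [← pow_add]; congr 1; omega
  have hB4 : (4:ℤ) ≤ (p:ℤ) ^ (2*d) := by
    calc (4:ℤ) = 2 ^ (2*1) := by norm_num
    _ ≤ 2 ^ (2*d) := pow_le_pow_right₀ (by norm_num) (by omega)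
    _ ≤ (p:ℤ) ^ (2*d) := pow_le_pow_left₀ (by norm_num) hp1 (2*d)
  set A : ℤ := (p:ℤ) ^ (d-1) with hA
  set B : ℤ := (p:ℤ) ^ (2*d) with hB
  have hd1 : (1:ℤ) ≤ (d:ℤ) := by exact_mod_cast hd
  have hDA : (d:ℤ) * y * A ≤ B - 2 * A := by
    have := mul_le_mul_of_nonneg_right hcore (by linarith : (0:ℤ) ≤ A)
    nlinarith [this, hBD]
  have hDY : (d:ℤ) * y ≤ B - 2 := by
    have h1 : (p:ℤ) ^ (d+1) ≤ B := by
      rw [hB]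
      exact pow_le_pow_right₀ (by linarith) (by omega)
    linarith
  have hPB' : (0:ℤ) ≤ P - B := by linarith
  have key : (B - 1) * (y * ((d:ℤ) * A * H + d)) < (B - 1) * P := by
    have e1 : (B - 1) * (y * ((d:ℤ) * A * H + d)) = (y * (d:ℤ) * A) * ((B-1) * H) + (B - 1) * (y * d) := by ring
    rw [e1, hQH]
    have t1 : (y * (d:ℤ) * A) * (P - B) ≤ (B - 2 * A) * (P - B) := by
      apply mul_le_mul_of_nonneg_right _ hPB'
      nlinarith [hDA]
    have t2 : (B - 2 * A) * (P - B) ≤ (B - 2) * (P - B) := by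
      apply mul_le_mul_of_nonneg_right _ hPB'
      linarith
    have t3 : (B - 1) * (y * d) ≤ (B - 1) * (B - 2) := by
      apply mul_le_mul_of_nonneg_left _ (by linarith)
      nlinarith [hDY]
    nlinarith [t1, t2, t3]
  exact lt_of_mul_lt_mul_left key (by linarith)

set_option maxHeartbeats 4000000 in
private lemma phase2 (p d : ℕ) (hp : 2 ≤ p) (hd : 1 ≤ d) :
    ∀ (R : ℕ) (a b n : Fin R → ℕ) (c : ℤ),
      (∀ i, 1 ≤ a i) → (∀ i, a i ≤ d) → (∀ i, ¬ p ∣ a i) →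
      (∀ i, 1 ≤ b i) → (∀ i, b i ≤ d) → (∀ i, ¬ p ∣ b i) →
      |c| ≤ (d:ℤ) →
      (∀ i : Fin R, 2*d*(R - (i:ℕ)) ≤ n i + d ∧ n i < 2*d*(R - (i:ℕ)) + d) →
      ((∑ i : Fin R, (a i : ℤ) * (p:ℤ) ^ (2*d*(R - (i:ℕ)))) =
        (∑ i : Fin R, (b i : ℤ) * (p:ℤ) ^ (n i)) + c) →
      c = 0 ∧ ∀ i : Fin R, a i = b i ∧ n i = 2*d*(R - (i:ℕ)) := by
  intro R
  induction R with
  | zero =>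
    intro a b n c _ _ _ _ _ _ _ _ heq
    simp only [Finset.univ_eq_empty, Finset.sum_empty] at heq
    exact ⟨by linarith, fun i => i.elim0⟩
  | succ R ih =>
    intro a b n c ha1 had hap hb1 hbd hbp hc hwin heq
    have hp1 : (1:ℤ) ≤ (p:ℤ) := by exact_mod_cast (by omega : 1 ≤ p)
    have hp0 : (0:ℤ) < (p:ℤ) := by linarith
    have hd1 : (1:ℤ) ≤ (d:ℤ) := by exact_mod_cast hd
    rw [Fin.sum_univ_succ, Fin.sum_univ_succ] at heq
    simp only [Fin.val_zero, Fin.val_succ, Nat.sub_zero, Nat.add_sub_add_right] at heq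
    have hw0 : 2*d*(R+1) ≤ n 0 + d ∧ n 0 < 2*d*(R+1) + d := by
      have := hwin 0; simpa using this
    have hwsucc : ∀ i : Fin R, 2*d*(R - (i:ℕ)) ≤ n i.succ + d ∧
        n i.succ < 2*d*(R - (i:ℕ)) + d := fun i => by
      have := hwin i.succ
      simpa only [Fin.val_succ, Nat.add_sub_add_right] using this
    set P : ℤ := (p:ℤ) ^ (2*d*(R+1)) with hPdef
    set H : ℤ := ∑ i : Fin R, (p:ℤ) ^ (2*d*(R - (i:ℕ))) with hHdef
    set Sa : ℤ := ∑ i : Fin R, (a i.succ : ℤ) * (p:ℤ) ^ (2*d*(R - (i:ℕ))) with hSadef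
    set Sb : ℤ := ∑ i : Fin R, (b i.succ : ℤ) * (p:ℤ) ^ (n i.succ) with hSbdef
    have heq' : (a 0 : ℤ) * P + Sa = (b 0 : ℤ) * (p:ℤ) ^ (n 0) + (Sb + c) := by
      rw [hSadef, hSbdef, hPdef]; linarith [heq]
    -- geometric identity for H
    have hH0 : 0 ≤ H := Finset.sum_nonneg fun i _ => by positivity
    have hQH : ((p:ℤ) ^ (2*d) - 1) * H = P - (p:ℤ) ^ (2*d) := by
      have h1 : H = ∑ j ∈ Finset.range R, (p:ℤ) ^ (2*d*(R - j)) := by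
        rw [hHdef]
        exact Fin.sum_univ_eq_sum_range (fun j => (p:ℤ) ^ (2*d*(R - j))) R
      have h2 : H = (∑ j ∈ Finset.range R, ((p:ℤ) ^ (2*d)) ^ j) * (p:ℤ)^(2*d) := by
        rw [h1]
        calc ∑ j ∈ Finset.range R, (p:ℤ) ^ (2*d*(R - j))
            = ∑ j ∈ Finset.range R, (p:ℤ) ^ (2*d*((R-1-j)+1)) := by
              apply Finset.sum_congr rfl; intro j hj
              rw [Finset.mem_range] at hj
              congr 2; omega
          _ = ∑ j ∈ Finset.range R, (p:ℤ) ^ (2*d*(j+1)) :=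
              Finset.sum_range_reflect (fun j => (p:ℤ) ^ (2*d*(j+1))) R
          _ = ∑ j ∈ Finset.range R, ((p:ℤ) ^ (2*d)) ^ j * (p:ℤ)^(2*d) := by
              apply Finset.sum_congr rfl; intro j hj
              rw [← pow_mul, ← pow_add]
              congr 1
              try omega
          _ = _ := by rw [← Finset.sum_mul]
      rw [h2, hPdef]
      have h3 : ((p:ℤ) ^ (2*d) - 1) * ((∑ j ∈ Finset.range R, ((p:ℤ) ^ (2*d)) ^ j) * (p:ℤ)^(2*d))
          = ((∑ j ∈ Finset.range R, ((p:ℤ) ^ (2*d)) ^ j) * ((p:ℤ) ^ (2*d) - 1)) * (p:ℤ)^(2*d) := by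
        ring
      rw [h3, geom_sum_mul]
      rw [show 2*d*(R+1) = 2*d*R + 2*d by ring, pow_add, ← pow_mul]
      ring
    have hPB : (p:ℤ) ^ (2*d) ≤ P := by
      rw [hPdef]
      exact pow_le_pow_right₀ hp1 (by nlinarith)
    have hP0 : (0:ℤ) < P := by positivity
    -- tail bounds
    have hSa_le : Sa ≤ (d:ℤ) * H := by
      rw [hSadef, hHdef, Finset.mul_sum]
      apply Finset.sum_le_sum
      intro i _
      apply mul_le_mul_of_nonneg_right _ (by positivity)
      exact_mod_cast had i.succ
    have hSa0 : 0 ≤ Sa := Finset.sum_nonneg fun i _ => by positivity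
    have hSb0 : 0 ≤ Sb := Finset.sum_nonneg fun i _ => by positivity
    have hApow : (1:ℤ) ≤ (p:ℤ)^(d-1) := one_le_pow₀ hp1
    have hSb_le : Sb ≤ (d:ℤ) * (p:ℤ)^(d-1) * H := by
      rw [hSbdef, hHdef, Finset.mul_sum]
      apply Finset.sum_le_sum
      intro i _
      have hni : n i.succ ≤ 2*d*(R - (i:ℕ)) + (d-1) := by
        have := (hwsucc i).2; omega
      calc (b i.succ : ℤ) * (p:ℤ) ^ (n i.succ)
          ≤ (d:ℤ) * (p:ℤ) ^ (n i.succ) := by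
            apply mul_le_mul_of_nonneg_right _ (by positivity)
            exact_mod_cast hbd i.succ
        _ ≤ (d:ℤ) * ((p:ℤ)^(d-1) * (p:ℤ) ^ (2*d*(R - (i:ℕ)))) := by
            apply mul_le_mul_of_nonneg_left _ (by linarith)
            rw [← pow_add]
            apply pow_le_pow_right₀ hp1
            omega
        _ = (d:ℤ) * (p:ℤ)^(d-1) * (p:ℤ) ^ (2*d*(R - (i:ℕ))) := by ring
    set U : ℤ := (d:ℤ) * (p:ℤ)^(d-1) * H + d with hUdef
    have hSaU : Sa ≤ (d:ℤ) * (p:ℤ)^(d-1) * H := by nlinarith [hSa_le, hH0, hApow, hd1]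
    have habsE : |Sb + c - Sa| ≤ U := by
      rw [abs_le]
      constructor
      · have h9 : -c ≤ (d:ℤ) := by have := abs_le.1 hc; linarith [this.1]
        rw [hUdef]; linarith [hSaU, hSb0, h9]
      · have h9 : c ≤ (d:ℤ) := by have := abs_le.1 hc; linarith [(abs_le.1 hc).2]
        rw [hUdef]; linarith [hSb_le, hSa0, h9]
    have hD : (a 0 : ℤ) * P - (b 0 : ℤ) * (p:ℤ) ^ (n 0) = Sb + c - Sa := by linarith [heq']
    -- y = 1 version of MU
    have hcore1 : (d:ℤ) * 1 + 2 ≤ (p:ℤ)^(d+1) := by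
      have h1 : d + 2 ≤ 2^(d+1) := by have := aux_two_pow d; rw [pow_succ]; omega
      have h2 : (2:ℕ)^(d+1) ≤ p^(d+1) := Nat.pow_le_pow_left hp _
      have h3 : ((d + 2 : ℕ) : ℤ) ≤ ((p^(d+1) : ℕ) : ℤ) := by exact_mod_cast h1.trans h2
      push_cast at h3
      linarith
    have hMU1 : U < P := by
      have := aux_MU p d hp hd H P 1 hH0 hQH hPB le_rfl hcore1
      simpa [hUdef] using this
    rcases lt_trichotomy (n 0) (2*d*(R+1)) with hcase | hcase | hcase
    · -- n 0 < top exponent : contradiction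
      exfalso
      set k : ℕ := 2*d*(R+1) - n 0 with hkdef
      have hk1 : 1 ≤ k := by omega
      have hkd : k ≤ d := by have := hw0.1; omega
      have hPsplit : P = (p:ℤ)^(n 0) * (p:ℤ)^k := by
        rw [hPdef, ← pow_add]; congr 1; omega
      have hD2 : (p:ℤ)^(n 0) * ((a 0 : ℤ) * (p:ℤ)^k - (b 0 : ℤ)) = Sb + c - Sa := by
        rw [← hD, hPsplit]; ring
      have hw0' : (a 0 : ℤ) * (p:ℤ)^k - (b 0 : ℤ) ≠ 0 := by
        intro h
        have hb' : (b 0 : ℤ) = (a 0 : ℤ) * (p:ℤ)^k := by linarith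
        have hbn : b 0 = a 0 * p^k := by exact_mod_cast hb'
        exact hbp 0 (hbn ▸ Dvd.dvd.mul_left (dvd_pow_self p (by omega)) _)
      rcases le_or_gt (2*d) (p^k) with hbig | hsmall
      · -- large p^k
        have hcore2 : (d:ℤ) * 2 + 2 ≤ (p:ℤ)^(d+1) := by
          have h1 : 2*d + 2 ≤ 2^(d+1) := by have := aux_two_pow d; rw [pow_succ]; omega
          have h2 : (2:ℕ)^(d+1) ≤ p^(d+1) := Nat.pow_le_pow_left hp _
          have : ((2*d + 2 : ℕ) : ℤ) ≤ ((p:ℕ)^(d+1) : ℤ) := by exact_mod_cast h1.trans h2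
          push_cast at this ⊢
          linarith
        have hMU2 : 2 * U < P := by
          have := aux_MU p d hp hd H P 2 hH0 hQH hPB (by norm_num) hcore2
          simpa [hUdef] using this
        have hbig' : (2*(d:ℤ)) ≤ (p:ℤ)^k := by exact_mod_cast hbig
        have hwge : (p:ℤ)^k - (d:ℤ) ≤ (a 0 : ℤ) * (p:ℤ)^k - (b 0 : ℤ) := by
          have h1 : (1:ℤ) ≤ (a 0 : ℤ) := by exact_mod_cast ha1 0
          have h2 : (b 0 : ℤ) ≤ d := by exact_mod_cast hbd 0
          nlinarith [pow_pos hp0 k]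
        have hpn1 : (1:ℤ) ≤ (p:ℤ)^(n 0) := one_le_pow₀ hp1
        have hPle : P ≤ 2 * ((p:ℤ)^(n 0) * ((a 0 : ℤ) * (p:ℤ)^k - (b 0 : ℤ))) := by
          rw [hPsplit]
          nlinarith [hwge, hbig', hpn1]
        have : (p:ℤ)^(n 0) * ((a 0 : ℤ) * (p:ℤ)^k - (b 0 : ℤ)) ≤ U :=
          le_trans (le_abs_self _) (by rw [hD2]; exact habsE)
        linarith
      · -- small p^k
        have hcorek : (d:ℤ) * (p:ℤ)^k + 2 ≤ (p:ℤ)^(d+1) := by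
          have := aux_core p d k hp hd hk1 hsmall
          have h2 : ((d * p^k + 2 : ℕ) : ℤ) ≤ ((p:ℕ)^(d+1) : ℤ) := by exact_mod_cast this
          push_cast at h2 ⊢
          linarith
        have hyk : (1:ℤ) ≤ (p:ℤ)^k := one_le_pow₀ hp1
        have hMUk : (p:ℤ)^k * U < P := by
          have := aux_MU p d hp hd H P ((p:ℤ)^k) hH0 hQH hPB hyk hcorek
          calc (p:ℤ)^k * U = (p:ℤ)^k * ((d:ℤ) * (p:ℤ)^(d-1) * H + d) := by rw [hUdef]
            _ < P := this
        have hUlt : U < (p:ℤ)^(n 0) := by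
          have hpk0 : (0:ℤ) < (p:ℤ)^k := by positivity
          have : (p:ℤ)^k * U < (p:ℤ)^(n 0) * (p:ℤ)^k := by rw [← hPsplit]; exact hMUk
          nlinarith
        have h1 : (1:ℤ) ≤ |(a 0 : ℤ) * (p:ℤ)^k - (b 0 : ℤ)| := Int.one_le_abs (by exact hw0')
        have h2 : (p:ℤ)^(n 0) ≤ |(p:ℤ)^(n 0) * ((a 0 : ℤ) * (p:ℤ)^k - (b 0 : ℤ))| := by
          rw [abs_mul, abs_of_nonneg (by positivity : (0:ℤ) ≤ (p:ℤ)^(n 0))]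
          nlinarith [one_le_pow₀ hp1 (n := n 0)]
        rw [hD2] at h2
        linarith [habsE, h2, hUlt]
    · -- n 0 = top exponent
      have hab0 : a 0 = b 0 := by
        have hfac : ((a 0 : ℤ) - (b 0 : ℤ)) * P = Sb + c - Sa := by
          rw [← hD, hcase, hPdef]; ring
        by_contra hne
        have hne' : (a 0 : ℤ) - (b 0 : ℤ) ≠ 0 := by
          intro h; apply hne; exact_mod_cast sub_eq_zero.1 h
        have h1 : (1:ℤ) ≤ |(a 0 : ℤ) - (b 0 : ℤ)| := Int.one_le_abs hne'
        have h2 : P ≤ |((a 0 : ℤ) - (b 0 : ℤ)) * P| := by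
          rw [abs_mul, abs_of_nonneg (le_of_lt hP0)]
          nlinarith
        rw [hfac] at h2
        linarith [habsE, h2, hMU1]
      have hab0' : (a 0 : ℤ) = (b 0 : ℤ) := by exact_mod_cast hab0
      have hteq : Sa = Sb + c := by
        have h7 : (b 0 : ℤ) * (p:ℤ) ^ (n 0) = (b 0 : ℤ) * P := by
          rw [hcase, hPdef]
        have h8 := heq'
        rw [h7, hab0'] at h8
        linarith [h8]
      obtain ⟨hc0, hrest⟩ := ih (fun i => a i.succ) (fun i => b i.succ) (fun i => n i.succ) c
        (fun i => ha1 i.succ) (fun i => had i.succ) (fun i => hap i.succ)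
        (fun i => hb1 i.succ) (fun i => hbd i.succ) (fun i => hbp i.succ)
        hc hwsucc (by
          show (∑ i : Fin R, ((a i.succ : ℕ) : ℤ) * (p:ℤ) ^ (2*d*(R - (i:ℕ)))) =
            (∑ i : Fin R, ((b i.succ : ℕ) : ℤ) * (p:ℤ) ^ (n i.succ)) + c
          rw [← hSadef, ← hSbdef]; exact hteq)
      refine ⟨hc0, ?_⟩
      intro i
      refine Fin.cases ?_ ?_ i
      · constructor
        · exact hab0
        · simpa using hcase
      · intro j
        have := hrest j
        constructor
        · exact this.1
        · simpa only [Fin.val_succ, Nat.add_sub_add_right] using this.2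
    · -- n 0 > top exponent : contradiction
      exfalso
      set k : ℕ := n 0 - 2*d*(R+1) with hkdef
      have hk1 : 1 ≤ k := by omega
      have hsplit : (p:ℤ)^(n 0) = P * (p:ℤ)^k := by
        rw [hPdef, ← pow_add]; congr 1; omega
      have hD3 : P * ((a 0 : ℤ) - (b 0 : ℤ) * (p:ℤ)^k) = Sb + c - Sa := by
        rw [← hD, hsplit]; ring
      have hw0' : (a 0 : ℤ) - (b 0 : ℤ) * (p:ℤ)^k ≠ 0 := by
        intro h
        have ha' : (a 0 : ℤ) = (b 0 : ℤ) * (p:ℤ)^k := by linarith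
        have han : a 0 = b 0 * p^k := by exact_mod_cast ha'
        exact hap 0 (han ▸ Dvd.dvd.mul_left (dvd_pow_self p (by omega)) _)
      have h1 : (1:ℤ) ≤ |(a 0 : ℤ) - (b 0 : ℤ) * (p:ℤ)^k| := Int.one_le_abs hw0'
      have h2 : P ≤ |P * ((a 0 : ℤ) - (b 0 : ℤ) * (p:ℤ)^k)| := by
        rw [abs_mul, abs_of_nonneg (le_of_lt hP0)]
        nlinarith
      rw [hD3] at h2
      linarith [habsE, h2, hMU1]

set_option maxHeartbeats 4000000 in
private lemma phase1 (p d r s : ℕ) (hp : 2 ≤ p) (hd : 1 ≤ d)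
    (c : ℤ) (hc : |c| ≤ (d:ℤ))
    (a : Fin r → ℕ) (b : Fin s → ℕ) (n : Fin s → ℕ)
    (ha1 : ∀ i, 1 ≤ a i) (had : ∀ i, a i ≤ d) (hbd : ∀ i, b i ≤ d)
    (hninj : Function.Injective n)
    (heq : (∑ i : Fin r, (a i : ℤ) * (p:ℤ) ^ (2*d*(r - (i:ℕ)))) =
      (∑ i : Fin s, (b i : ℤ) * (p:ℤ) ^ (n i)) + c)
    (j : ℕ) (hj1 : 1 ≤ j) (hjr : j ≤ r) :
    ∃ i : Fin s, 2*d*j ≤ n i + d ∧ n i < 2*d*j + d := by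
  by_contra hno
  push_neg at hno
  have hp1 : (1:ℤ) ≤ (p:ℤ) := by exact_mod_cast (by omega : 1 ≤ p)
  have hd1 : (1:ℤ) ≤ (d:ℤ) := by exact_mod_cast hd
  have hX2d : 2*d ≤ 2*d*j := by
    have := Nat.mul_le_mul_left (2*d) hj1; simpa using this
  set u : ℕ := 2*d*j - d with hu
  set v : ℕ := 2*d*j + d with hv
  have hud : u + d = 2*d*j := by omega
  have hcover : ∀ i : Fin s, n i < u ∨ v ≤ n i := by
    intro i
    have := hno i
    omega
  classical
  set Alo : ℤ := ∑ i ∈ Finset.univ.filter (fun i : Fin r => r - (i:ℕ) ≤ j),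
      (a i : ℤ) * (p:ℤ) ^ (2*d*(r - (i:ℕ))) with hAlo
  set Ahi : ℤ := ∑ i ∈ Finset.univ.filter (fun i : Fin r => ¬ (r - (i:ℕ) ≤ j)),
      (a i : ℤ) * (p:ℤ) ^ (2*d*(r - (i:ℕ))) with hAhi
  set Blo : ℤ := ∑ i ∈ Finset.univ.filter (fun i : Fin s => n i < u),
      (b i : ℤ) * (p:ℤ) ^ (n i) with hBlo
  set Bhi : ℤ := ∑ i ∈ Finset.univ.filter (fun i : Fin s => ¬ (n i < u)),
      (b i : ℤ) * (p:ℤ) ^ (n i) with hBhi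
  have hsplitA : Alo + Ahi = ∑ i : Fin r, (a i : ℤ) * (p:ℤ) ^ (2*d*(r - (i:ℕ))) := by
    rw [hAlo, hAhi]
    exact Finset.sum_filter_add_sum_filter_not _ _ _
  have hsplitB : Blo + Bhi = ∑ i : Fin s, (b i : ℤ) * (p:ℤ) ^ (n i) := by
    rw [hBlo, hBhi]
    exact Finset.sum_filter_add_sum_filter_not _ _ _
  have hXeq : Alo - Blo - c = Bhi - Ahi := by
    have := heq
    rw [← hsplitA, ← hsplitB] at this
    linarith
  have hdvd : (p:ℤ)^v ∣ (Bhi - Ahi) := by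
    apply dvd_sub
    · rw [hBhi]
      apply Finset.dvd_sum
      intro i hi
      rw [Finset.mem_filter] at hi
      have hvi : v ≤ n i := by
        rcases hcover i with h | h
        · exact absurd h hi.2
        · exact h
      exact Dvd.dvd.mul_left (pow_dvd_pow (p:ℤ) hvi) _
    · rw [hAhi]
      apply Finset.dvd_sum
      intro i hi
      rw [Finset.mem_filter] at hi
      have h1 : j + 1 ≤ r - (i:ℕ) := by omega
      have h2 : 2*d*(j+1) ≤ 2*d*(r - (i:ℕ)) := Nat.mul_le_mul_left (2*d) h1
      have h3 : 2*d*(j+1) = 2*d*j + 2*d := by ring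
      have hvi : v ≤ 2*d*(r - (i:ℕ)) := by omega
      exact Dvd.dvd.mul_left (pow_dvd_pow (p:ℤ) hvi) _
  -- lower bound on Alo
  have hAlo_lb : (p:ℤ)^(2*d*j) ≤ Alo := by
    have hmem : (⟨r - j, by omega⟩ : Fin r) ∈
        Finset.univ.filter (fun i : Fin r => r - (i:ℕ) ≤ j) := by
      rw [Finset.mem_filter]
      exact ⟨Finset.mem_univ _, by simp; omega⟩
    have hterm : (p:ℤ)^(2*d*j) ≤
        (a (⟨r - j, by omega⟩ : Fin r) : ℤ) * (p:ℤ) ^ (2*d*(r - ((⟨r - j, by omega⟩ : Fin r):ℕ))) := by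
      have h1 : (1:ℤ) ≤ (a (⟨r - j, by omega⟩ : Fin r) : ℤ) := by
        exact_mod_cast ha1 _
      have h2 : r - ((⟨r - j, by omega⟩ : Fin r) : ℕ) = j := by simp; omega
      rw [h2]
      nlinarith [pow_pos (by linarith : (0:ℤ) < (p:ℤ)) (2*d*j)]
    calc (p:ℤ)^(2*d*j) ≤ _ := hterm
      _ ≤ Alo := by
        rw [hAlo]
        apply Finset.single_le_sum (f := fun i : Fin r => (a i : ℤ) * (p:ℤ) ^ (2*d*(r - (i:ℕ)))) _ hmem
        intro i _
        positivity
  -- upper bound on Blo + c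
  have hBlo0 : 0 ≤ Blo := Finset.sum_nonneg fun i _ => by positivity
  have hgeo : (∑ e ∈ Finset.range u, (p:ℤ)^e) + 1 ≤ (p:ℤ)^u := by
    have := aux_geom p hp u
    have h2 : (((∑ e ∈ Finset.range u, p^e) + 1 : ℕ) : ℤ) ≤ ((p^u : ℕ) : ℤ) := by
      exact_mod_cast this
    push_cast at h2
    exact h2
  have hBlo_ub : Blo ≤ (d:ℤ) * ((p:ℤ)^u - 1) := by
    rw [hBlo]
    calc ∑ i ∈ Finset.univ.filter (fun i : Fin s => n i < u), (b i : ℤ) * (p:ℤ) ^ (n i)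
        ≤ ∑ i ∈ Finset.univ.filter (fun i : Fin s => n i < u), (d:ℤ) * (p:ℤ) ^ (n i) := by
          apply Finset.sum_le_sum
          intro i _
          apply mul_le_mul_of_nonneg_right _ (by positivity)
          exact_mod_cast hbd i
      _ = (d:ℤ) * ∑ i ∈ Finset.univ.filter (fun i : Fin s => n i < u), (p:ℤ) ^ (n i) := by
          rw [Finset.mul_sum]
      _ ≤ (d:ℤ) * ((p:ℤ)^u - 1) := by
          apply mul_le_mul_of_nonneg_left _ (by linarith)
          have himg : ∑ i ∈ Finset.univ.filter (fun i : Fin s => n i < u), (p:ℤ) ^ (n i)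
              = ∑ e ∈ (Finset.univ.filter (fun i : Fin s => n i < u)).image n, (p:ℤ) ^ e := by
            rw [Finset.sum_image (fun x _ y _ h => hninj h)]
          rw [himg]
          have hsub : (Finset.univ.filter (fun i : Fin s => n i < u)).image n ⊆ Finset.range u := by
            intro e he
            rw [Finset.mem_image] at he
            obtain ⟨i, hi, rfl⟩ := he
            rw [Finset.mem_filter] at hi
            exact Finset.mem_range.2 hi.2
          calc ∑ e ∈ (Finset.univ.filter (fun i : Fin s => n i < u)).image n, (p:ℤ) ^ e
              ≤ ∑ e ∈ Finset.range u, (p:ℤ)^e :=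
                Finset.sum_le_sum_of_subset_of_nonneg hsub (fun e _ _ => by positivity)
            _ ≤ (p:ℤ)^u - 1 := by linarith [hgeo]
  have hdpd : (d:ℤ) ≤ (p:ℤ)^d - 1 := by
    have h1 : d + 1 ≤ 2^d := aux_two_pow d
    have h2 : (2:ℕ)^d ≤ p^d := Nat.pow_le_pow_left hp d
    have h3 : ((d + 1 : ℕ) : ℤ) ≤ ((p^d : ℕ) : ℤ) := by exact_mod_cast h1.trans h2
    push_cast at h3
    linarith
  have hpu1 : (1:ℤ) ≤ (p:ℤ)^u := one_le_pow₀ hp1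
  have hXpos : 0 < Alo - Blo - c := by
    have hcle : c ≤ (d:ℤ) := by linarith [(abs_le.1 hc).2]
    have h1 : Blo + c ≤ (d:ℤ) * (p:ℤ)^u := by nlinarith [hBlo_ub]
    have h2 : (d:ℤ) * (p:ℤ)^u ≤ ((p:ℤ)^d - 1) * (p:ℤ)^u := by nlinarith [hdpd, hpu1]
    have h3 : ((p:ℤ)^d - 1) * (p:ℤ)^u < (p:ℤ)^(2*d*j) := by
      have h4 : (p:ℤ)^d * (p:ℤ)^u = (p:ℤ)^(2*d*j) := by
        rw [← pow_add]; congr 1; omega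
      nlinarith [hpu1]
    linarith [hAlo_lb]
  -- upper bound on Alo
  have hAlo_ub : Alo ≤ (d:ℤ) * ∑ t ∈ Finset.range j, ((p:ℤ)^(2*d))^(t+1) := by
    rw [hAlo]
    calc ∑ i ∈ Finset.univ.filter (fun i : Fin r => r - (i:ℕ) ≤ j),
          (a i : ℤ) * (p:ℤ) ^ (2*d*(r - (i:ℕ)))
        ≤ ∑ i ∈ Finset.univ.filter (fun i : Fin r => r - (i:ℕ) ≤ j),
          (d:ℤ) * (p:ℤ) ^ (2*d*(r - (i:ℕ))) := by
          apply Finset.sum_le_sum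
          intro i _
          apply mul_le_mul_of_nonneg_right _ (by positivity)
          exact_mod_cast had i
      _ = (d:ℤ) * ∑ i ∈ Finset.univ.filter (fun i : Fin r => r - (i:ℕ) ≤ j),
          (p:ℤ) ^ (2*d*(r - (i:ℕ))) := by rw [Finset.mul_sum]
      _ ≤ (d:ℤ) * ∑ t ∈ Finset.range j, ((p:ℤ)^(2*d))^(t+1) := by
          apply mul_le_mul_of_nonneg_left _ (by linarith)
          have himg : ∑ i ∈ Finset.univ.filter (fun i : Fin r => r - (i:ℕ) ≤ j),
              (p:ℤ) ^ (2*d*(r - (i:ℕ)))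
              = ∑ t ∈ (Finset.univ.filter (fun i : Fin r => r - (i:ℕ) ≤ j)).image
                  (fun i : Fin r => r - (i:ℕ)), (p:ℤ) ^ (2*d*t) := by
            rw [Finset.sum_image]
            intro x hx y hy hxy
            have hx' : (x:ℕ) < r := x.isLt
            have hy' : (y:ℕ) < r := y.isLt
            have : (x:ℕ) = (y:ℕ) := by simp only at hxy; omega
            exact Fin.ext this
          rw [himg]
          have hsub : (Finset.univ.filter (fun i : Fin r => r - (i:ℕ) ≤ j)).image
              (fun i : Fin r => r - (i:ℕ)) ⊆ (Finset.range j).image (fun t => t + 1) := by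
            intro t ht
            rw [Finset.mem_image] at ht ⊢
            obtain ⟨i, hi, rfl⟩ := ht
            rw [Finset.mem_filter] at hi
            have h1 : 1 ≤ r - (i:ℕ) := by
              have := i.isLt; omega
            exact ⟨r - (i:ℕ) - 1, Finset.mem_range.2 (by omega), by omega⟩
          calc ∑ t ∈ (Finset.univ.filter (fun i : Fin r => r - (i:ℕ) ≤ j)).image
                (fun i : Fin r => r - (i:ℕ)), (p:ℤ) ^ (2*d*t)
              ≤ ∑ t ∈ (Finset.range j).image (fun t => t + 1), (p:ℤ) ^ (2*d*t) :=
                Finset.sum_le_sum_of_subset_of_nonneg hsub (fun e _ _ => by positivity)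
            _ = ∑ t ∈ Finset.range j, (p:ℤ) ^ (2*d*(t+1)) := by
                rw [Finset.sum_image]
                intro x _ y _ h
                simp only at h; omega
            _ = ∑ t ∈ Finset.range j, ((p:ℤ)^(2*d))^(t+1) := by
                apply Finset.sum_congr rfl
                intro t _
                rw [← pow_mul]
  have hXlt : Alo - Blo - c < (p:ℤ)^v := by
    have hcge : -(d:ℤ) ≤ c := by linarith [(abs_le.1 hc).1]
    -- geometric computation
    set x : ℤ := (p:ℤ)^(2*d) with hx
    have hW : (∑ t ∈ Finset.range j, x^t) * (x - 1) = x^j - 1 := geom_sum_mul x j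
    have hGx : ∑ t ∈ Finset.range j, x^(t+1) = (∑ t ∈ Finset.range j, x^t) * x := by
      rw [Finset.sum_mul]
      apply Finset.sum_congr rfl
      intro t _
      rw [pow_succ]
    have hxpd : (p:ℤ)^d * (p:ℤ)^d = x := by rw [hx, ← pow_add]; congr 1; ring
    have hpv : (p:ℤ)^v = x^j * (p:ℤ)^d := by
      rw [hx, ← pow_mul, ← pow_add]
    have hp2 : (2:ℤ) ≤ (p:ℤ) := by exact_mod_cast hp
    have hpd2 : (2:ℤ) ≤ (p:ℤ)^d := by
      calc (2:ℤ) = 2^1 := by norm_num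
      _ ≤ 2^d := pow_le_pow_right₀ (by norm_num) hd
      _ ≤ (p:ℤ)^d := pow_le_pow_left₀ (by norm_num : (0:ℤ) ≤ 2) hp2 d
    have hxj1 : (1:ℤ) ≤ x^j := one_le_pow₀ (by nlinarith [hpd2])
    have hx1 : (1:ℤ) < x := by nlinarith [hpd2]
    -- (x-1) * (d * G + d) = d*x^(j+1) - d < (x-1) * p^v
    have hkey : (x - 1) * ((d:ℤ) * ∑ t ∈ Finset.range j, x^(t+1) + d) < (x - 1) * (p:ℤ)^v := by
      have e1 : (x - 1) * ((d:ℤ) * ∑ t ∈ Finset.range j, x^(t+1) + d)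
          = (d:ℤ) * (((∑ t ∈ Finset.range j, x^t) * (x - 1)) * x) + (x - 1) * d := by
        rw [hGx]; ring
      rw [e1, hW, hpv, hxpd.symm]
      rw [hxpd.symm] at hxj1
      set q : ℤ := (p:ℤ)^d with hq
      set z : ℤ := (q * q)^j with hz
      -- goal: d * ((z - 1)*(q*q)) + (q*q-1)*d < (q*q-1) * (z * q)
      have h_1 : (0:ℤ) ≤ (q - 1 - (d:ℤ)) * (z*q*q - 1) := by
        apply mul_nonneg
        · linarith [hdpd]
        · nlinarith [hxj1, hpd2]
      have h_2 : (0:ℤ) < (q - 1) * (z*q + 1) := by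
        apply mul_pos
        · linarith [hpd2]
        · nlinarith [hxj1, hpd2]
      nlinarith [h_1, h_2]
    have hG : (d:ℤ) * ∑ t ∈ Finset.range j, x^(t+1) + d < (p:ℤ)^v :=
      lt_of_mul_lt_mul_left hkey (by linarith)
    have : Alo ≤ (d:ℤ) * ∑ t ∈ Finset.range j, x^(t+1) := hAlo_ub
    linarith
  have hle := Int.le_of_dvd hXpos (hXeq ▸ hdvd)
  linarith

/-- Lemma on the uniqueness of representations of integers as sums of powers of `p`:
if `a_1 p^{2rd} + a_2 p^{2(r−1)d} + … + a_r p^{2d} = b_1 p^{n_1} + … + b_s p^{n_s} + c`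
with `r ≥ s`, `|c| ≤ d`, all `a_i, b_i` in `[1,d]` and not divisible by `p`, and
`n_1 > n_2 > … > n_s ≥ 0`, then `r = s`, `c = 0`, `a_i = b_i` and `n_i = 2d(r+1−i)`.
(Indices here run over `Fin r` resp. `Fin s`, zero-based, so the exponent of the
`i`-th term on the left is `2d(r−i)`.) -/
theorem stmt_5 (p : ℕ) (hp : p.Prime) (d r s : ℕ)
    (hd : 0 < d) (hr : 0 < r) (hs : 0 < s) (hrs : s ≤ r)
    (c : ℤ) (hc : |c| ≤ (d : ℤ))
    (a : Fin r → ℕ) (b : Fin s → ℕ)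
    (ha1 : ∀ i, 1 ≤ a i) (had : ∀ i, a i ≤ d) (hap : ∀ i, ¬ (p ∣ a i))
    (hb1 : ∀ i, 1 ≤ b i) (hbd : ∀ i, b i ≤ d) (hbp : ∀ i, ¬ (p ∣ b i))
    (n : Fin s → ℕ) (hn : StrictAnti n)
    (heq : (∑ i : Fin r, (a i : ℤ) * (p : ℤ) ^ (2 * d * (r - (i : ℕ)))) =
      (∑ i : Fin s, (b i : ℤ) * (p : ℤ) ^ (n i)) + c) :
    r = s ∧ c = 0 ∧ (∀ i : Fin s, a (Fin.castLE hrs i) = b i) ∧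
      (∀ i : Fin s, n i = 2 * d * (r - (i : ℕ))) := by
  have hp2 : 2 ≤ p := hp.two_le
  have hex : ∀ i : Fin r, ∃ i' : Fin s,
      2*d*(r - (i:ℕ)) ≤ n i' + d ∧ n i' < 2*d*(r - (i:ℕ)) + d := by
    intro i
    exact phase1 p d r s hp2 hd c hc a b n ha1 had hbd hn.injective heq
      (r - (i:ℕ)) (by have := i.isLt; omega) (by omega)
  choose f hf1 hf2 using hex
  have hfm : StrictMono f := by
    intro i i' hlt
    have hi : (i:ℕ) < r := i.isLt
    have hi' : (i':ℕ) < r := i'.isLt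
    have hlt' : (i:ℕ) < (i':ℕ) := hlt
    have h1 : r - (i':ℕ) + 1 ≤ r - (i:ℕ) := by omega
    have h2 : 2*d*(r - (i':ℕ) + 1) ≤ 2*d*(r - (i:ℕ)) := Nat.mul_le_mul_left _ h1
    have h3 : 2*d*(r - (i':ℕ) + 1) = 2*d*(r - (i':ℕ)) + 2*d := by ring
    have h4 : n (f i') < n (f i) := by
      have ha := hf2 i'
      have hb := hf1 i
      have hdd : 1 ≤ d := hd
      linarith [ha, hb, h2, h3.ge, h3.le]
    exact (hn.lt_iff_gt).1 h4
  have hrls : r ≤ s := by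
    have := Fintype.card_le_of_injective f hfm.injective
    simpa using this
  have hre : r = s := le_antisymm hrls hrs
  subst hre
  -- any strict mono map Fin r → Fin r satisfies i ≤ g i
  have hfle : ∀ (g : Fin r → Fin r), StrictMono g → ∀ i : Fin r, (i:ℕ) ≤ (g i : ℕ) := by
    intro g hg
    have key : ∀ k (h : k < r), k ≤ (g ⟨k, h⟩ : ℕ) := by
      intro k
      induction k with
      | zero => intro h; exact Nat.zero_le _
      | succ t ihh =>
        intro h
        have ht : t < r := by omega
        have h5 := ihh ht
        have h6 : g ⟨t, ht⟩ < g ⟨t+1, h⟩ := hg (by simp [Fin.lt_def])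
        rw [Fin.lt_def] at h6
        omega
    intro i
    have := key i.1 i.2
    simpa using this
  have hfid : ∀ i, f i = i := by
    intro i
    have h1 : (i:ℕ) ≤ (f i : ℕ) := hfle f hfm i
    have hrm : StrictMono (fun i : Fin r => (f i.rev).rev) := by
      intro x x' hlt
      have hx : x'.rev < x.rev := by rw [Fin.rev_lt_rev]; exact hlt
      have h2 : f x'.rev < f x.rev := hfm hx
      exact (Fin.rev_lt_rev).2 h2
    have h2 := hfle _ hrm i.rev
    simp only [Fin.rev_rev] at h2
    have h3 := Fin.val_rev i
    have h4 := Fin.val_rev (f i)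
    have h5 : ((f i).rev : ℕ) = r - 1 - ((f i):ℕ) := by
      rw [Fin.val_rev]; omega
    have h6 : ((i.rev) : ℕ) = r - 1 - (i:ℕ) := by
      rw [Fin.val_rev]; omega
    have hfi : ((f i):ℕ) < r := (f i).isLt
    have hii : (i:ℕ) < r := i.isLt
    apply Fin.ext
    omega
  have hwin : ∀ i : Fin r, 2*d*(r - (i:ℕ)) ≤ n i + d ∧ n i < 2*d*(r - (i:ℕ)) + d := by
    intro i
    have h1 := hf1 i
    have h2 := hf2 i
    rw [hfid i] at h1 h2
    exact ⟨h1, h2⟩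
  obtain ⟨hc0, hmain⟩ := phase2 p d hp2 hd r a b n c ha1 had hap hb1 hbd hbp hc hwin heq
  exact ⟨rfl, hc0, fun i => (hmain i).1, fun i => (hmain i).2⟩
end

section
/- Let p be a prime. For any positive integers b_1, b_2, …, b_r, the formal power series H_{b_1,b_2,…,b_r}(z) can be expressed as a linear combination, with coefficients in ℤ[z], of the constant series 1 and of series of the form H_{a_1,a_2,…,a_s}(z) in which all a_i are positive integers relatively prime to p, s ≤ r, and a_1 + a_2 + … + a_s ≤ b_1 + b_2 + … + b_r. -/
open PowerSeries

namespace Stmt7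

open Finset

/-! ### Counting strictly decreasing chains, list version -/

def chains (p : ℕ) : List ℕ → ℕ → ℕ → Finset (List ℕ)
  | [], _, m => if m = 0 then {[]} else ∅
  | (x :: T), N, m =>
      (Finset.range N).biUnion (fun k =>
        if x * p ^ k ≤ m then (chains p T k (m - x * p ^ k)).image (k :: ·) else ∅)

def cnt (p : ℕ) (L : List ℕ) (N m : ℕ) : ℕ := (chains p L N m).card

lemma chains_nil (p N m : ℕ) : chains p [] N m = if m = 0 then {[]} else ∅ := rfl

lemma chains_cons (p x N m : ℕ) (T : List ℕ) :
    chains p (x :: T) N m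
      = (Finset.range N).biUnion (fun k =>
          if x * p ^ k ≤ m then (chains p T k (m - x * p ^ k)).image (k :: ·) else ∅) := rfl

lemma cnt_nil (p N m : ℕ) : cnt p [] N m = if m = 0 then 1 else 0 := by
  unfold cnt; rw [chains_nil]; split <;> simp

lemma cnt_cons (p x N m : ℕ) (T : List ℕ) :
    cnt p (x :: T) N m
      = ∑ k ∈ range N, if x * p ^ k ≤ m then cnt p T k (m - x * p ^ k) else 0 := by
  unfold cnt
  rw [chains_cons, Finset.card_biUnion]
  · refine Finset.sum_congr rfl fun k _ => ?_
    split
    · rw [Finset.card_image_of_injective]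
      intro a b h; simpa using h
    · simp
  · intro a _ b _ hab
    simp only [Finset.disjoint_left]
    intro l hl hl'
    have ha : ∃ t, l = a :: t := by
      by_cases h : x * p ^ a ≤ m
      · simp only [if_pos h, Finset.mem_image] at hl; obtain ⟨t, _, rfl⟩ := hl; exact ⟨t, rfl⟩
      · simp [if_neg h] at hl
    have hb : ∃ t, l = b :: t := by
      by_cases h : x * p ^ b ≤ m
      · simp only [if_pos h, Finset.mem_image] at hl'; obtain ⟨t, _, rfl⟩ := hl'; exact ⟨t, rfl⟩
      · simp [if_neg h] at hl'
    obtain ⟨t, rfl⟩ := ha; obtain ⟨t', ht'⟩ := hb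
    exact hab (by injection ht')

lemma cnt_bound_zero (p x m : ℕ) (T : List ℕ) : cnt p (x :: T) 0 m = 0 := by
  simp [cnt_cons]

lemma cnt_top (p x N m : ℕ) (T : List ℕ) :
    cnt p (x :: T) (N + 1) m
      = cnt p (x :: T) N m + (if x * p ^ N ≤ m then cnt p T N (m - x * p ^ N) else 0) := by
  rw [cnt_cons, Finset.sum_range_succ, cnt_cons]

lemma cnt_singleton (p c N m : ℕ) :
    cnt p [c] N m = ∑ k ∈ range N, if c * p ^ k = m then 1 else 0 := by
  rw [cnt_cons]
  refine Finset.sum_congr rfl fun k _ => ?_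
  rw [cnt_nil]
  split_ifs <;> omega

/-! ### The basic identities on counts -/

lemma id0_nil (p c N m : ℕ) :
    cnt p [c] (N + 1) m = cnt p [p * c] N m + (if m = c then 1 else 0) := by
  rw [cnt_singleton, cnt_singleton, Finset.sum_range_succ']
  congr 1
  · refine Finset.sum_congr rfl fun k _ => ?_
    have hc : c * p ^ (k + 1) = p * c * p ^ k := by ring
    rw [hc]
  · have : c * p ^ 0 = c := by ring
    rw [this]
    split_ifs <;> omega

lemma id0_cons (p c d N m : ℕ) (T : List ℕ) :
    cnt p (c :: d :: T) (N + 1) m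
      = cnt p (p * c :: d :: T) N m + cnt p ((p * c + d) :: T) N m := by
  rw [cnt_cons, Finset.sum_range_succ']
  have h0 : (if c * p ^ 0 ≤ m then cnt p (d :: T) 0 (m - c * p ^ 0) else 0) = 0 := by
    rw [cnt_bound_zero]; simp
  rw [h0, add_zero, cnt_cons, cnt_cons, ← Finset.sum_add_distrib]
  refine Finset.sum_congr rfl fun k _ => ?_
  rw [cnt_top]
  have hc : c * p ^ (k + 1) = p * c * p ^ k := by ring
  have hd : (p * c + d) * p ^ k = p * c * p ^ k + d * p ^ k := by ring
  rw [hc, hd]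
  generalize p * c * p ^ k = P
  generalize d * p ^ k = D
  have hsub : m - P - D = m - (P + D) := by omega
  rw [hsub]
  split_ifs <;> omega

lemma gen1_nil (p a c m : ℕ) : ∀ N, cnt p [a, c] N m + cnt p [a + c] N m
    = cnt p [a, p * c] N m + (if c ≤ m then cnt p [a] N (m - c) else 0)
  | 0 => by simp [cnt_bound_zero]
  | (N + 1) => by
    have IH := gen1_nil p a c m N
    have key : (if a * p ^ N ≤ m then cnt p [c] N (m - a * p ^ N) else 0)
        + (if (a + c) * p ^ N ≤ m then cnt p [] N (m - (a + c) * p ^ N) else 0)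
        = (if a * p ^ N ≤ m then cnt p [p * c] N (m - a * p ^ N) else 0)
        + (if c ≤ m then (if a * p ^ N ≤ m - c then cnt p [] N (m - c - a * p ^ N) else 0) else 0) := by
      cases N with
      | zero =>
        simp only [cnt_bound_zero, cnt_nil, pow_zero, mul_one]
        split_ifs <;> omega
      | succ K =>
        rw [id0_nil p c K (m - a * p ^ (K + 1)), cnt_top, cnt_nil, cnt_nil, cnt_nil]
        have h1 : c * p ^ (K + 1) = p * c * p ^ K := by ring
        have h2 : (a + c) * p ^ (K + 1) = a * p ^ (K + 1) + c * p ^ (K + 1) := by ring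
        split_ifs <;> omega
    rw [cnt_top, cnt_top, cnt_top,
      show (if c ≤ m then cnt p [a] (N + 1) (m - c) else 0)
        = (if c ≤ m then cnt p [a] N (m - c) else 0)
          + (if c ≤ m then (if a * p ^ N ≤ m - c then cnt p [] N (m - c - a * p ^ N) else 0) else 0) by
        rw [cnt_top]; split_ifs <;> simp]
    omega

lemma gen1_cons (p a c d m : ℕ) (S : List ℕ) : ∀ N,
    cnt p (a :: c :: d :: S) N m + cnt p ((a + c) :: d :: S) N m
      = cnt p (a :: p * c :: d :: S) N m + cnt p (a :: (p * c + d) :: S) N m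
  | 0 => by simp [cnt_bound_zero]
  | (N + 1) => by
    have IH := gen1_cons p a c d m S N
    have key : (if a * p ^ N ≤ m then cnt p (c :: d :: S) N (m - a * p ^ N) else 0)
        + (if (a + c) * p ^ N ≤ m then cnt p (d :: S) N (m - (a + c) * p ^ N) else 0)
        = (if a * p ^ N ≤ m then cnt p (p * c :: d :: S) N (m - a * p ^ N) else 0)
        + (if a * p ^ N ≤ m then cnt p ((p * c + d) :: S) N (m - a * p ^ N) else 0) := by
      cases N with
      | zero => simp [cnt_bound_zero]
      | succ K =>
        have e1 : (a + c) * p ^ (K + 1) = a * p ^ (K + 1) + p * c * p ^ K := by ring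
        have e2 : (p * c + d) * p ^ K = p * c * p ^ K + d * p ^ K := by ring
        have s1 : m - (a + c) * p ^ (K + 1) = m - a * p ^ (K + 1) - p * c * p ^ K := by omega
        have s2 : m - a * p ^ (K + 1) - (p * c + d) * p ^ K
            = m - a * p ^ (K + 1) - p * c * p ^ K - d * p ^ K := by omega
        rw [id0_cons, cnt_top, cnt_top, cnt_top, s1, s2]
        split_ifs <;> omega
    rw [cnt_top, cnt_top, cnt_top, cnt_top]
    omega

lemma gen_cons (p c d : ℕ) (S : List ℕ) : ∀ (q : List ℕ) (a N m : ℕ),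
    cnt p (q ++ a :: c :: d :: S) N m + cnt p (q ++ (a + c) :: d :: S) N m
      = cnt p (q ++ a :: p * c :: d :: S) N m + cnt p (q ++ a :: (p * c + d) :: S) N m
  | [], a, N, m => by simpa using gen1_cons p a c d m S N
  | (x :: q), a, N, m => by
    simp only [List.cons_append, cnt_cons, ← Finset.sum_add_distrib]
    refine Finset.sum_congr rfl fun k _ => ?_
    have IH := gen_cons p c d S q a k (m - x * p ^ k)
    split_ifs <;> omega

lemma gen_nil (p c : ℕ) : ∀ (q : List ℕ) (a N m : ℕ),
    cnt p (q ++ [a, c]) N m + cnt p (q ++ [a + c]) N m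
      = cnt p (q ++ [a, p * c]) N m + (if c ≤ m then cnt p (q ++ [a]) N (m - c) else 0)
  | [], a, N, m => by simpa using gen1_nil p a c m N
  | (x :: q), a, N, m => by
    have hd : (if c ≤ m then cnt p ((x :: q) ++ [a]) N (m - c) else 0)
        = ∑ k ∈ range N,
            (if x * p ^ k + c ≤ m then cnt p (q ++ [a]) k (m - x * p ^ k - c) else 0) := by
      split_ifs with hc
      · simp only [List.cons_append, cnt_cons]
        refine Finset.sum_congr rfl fun k _ => ?_
        have : m - c - x * p ^ k = m - x * p ^ k - c := by omega
        rw [this]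
        split_ifs <;> omega
      · refine (Finset.sum_eq_zero fun k _ => ?_).symm
        split_ifs with h
        · omega
        · rfl
    rw [hd]
    simp only [List.cons_append, cnt_cons, ← Finset.sum_add_distrib]
    refine Finset.sum_congr rfl fun k _ => ?_
    have IH := gen_nil p c q a k (m - x * p ^ k)
    split_ifs at IH ⊢ <;> omega

/-! ### Membership in `chains` and the bridge with `Hser` -/

lemma mem_chains (p : ℕ) : ∀ (L : List ℕ) (l : List ℕ) (N m : ℕ),
    l ∈ chains p L N m ↔
      l.length = L.length ∧ l.Pairwise (· > ·) ∧ (∀ a ∈ l, a < N)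
        ∧ (List.zipWith (fun x k => x * p ^ k) L l).sum = m
  | [], l, N, m => by
    rw [chains_nil]
    rcases l with _ | ⟨a, l⟩
    · by_cases hm : m = 0 <;> simp [hm] <;> omega
    · by_cases hm : m = 0 <;> simp [hm]
  | (x :: T), l, N, m => by
    rw [chains_cons, Finset.mem_biUnion]
    constructor
    · rintro ⟨k, hk, hl⟩
      rw [Finset.mem_range] at hk
      by_cases hx : x * p ^ k ≤ m
      · rw [if_pos hx, Finset.mem_image] at hl
        obtain ⟨t, ht, rfl⟩ := hl
        obtain ⟨hlen, hpw, hbd, hsum⟩ := (mem_chains p T t k (m - x * p ^ k)).1 ht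
        refine ⟨by simp [hlen], ?_, ?_, ?_⟩
        · exact List.pairwise_cons.2 ⟨fun a ha => hbd a ha, hpw⟩
        · intro a ha
          rcases List.mem_cons.1 ha with rfl | ha
          · exact hk
          · exact lt_trans (hbd a ha) hk
        · simp only [List.zipWith_cons_cons, List.sum_cons, hsum]
          omega
      · rw [if_neg hx] at hl; exact absurd hl (Finset.notMem_empty _)
    · rintro ⟨hlen, hpw, hbd, hsum⟩
      rcases l with _ | ⟨k, t⟩
      · simp at hlen
      · simp only [List.zipWith_cons_cons, List.sum_cons] at hsum
        have hk : k < N := hbd k List.mem_cons_self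
        have hbt : ∀ a ∈ t, a < k := fun a ha => (List.pairwise_cons.1 hpw).1 a ha
        have hx : x * p ^ k ≤ m := by omega
        refine ⟨k, Finset.mem_range.2 hk, ?_⟩
        rw [if_pos hx, Finset.mem_image]
        refine ⟨t, (mem_chains p T t k (m - x * p ^ k)).2
          ⟨by simpa using hlen, (List.pairwise_cons.1 hpw).2, hbt, by omega⟩, rfl⟩

lemma zipsum (p : ℕ) : ∀ (r : ℕ) (u v : Fin r → ℕ),
    (List.zipWith (fun x k => x * p ^ k) (List.ofFn u) (List.ofFn v)).sum
      = ∑ j, u j * p ^ v j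
  | 0, u, v => by simp
  | (r + 1), u, v => by
    rw [List.ofFn_succ, List.ofFn_succ, List.zipWith_cons_cons, List.sum_cons,
      zipsum p r _ _, Fin.sum_univ_succ]

lemma bridge (p : ℕ) (hp : 1 < p) {r : ℕ} (b : Fin r → ℕ) (hb : ∀ i, 1 ≤ b i)
    {N m : ℕ} (hm : m < p ^ N) :
    Set.ncard {n : Fin r → ℕ | StrictAnti n ∧ ∑ i, b i * p ^ n i = m}
      = cnt p (List.ofFn b) N m := by
  classical
  set A := {n : Fin r → ℕ | StrictAnti n ∧ ∑ i, b i * p ^ n i = m} with hA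
  have himg : (fun n : Fin r → ℕ => List.ofFn n) '' A = ↑(chains p (List.ofFn b) N m) := by
    ext l
    constructor
    · rintro ⟨n, ⟨hsa, hsum⟩, rfl⟩
      have hbd : ∀ j : Fin r, n j < N := by
        intro j
        have h1 : b j * p ^ n j ≤ m := hsum ▸ Finset.single_le_sum
          (f := fun j => b j * p ^ n j) (fun i _ => Nat.zero_le _) (Finset.mem_univ j)
        have h2 : p ^ n j ≤ b j * p ^ n j := Nat.le_mul_of_pos_left _ (hb j)
        have : p ^ n j < p ^ N := by omega
        exact (Nat.pow_lt_pow_iff_right hp).1 this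
      rw [Finset.mem_coe, mem_chains]
      refine ⟨by simp, ?_, ?_, by rw [zipsum]; exact hsum⟩
      · exact List.pairwise_ofFn.2 fun i j hij => hsa hij
      · intro a ha
        obtain ⟨j, rfl⟩ := List.mem_ofFn.1 ha
        exact hbd j
    · intro hl
      rw [Finset.mem_coe, mem_chains] at hl
      obtain ⟨hlen, hpw, hbd, hsum⟩ := hl
      rw [List.length_ofFn] at hlen
      set n : Fin r → ℕ := fun j => l.getD j 0 with hn
      have hofn : List.ofFn n = l := by
        apply List.ext_getElem (by simp [hlen])
        intro i h1 h2
        rw [List.getElem_ofFn]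
        exact List.getD_eq_getElem l 0 h2
      refine ⟨n, ⟨?_, ?_⟩, hofn⟩
      · intro i j hij
        have h := (List.pairwise_iff_getElem.1 hpw) i j (by omega) (by omega) hij
        show l.getD j 0 < l.getD i 0
        rw [List.getD_eq_getElem l 0 (show (j:ℕ) < l.length by omega),
          List.getD_eq_getElem l 0 (show (i:ℕ) < l.length by omega)]
        exact h
      · rw [← zipsum p r b n, hofn]; exact hsum
  have hinj : Set.InjOn (fun n : Fin r → ℕ => List.ofFn n) A := by
    intro n _ n' _ h
    funext j
    have := congrArg (fun l : List ℕ => l.getD j 0) h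
    simpa using this
  rw [cnt, ← Set.ncard_coe_finset, ← himg, Set.ncard_image_of_injOn hinj]

/-! ### Series-level versions -/

noncomputable def Hl (p : ℕ) (L : List ℕ) : PowerSeries ℤ :=
  Hser p (fun j : Fin L.length => L.get j)

lemma coeff_Hl (p : ℕ) (hp : 1 < p) (L : List ℕ) (hL : ∀ x ∈ L, 0 < x)
    {N m : ℕ} (hm : m < p ^ N) :
    (PowerSeries.coeff m) (Hl p L) = (cnt p L N m : ℤ) := by
  rw [Hl, Hser, PowerSeries.coeff_mk]
  norm_cast
  have := bridge p hp (fun j : Fin L.length => L.get j)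
    (fun j => hL _ (List.get_mem L _)) hm
  rwa [List.ofFn_get] at this

lemma pow_big (p m : ℕ) (hp : 1 < p) : m < p ^ (m + 1) := by
  calc m < 2 ^ (m + 1) := lt_trans (Nat.lt_two_pow_self) (Nat.pow_lt_pow_succ one_lt_two)
  _ ≤ p ^ (m + 1) := Nat.pow_le_pow_left hp (m + 1)

lemma pow_big' (p m : ℕ) (hp : 1 < p) : m < p ^ (m + 1 + 1) :=
  lt_of_lt_of_le (pow_big p m hp) (Nat.pow_le_pow_right (by omega) (by omega))

lemma pos_of_mem_cons {p c : ℕ} (hp : 1 < p) (hc : 0 < c) : 0 < p * c :=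
  Nat.mul_pos (by omega) hc

lemma sID0_nil (p : ℕ) (hp : 1 < p) (c : ℕ) (hc : 0 < c) :
    Hl p [c] = Hl p [p * c] + (PowerSeries.X : PowerSeries ℤ) ^ c := by
  have hpc : 0 < p * c := Nat.mul_pos (by omega) hc
  ext m
  rw [map_add, PowerSeries.coeff_X_pow,
    coeff_Hl p hp [c] (by intro x hx; simp at hx; omega) (pow_big' p m hp),
    coeff_Hl p hp [p * c] (by intro x hx; simp at hx; omega) (pow_big p m hp)]
  have key := id0_nil p c (m + 1) m
  split_ifs at key ⊢ <;> exact_mod_cast key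

lemma sID0_cons (p : ℕ) (hp : 1 < p) (c d : ℕ) (T : List ℕ) (hc : 0 < c) (hd : 0 < d)
    (hT : ∀ x ∈ T, 0 < x) :
    Hl p (c :: d :: T) = Hl p (p * c :: d :: T) + Hl p ((p * c + d) :: T) := by
  have hpc : 0 < p * c := Nat.mul_pos (by omega) hc
  have m1 : ∀ x ∈ c :: d :: T, 0 < x := by
    intro x hx; simp at hx
    rcases hx with h | h | h <;> first | exact hT x h | omega
  have m2 : ∀ x ∈ p * c :: d :: T, 0 < x := by
    intro x hx; simp at hx
    rcases hx with h | h | h <;> first | exact hT x h | omega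
  have m3 : ∀ x ∈ (p * c + d) :: T, 0 < x := by
    intro x hx; simp at hx
    rcases hx with h | h <;> first | exact hT x h | omega
  ext m
  rw [map_add,
    coeff_Hl p hp _ m1 (pow_big' p m hp),
    coeff_Hl p hp _ m2 (pow_big p m hp),
    coeff_Hl p hp _ m3 (pow_big p m hp)]
  exact_mod_cast id0_cons p c d (m + 1) m T

lemma sGEN_nil (p : ℕ) (hp : 1 < p) (q : List ℕ) (a c : ℕ) (hq : ∀ x ∈ q, 0 < x)
    (ha : 0 < a) (hc : 0 < c) :
    Hl p (q ++ [a, c]) + Hl p (q ++ [a + c])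
      = Hl p (q ++ [a, p * c]) + Hl p (q ++ [a]) * (PowerSeries.X : PowerSeries ℤ) ^ c := by
  have hpc : 0 < p * c := Nat.mul_pos (by omega) hc
  have h1 : ∀ x ∈ q ++ [a, c], 0 < x := by
    intro x hx; simp at hx
    rcases hx with h | h | h <;> first | exact hq x h | omega
  have h2 : ∀ x ∈ q ++ [a + c], 0 < x := by
    intro x hx; simp at hx
    rcases hx with h | h <;> first | exact hq x h | omega
  have h3 : ∀ x ∈ q ++ [a, p * c], 0 < x := by
    intro x hx; simp at hx
    rcases hx with h | h | h <;> first | exact hq x h | omega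
  have h4 : ∀ x ∈ q ++ [a], 0 < x := by
    intro x hx; simp at hx
    rcases hx with h | h <;> first | exact hq x h | omega
  ext m
  rw [map_add, map_add, PowerSeries.coeff_mul_X_pow',
    coeff_Hl p hp _ h1 (pow_big p m hp),
    coeff_Hl p hp _ h2 (pow_big p m hp),
    coeff_Hl p hp _ h3 (pow_big p m hp)]
  have key := gen_nil p c q a (m + 1) m
  by_cases hcm : c ≤ m
  · rw [if_pos hcm] at key ⊢
    rw [coeff_Hl p hp _ h4 (show m - c < p ^ (m + 1) from
      lt_of_le_of_lt (Nat.sub_le m c) (pow_big p m hp))]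
    exact_mod_cast key
  · rw [if_neg hcm] at key ⊢
    exact_mod_cast key

lemma sGEN_cons (p : ℕ) (hp : 1 < p) (q : List ℕ) (a c d : ℕ) (S : List ℕ)
    (hq : ∀ x ∈ q, 0 < x) (ha : 0 < a) (hc : 0 < c) (hd : 0 < d) (hS : ∀ x ∈ S, 0 < x) :
    Hl p (q ++ a :: c :: d :: S) + Hl p (q ++ (a + c) :: d :: S)
      = Hl p (q ++ a :: p * c :: d :: S) + Hl p (q ++ a :: (p * c + d) :: S) := by
  have hpc : 0 < p * c := Nat.mul_pos (by omega) hc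
  have h1 : ∀ x ∈ q ++ a :: c :: d :: S, 0 < x := by
    intro x hx; simp at hx
    rcases hx with h | h | h | h | h <;> first | exact hq x h | exact hS x h | omega
  have h2 : ∀ x ∈ q ++ (a + c) :: d :: S, 0 < x := by
    intro x hx; simp at hx
    rcases hx with h | h | h | h <;> first | exact hq x h | exact hS x h | omega
  have h3 : ∀ x ∈ q ++ a :: p * c :: d :: S, 0 < x := by
    intro x hx; simp at hx
    rcases hx with h | h | h | h | h <;> first | exact hq x h | exact hS x h | omega
  have h4 : ∀ x ∈ q ++ a :: (p * c + d) :: S, 0 < x := by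
    intro x hx; simp at hx
    rcases hx with h | h | h | h <;> first | exact hq x h | exact hS x h | omega
  ext m
  rw [map_add, map_add,
    coeff_Hl p hp _ h1 (pow_big p m hp),
    coeff_Hl p hp _ h2 (pow_big p m hp),
    coeff_Hl p hp _ h3 (pow_big p m hp),
    coeff_Hl p hp _ h4 (pow_big p m hp)]
  exact_mod_cast gen_cons p c d S q a (m + 1) m

lemma Hl_nil (p : ℕ) (hp : 1 < p) : Hl p [] = 1 := by
  ext m
  rw [coeff_Hl p hp [] (by simp) (pow_big p m hp), cnt_nil, PowerSeries.coeff_one]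
  split_ifs <;> simp

lemma psmul (f : Polynomial ℤ) (F : PowerSeries ℤ) :
    f • F = (f : PowerSeries ℤ) * F := by
  rw [Algebra.smul_def, PowerSeries.algebraMap_apply', Algebra.algebraMap_self]
  simp [PowerSeries.map_id]

def goodSet (p r s : ℕ) : Set (PowerSeries ℤ) :=
  {F | F = 1 ∨ ∃ A : List ℕ, A ≠ [] ∧ A.length ≤ r ∧ A.sum ≤ s ∧
    (∀ x ∈ A, 0 < x ∧ Nat.Coprime x p) ∧ F = Hl p A}

lemma main (p : ℕ) (hp : p.Prime) (r s : ℕ) :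
    ∀ (n : ℕ), ∀ (L : List ℕ), L.length + L.sum ≤ n → L.length ≤ r → L.sum ≤ s →
      (∀ x ∈ L, 0 < x) →
      Hl p L ∈ Submodule.span (Polynomial ℤ) (goodSet p r s) := by
  have hp1 : 1 < p := hp.one_lt
  intro n
  induction n with
  | zero =>
    intro L hn _ _ _
    have : L = [] := by
      rcases L with _ | ⟨x, L⟩
      · rfl
      · simp at hn
    subst this
    rw [Hl_nil p hp1]
    exact Submodule.subset_span (Or.inl rfl)
  | succ n IH =>
    intro L hn hr hs hpos
    by_cases hL : L = []
    · subst hL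
      rw [Hl_nil p hp1]
      exact Submodule.subset_span (Or.inl rfl)
    by_cases hcop : ∀ x ∈ L, Nat.Coprime x p
    · exact Submodule.subset_span (Or.inr ⟨L, hL, hr, hs,
        fun x hx => ⟨hpos x hx, hcop x hx⟩, rfl⟩)
    push_neg at hcop
    obtain ⟨x, hxL, hxnc⟩ := hcop
    have hdvd : p ∣ x := by
      by_contra h
      exact hxnc (Nat.Coprime.symm ((Nat.Prime.coprime_iff_not_dvd hp).2 h))
    obtain ⟨c, rfl⟩ := hdvd
    have hc : 0 < c := by
      have h0 := hpos _ hxL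
      rcases Nat.eq_zero_or_pos c with rfl | h
      · simp at h0
      · exact h
    have hcpc : c + 1 ≤ p * c := by nlinarith
    obtain ⟨q0, S, rfl⟩ := List.append_of_mem hxL
    have hq0 : ∀ x ∈ q0, 0 < x := fun x hx => hpos x (by simp [hx])
    have hS : ∀ x ∈ S, 0 < x := fun x hx => hpos x (by simp [hx])
    have hXc : (PowerSeries.X : PowerSeries ℤ) ^ c
        ∈ Submodule.span (Polynomial ℤ) (goodSet p r s) := by
      have h1 : (PowerSeries.X : PowerSeries ℤ) ^ c
          = (Polynomial.X ^ c : Polynomial ℤ) • (1 : PowerSeries ℤ) := by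
        rw [psmul, mul_one, Polynomial.coe_pow, Polynomial.coe_X]
      rw [h1]
      exact Submodule.smul_mem _ _ (Submodule.subset_span (Or.inl rfl))
    rcases List.eq_nil_or_concat q0 with rfl | ⟨q, a, rfl⟩
    · -- L = (p * c) :: S
      rcases S with _ | ⟨d, T⟩
      · -- L = [p * c]
        have hid := sID0_nil p hp1 c hc
        have h1 : Hl p [c] ∈ Submodule.span (Polynomial ℤ) (goodSet p r s) := by
          refine IH [c] ?_ ?_ ?_ ?_
          · simp at hn ⊢; omega
          · simpa using hr
          · simp at hs ⊢; omega
          · intro x hx; simp at hx; omega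
        have heq : Hl p ([] ++ [p * c]) = Hl p [c] - (PowerSeries.X : PowerSeries ℤ) ^ c := by
          rw [List.nil_append, hid]; ring
        rw [heq]
        exact Submodule.sub_mem _ h1 hXc
      · -- L = (p * c) :: d :: T
        have hd : 0 < d := hS d (by simp)
        have hT : ∀ x ∈ T, 0 < x := fun x hx => hS x (by simp [hx])
        have hid := sID0_cons p hp1 c d T hc hd hT
        simp only [List.length_append, List.length_cons, List.length_nil, List.sum_append,
          List.sum_cons, List.sum_nil, List.nil_append] at hn hr hs ⊢
        have h1 : Hl p (c :: d :: T) ∈ Submodule.span (Polynomial ℤ) (goodSet p r s) := by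
          refine IH (c :: d :: T) ?_ ?_ ?_ ?_
          · simp; omega
          · simpa using hr
          · simp; omega
          · intro x hx; simp at hx
            rcases hx with h | h | h <;> first | exact hT x h | omega
        have h2 : Hl p ((p * c + d) :: T) ∈ Submodule.span (Polynomial ℤ) (goodSet p r s) := by
          refine IH ((p * c + d) :: T) ?_ ?_ ?_ ?_
          · simp; omega
          · simp at hr ⊢; omega
          · simp; omega
          · intro x hx; simp at hx
            rcases hx with h | h <;> first | exact hT x h | omega
        have heq : Hl p ((p * c) :: d :: T)
            = Hl p (c :: d :: T) - Hl p ((p * c + d) :: T) := by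
          rw [hid]; ring
        rw [heq]
        exact Submodule.sub_mem _ h1 h2
    · -- L = (q ++ [a]) ++ (p * c) :: S = q ++ a :: (p * c) :: S
      have ha : 0 < a := hq0 a (by simp [List.concat_eq_append])
      have hq : ∀ x ∈ q, 0 < x := fun x hx => hq0 x (by simp [List.concat_eq_append, hx])
      have hL' : (q.concat a) ++ (p * c) :: S = q ++ a :: (p * c) :: S := by
        simp [List.concat_eq_append]
      rw [hL'] at hn hr hs ⊢
      simp only [List.length_append, List.length_cons, List.sum_append, List.sum_cons]
        at hn hr hs
      rcases S with _ | ⟨d, S'⟩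
      · -- L = q ++ [a, p * c]
        have hid := sGEN_nil p hp1 q a c hq ha hc
        have h1 : Hl p (q ++ [a, c]) ∈ Submodule.span (Polynomial ℤ) (goodSet p r s) := by
          refine IH _ ?_ ?_ ?_ ?_
          · simp; omega
          · simp at hr ⊢; omega
          · simp; omega
          · intro x hx; simp at hx
            rcases hx with h | h | h <;> first | exact hq x h | omega
        have h2 : Hl p (q ++ [a + c]) ∈ Submodule.span (Polynomial ℤ) (goodSet p r s) := by
          refine IH _ ?_ ?_ ?_ ?_
          · simp; omega
          · simp at hr ⊢; omega
          · simp; omega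
          · intro x hx; simp at hx
            rcases hx with h | h <;> first | exact hq x h | omega
        have h3 : Hl p (q ++ [a]) ∈ Submodule.span (Polynomial ℤ) (goodSet p r s) := by
          refine IH _ ?_ ?_ ?_ ?_
          · simp; omega
          · simp at hr ⊢; omega
          · simp; omega
          · intro x hx; simp at hx
            rcases hx with h | h <;> first | exact hq x h | omega
        have h4 : Hl p (q ++ [a]) * (PowerSeries.X : PowerSeries ℤ) ^ c
            ∈ Submodule.span (Polynomial ℤ) (goodSet p r s) := by
          have e1 : Hl p (q ++ [a]) * (PowerSeries.X : PowerSeries ℤ) ^ c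
              = (Polynomial.X ^ c : Polynomial ℤ) • Hl p (q ++ [a]) := by
            rw [psmul, Polynomial.coe_pow, Polynomial.coe_X]; ring
          rw [e1]
          exact Submodule.smul_mem _ _ h3
        have heq : Hl p (q ++ [a, p * c])
            = Hl p (q ++ [a, c]) + Hl p (q ++ [a + c])
              - Hl p (q ++ [a]) * (PowerSeries.X : PowerSeries ℤ) ^ c := by
          linear_combination -hid
        have heq2 : q ++ a :: (p * c) :: [] = q ++ [a, p * c] := rfl
        rw [heq2, heq]
        exact Submodule.sub_mem _ (Submodule.add_mem _ h1 h2) h4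
      · -- L = q ++ a :: (p * c) :: d :: S'
        have hd : 0 < d := hS d (by simp)
        have hS' : ∀ x ∈ S', 0 < x := fun x hx => hS x (by simp [hx])
        have hid := sGEN_cons p hp1 q a c d S' hq ha hc hd hS'
        simp only [List.length_cons, List.sum_cons] at hn hr hs
        have h1 : Hl p (q ++ a :: c :: d :: S') ∈ Submodule.span (Polynomial ℤ) (goodSet p r s) := by
          refine IH _ ?_ ?_ ?_ ?_
          · simp; omega
          · simp at hr ⊢; omega
          · simp; omega
          · intro x hx; simp at hx
            rcases hx with h | h | h | h | h <;> first | exact hq x h | exact hS' x h | omega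
        have h2 : Hl p (q ++ (a + c) :: d :: S') ∈ Submodule.span (Polynomial ℤ) (goodSet p r s) := by
          refine IH _ ?_ ?_ ?_ ?_
          · simp; omega
          · simp at hr ⊢; omega
          · simp; omega
          · intro x hx; simp at hx
            rcases hx with h | h | h | h <;> first | exact hq x h | exact hS' x h | omega
        have h3 : Hl p (q ++ a :: (p * c + d) :: S') ∈ Submodule.span (Polynomial ℤ) (goodSet p r s) := by
          refine IH _ ?_ ?_ ?_ ?_
          · simp; omega
          · simp at hr ⊢; omega
          · simp; omega
          · intro x hx; simp at hx
            rcases hx with h | h | h | h <;> first | exact hq x h | exact hS' x h | omega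
        have heq : Hl p (q ++ a :: (p * c) :: d :: S')
            = Hl p (q ++ a :: c :: d :: S') + Hl p (q ++ (a + c) :: d :: S')
              - Hl p (q ++ a :: (p * c + d) :: S') := by
          linear_combination -hid
        rw [heq]
        exact Submodule.sub_mem _ (Submodule.add_mem _ h1 h2) h3

end Stmt7

/-- For any positive integers `b_1,…,b_r`, the series `H_{b_1,…,b_r}(z)` is a linear
combination, with coefficients in `ℤ[z]`, of `1` and of series `H_{a_1,…,a_s}(z)` in
which all `a_i` are positive integers relatively prime to `p`, `s ≤ r`, and
`a_1 + … + a_s ≤ b_1 + … + b_r`. -/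
theorem stmt_7 (p : ℕ) (hp : p.Prime) (r : ℕ) (hr : 0 < r)
    (b : Fin r → ℕ) (hb : ∀ i, 0 < b i) :
    ∃ (M : ℕ) (c₀ : Polynomial ℤ) (s : Fin M → ℕ)
      (a : (i : Fin M) → Fin (s i) → ℕ) (c : Fin M → Polynomial ℤ),
      (∀ i, 0 < s i) ∧
      (∀ i, s i ≤ r) ∧
      (∀ i j, 0 < a i j) ∧
      (∀ i j, Nat.Coprime (a i j) p) ∧
      (∀ i, (∑ j, a i j) ≤ ∑ j, b j) ∧
      Hser p b = (c₀ : PowerSeries ℤ) + ∑ i, (c i : PowerSeries ℤ) * Hser p (a i) := by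
  classical
  have hp1 : 1 < p := hp.one_lt
  set s0 := ∑ j, b j with hs0
  have hs1 : 0 < s0 := Finset.sum_pos (fun i _ => hb i) ⟨⟨0, hr⟩, Finset.mem_univ _⟩
  have hofpos : ∀ x ∈ List.ofFn b, 0 < x := by
    intro x hx
    obtain ⟨j, rfl⟩ := List.mem_ofFn.1 hx
    exact hb j
  have hEq : Hser p b = Stmt7.Hl p (List.ofFn b) := by
    ext m
    rw [Stmt7.coeff_Hl p hp1 _ hofpos (Stmt7.pow_big p m hp1), Hser, PowerSeries.coeff_mk]
    norm_cast
    exact Stmt7.bridge p hp1 b (fun i => hb i) (Stmt7.pow_big p m hp1)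
  have hmem : Hser p b ∈ Submodule.span (Polynomial ℤ) (Stmt7.goodSet p r s0) := by
    rw [hEq]
    refine Stmt7.main p hp r s0 (r + s0) (List.ofFn b) ?_ ?_ ?_ hofpos
    · simp [List.sum_ofFn, hs0]
    · simp
    · simp [List.sum_ofFn, hs0]
  obtain ⟨M, f, g, hsum⟩ := Submodule.mem_span_set'.1 hmem
  have hchoice : ∀ i : Fin M, ∃ Afl : List ℕ × Bool,
      Afl.1 ≠ [] ∧ Afl.1.length ≤ r ∧ Afl.1.sum ≤ s0 ∧
      (∀ x ∈ Afl.1, 0 < x ∧ Nat.Coprime x p) ∧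
      ((Afl.2 = true ∧ (g i : PowerSeries ℤ) = Stmt7.Hl p Afl.1)
        ∨ (Afl.2 = false ∧ (g i : PowerSeries ℤ) = 1)) := by
    intro i
    rcases (g i).2 with h1 | ⟨A, hne, hlen, hsA, hpc, hHl⟩
    · refine ⟨([1], false), by simp, by simp; omega, by simp; omega, ?_, Or.inr ⟨rfl, h1⟩⟩
      intro x hx
      simp at hx
      subst hx
      exact ⟨one_pos, Nat.coprime_one_left p⟩
    · exact ⟨(A, true), hne, hlen, hsA, hpc, Or.inl ⟨rfl, hHl⟩⟩
  choose Afl hne hlen hsuml hpc hflag using hchoice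
  have hgetsum : ∀ l : List ℕ, (∑ j : Fin l.length, l.get j) = l.sum := by
    intro l
    have := List.sum_ofFn (f := l.get)
    rw [List.ofFn_get] at this
    exact this.symm
  refine ⟨M, ∑ i, (if (Afl i).2 = true then 0 else f i),
    fun i => (Afl i).1.length, fun i => (Afl i).1.get,
    fun i => if (Afl i).2 = true then f i else 0, ?_, ?_, ?_, ?_, ?_, ?_⟩
  · intro i
    exact List.length_pos_iff.2 (hne i)
  · intro i
    exact hlen i
  · intro i j
    exact (hpc i _ (List.get_mem _ _)).1
  · intro i j
    exact (hpc i _ (List.get_mem _ _)).2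
  · intro i
    rw [hgetsum]
    exact hsuml i
  · refine Eq.trans hsum.symm ?_
    have hterm : ∀ i ∈ Finset.univ, f i • ((g i : PowerSeries ℤ))
        = ((if (Afl i).2 = true then 0 else f i : Polynomial ℤ) : PowerSeries ℤ)
          + ((if (Afl i).2 = true then f i else 0 : Polynomial ℤ) : PowerSeries ℤ)
            * Stmt7.Hl p (Afl i).1 := by
      intro i _
      rcases hflag i with ⟨hb2, hgi⟩ | ⟨hb2, hgi⟩ <;> rw [hb2, hgi, Stmt7.psmul]
      · simp
      · simp
    rw [Finset.sum_congr rfl hterm, Finset.sum_add_distrib]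
    congr 1
    rw [← Polynomial.coeToPowerSeries.ringHom_apply, map_sum]
    simp [Polynomial.coeToPowerSeries.ringHom_apply]
end

section
/- Let p be a prime, r ≥ 1, and let b_1, …, b_r and b'_h be positive integers. Then the following identities of formal power series with integer coefficients hold. (1) If 1 < h < r: H_{b_1,…,b_{h−1}, p·b'_h, b_{h+1},…,b_r}(z) = H_{b_1,…,b_{h−1}, b'_h, b_{h+1},…,b_r}(z) + H_{b_1,…,b_{h−2}, b_{h−1}+b'_h, b_{h+1},…,b_r}(z) − H_{b_1,…,b_{h−1}, p·b'_h + b_{h+1}, b_{h+2},…,b_r}(z). (2) If 1 = h < r: H_{p·b'_1, b_2,…,b_r}(z) = H_{b'_1, b_2,…,b_r}(z) − H_{p·b'_1 + b_2, b_3,…,b_r}(z). (3) If 1 < h = r: H_{b_1,…,b_{r−1}, p·b'_r}(z) = H_{b_1,…,b_{r−1}, b'_r}(z) + H_{b_1,…,b_{r−2}, b_{r−1}+b'_r}(z) − z^{b'_r}·H_{b_1,…,b_{r−1}}(z). (4) If 1 = h = r: H_{p·b'_1}(z) = H_{b'_1}(z) − z^{b'_1}. -/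
open PowerSeries

/-- For a list `l = [b_1,…,b_r]`, the series
`H_{b_1,…,b_r}(z) = Σ_{n_1 > n_2 > … > n_r ≥ 0} z^{b_1 p^{n_1} + … + b_r p^{n_r}}`
as a formal power series over `ℤ`. -/
noncomputable def HserL (p : ℕ) (l : List ℕ) : PowerSeries ℤ :=
  PowerSeries.mk fun m =>
    ((Set.ncard {n : Fin l.length → ℕ |
        StrictAnti n ∧ ∑ i, l.get i * p ^ n i = m} : ℕ) : ℤ)

namespace HouAux

/-! ### Weighted sums over lists -/

def Zf (p : ℕ) (l c : List ℕ) : ℕ := (List.zipWith (fun b t => b * p ^ t) l c).sum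

@[simp] lemma Zf_nil_left (p : ℕ) (c : List ℕ) : Zf p [] c = 0 := by simp [Zf]
@[simp] lemma Zf_nil_right (p : ℕ) (l : List ℕ) : Zf p l [] = 0 := by simp [Zf]
@[simp] lemma Zf_cons (p b t : ℕ) (l c : List ℕ) :
    Zf p (b :: l) (t :: c) = b * p ^ t + Zf p l c := by simp [Zf]

lemma Zf_append (p : ℕ) {u q : List ℕ} (v r : List ℕ) (h : u.length = q.length) :
    Zf p (u ++ v) (q ++ r) = Zf p u q + Zf p v r := by
  unfold Zf; rw [List.zipWith_append h, List.sum_append]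

/-! ### The solution-counting sets -/

def Sset (p : ℕ) (l : List ℕ) (m : ℕ) : Set (Fin l.length → ℕ) :=
  {n | StrictAnti n ∧ ∑ i, l.get i * p ^ n i = m}

def Dset (p : ℕ) (l : List ℕ) (m : ℕ) : Set (List ℕ) :=
  {c | c.length = l.length ∧ c.Chain' (· > ·) ∧ Zf p l c = m}

lemma strictAnti_iff_adj {k : ℕ} (f : Fin k → ℕ) :
    StrictAnti f ↔ ∀ (i : ℕ) (h : i + 1 < k), f ⟨i + 1, h⟩ < f ⟨i, by omega⟩ := by
  cases k with
  | zero =>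
    constructor
    · intro _ i h; omega
    · intro _ i j hij; exact absurd i.isLt (by omega)
  | succ k' =>
    rw [Fin.strictAnti_iff_succ_lt]
    constructor
    · intro h i hi
      have := h ⟨i, by omega⟩
      simpa [Fin.succ, Fin.castSucc, Fin.castAdd, Fin.castLE] using this
    · intro h i
      have := h i.val (by omega)
      simpa [Fin.succ, Fin.castSucc, Fin.castAdd, Fin.castLE] using this

lemma chain'_ofFn_iff {k : ℕ} (f : Fin k → ℕ) :
    (List.ofFn f).Chain' (· > ·) ↔ StrictAnti f := by
  unfold List.Chain'
  rw [List.isChain_iff_getElem, strictAnti_iff_adj]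
  simp only [List.length_ofFn, List.getElem_ofFn]

lemma zf_ofFn (p : ℕ) (l : List ℕ) (n : Fin l.length → ℕ) :
    Zf p l (List.ofFn n) = ∑ i, l.get i * p ^ n i := by
  have : List.zipWith (fun b t => b * p ^ t) l (List.ofFn n)
      = List.ofFn (fun i : Fin l.length => l.get i * p ^ n i) := by
    apply List.ext_getElem
    · simp
    · intro i h1 h2
      simp [List.getElem_zipWith]
  rw [Zf, this, List.sum_ofFn]

lemma Dset_eq_image (p : ℕ) (l : List ℕ) (m : ℕ) :
    Dset p l m = List.ofFn '' (Sset p l m) := by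
  ext c
  constructor
  · rintro ⟨hlen, hch, hz⟩
    refine ⟨fun i => c.get (Fin.cast hlen.symm i), ?_, ?_⟩
    · have hc : c = List.ofFn (fun i => c.get (Fin.cast hlen.symm i)) := by
        apply List.ext_getElem
        · simp [hlen]
        · intro i h1 h2; simp [Fin.cast]
      constructor
      · rw [← chain'_ofFn_iff, ← hc]; exact hch
      · rw [← zf_ofFn, ← hc]; exact hz
    · apply List.ext_getElem
      · simp [hlen]
      · intro i h1 h2; simp [Fin.cast]
  · rintro ⟨n, ⟨hs, he⟩, rfl⟩
    exact ⟨by simp, (chain'_ofFn_iff n).2 hs, by rw [zf_ofFn]; exact he⟩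

lemma ncard_Dset (p : ℕ) (l : List ℕ) (m : ℕ) :
    (Dset p l m).ncard = (Sset p l m).ncard := by
  rw [Dset_eq_image]
  exact Set.ncard_image_of_injOn (fun a _ b _ h => List.ofFn_injective h)

lemma finite_Sset {p : ℕ} (hp : 2 ≤ p) {l : List ℕ} (hl : ∀ y ∈ l, 0 < y) (m : ℕ) :
    (Sset p l m).Finite := by
  apply Set.Finite.subset (Set.Finite.pi (fun i : Fin l.length => Set.finite_Iic m))
  rintro n ⟨-, hsum⟩
  intro i _
  have h1 : l.get i * p ^ n i ≤ m := by
    rw [← hsum]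
    exact Finset.single_le_sum (f := fun j => l.get j * p ^ n j)
      (fun _ _ => Nat.zero_le _) (Finset.mem_univ i)
  have h2 : 0 < l.get i := hl _ (l.get_mem i)
  have h3 : p ^ n i ≤ m := le_trans (Nat.le_mul_of_pos_left _ h2) h1
  have h4 : n i < p ^ n i := Nat.lt_pow_self (n := n i) (by omega)
  simp only [Set.mem_Iic]
  omega

lemma finite_Dset {p : ℕ} (hp : 2 ≤ p) {l : List ℕ} (hl : ∀ y ∈ l, 0 < y) (m : ℕ) :
    (Dset p l m).Finite := by
  rw [Dset_eq_image]
  exact (finite_Sset hp hl m).image _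

/-! ### Triples -/

def glue (x : List ℕ × ℕ × List ℕ) : List ℕ := x.1 ++ x.2.1 :: x.2.2

def TrS (p : ℕ) (u : List ℕ) (b : ℕ) (v : List ℕ) (m : ℕ) : Set (List ℕ × ℕ × List ℕ) :=
  {x | x.1.length = u.length ∧ x.2.2.length = v.length ∧
    (glue x).Chain' (· > ·) ∧ Zf p u x.1 + b * p ^ x.2.1 + Zf p v x.2.2 = m}

lemma glue_injOn {s : Set (List ℕ × ℕ × List ℕ)} {a : ℕ}
    (h : ∀ x ∈ s, x.1.length = a) : Set.InjOn glue s := by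
  rintro ⟨q1, t1, r1⟩ h1 ⟨q2, t2, r2⟩ h2 he
  have l1 : q1.length = a := h _ h1
  have l2 : q2.length = a := h _ h2
  have hq : q1 = q2 := by
    have e1 : (glue (q1, t1, r1)).take a = q1 := by
      rw [glue, ← l1]; exact List.take_left
    have e2 : (glue (q2, t2, r2)).take a = q2 := by
      rw [glue, ← l2]; exact List.take_left
    rw [← e1, ← e2, he]
  subst hq
  have : t1 :: r1 = t2 :: r2 := by
    have := he
    simp only [glue] at this
    exact List.append_cancel_left this
  simp_all

lemma zf_glue (p : ℕ) (u : List ℕ) (b : ℕ) (v : List ℕ) {q : List ℕ} (t : ℕ) (r : List ℕ)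
    (h : q.length = u.length) :
    Zf p (u ++ b :: v) (glue (q, t, r)) = Zf p u q + b * p ^ t + Zf p v r := by
  rw [glue, Zf_append p _ _ h.symm, Zf_cons]
  ring

lemma Dset_eq_glue_image (p : ℕ) (u : List ℕ) (b : ℕ) (v : List ℕ) (m : ℕ) :
    Dset p (u ++ b :: v) m = glue '' (TrS p u b v m) := by
  ext d
  constructor
  · rintro ⟨hlen, hch, hz⟩
    rw [List.length_append, List.length_cons] at hlen
    have hlu : u.length < d.length := by omega
    have hdrop : d.drop u.length = d.get ⟨u.length, hlu⟩ :: d.drop (u.length + 1) :=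
      List.drop_eq_getElem_cons hlu
    have hd : glue (d.take u.length, d.get ⟨u.length, hlu⟩, d.drop (u.length + 1)) = d := by
      rw [glue, ← hdrop, List.take_append_drop]
    have hlq : (d.take u.length).length = u.length := by
      rw [List.length_take]; omega
    refine ⟨_, ⟨hlq, ?_, ?_, ?_⟩, hd⟩
    · rw [List.length_drop]; omega
    · rw [hd]; exact hch
    · rw [← zf_glue p u b v _ _ hlq, hd]; exact hz
  · rintro ⟨⟨q, t, r⟩, ⟨h1, h2, h3, h4⟩, rfl⟩
    refine ⟨?_, h3, ?_⟩
    · simp [glue, h1, h2]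
    · rw [zf_glue p u b v t r h1]; exact h4

lemma ncard_TrS_eq_Sset (p : ℕ) (u : List ℕ) (b : ℕ) (v : List ℕ) (m : ℕ) :
    (TrS p u b v m).ncard = (Sset p (u ++ b :: v) m).ncard := by
  rw [← ncard_Dset, Dset_eq_glue_image]
  exact (Set.ncard_image_of_injOn (glue_injOn (fun x hx => hx.1))).symm

lemma finite_TrS {p : ℕ} (hp : 2 ≤ p) {u : List ℕ} {b : ℕ} {v : List ℕ}
    (hl : ∀ y ∈ u ++ b :: v, 0 < y) (m : ℕ) : (TrS p u b v m).Finite := by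
  apply Set.Finite.of_finite_image _ (glue_injOn (fun x hx => hx.1))
  rw [← Dset_eq_glue_image]
  exact finite_Dset hp hl m

/-! ### The weak set -/

def WS (p : ℕ) (u : List ℕ) (b : ℕ) (v : List ℕ) (m : ℕ) : Set (List ℕ × ℕ × List ℕ) :=
  {x | x.1.length = u.length ∧ x.2.2.length = v.length ∧
    x.1.Chain' (· > ·) ∧ (x.2.1 :: x.2.2).Chain' (· > ·) ∧
    (∀ z ∈ x.1.getLast?, x.2.1 ≤ z) ∧
    Zf p u x.1 + b * p ^ x.2.1 + Zf p v x.2.2 = m}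

lemma chain'_glue_iff (q : List ℕ) (t : ℕ) (r : List ℕ) :
    (q ++ t :: r).Chain' (· > ·) ↔
      q.Chain' (· > ·) ∧ (t :: r).Chain' (· > ·) ∧ ∀ z ∈ q.getLast?, z > t := by
  unfold List.Chain'
  rw [List.isChain_append]
  simp

lemma TrS_eq (p : ℕ) (u : List ℕ) (b : ℕ) (v : List ℕ) (m : ℕ) :
    TrS p u b v m = {x ∈ WS p u b v m | ∀ z ∈ x.1.getLast?, z > x.2.1} := by
  ext ⟨q, t, r⟩
  simp only [TrS, WS, glue, Set.mem_setOf_eq, chain'_glue_iff]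
  constructor
  · rintro ⟨h1, h2, ⟨hq, htr, hb⟩, h4⟩
    exact ⟨⟨h1, h2, hq, htr, fun z hz => (hb z hz).le, h4⟩, hb⟩
  · rintro ⟨⟨h1, h2, hq, htr, _, h4⟩, hlt⟩
    exact ⟨h1, h2, ⟨hq, htr, hlt⟩, h4⟩

lemma eq_concat_of_getLast? {q : List ℕ} {t : ℕ} (h : q.getLast? = some t) :
    q = q.dropLast ++ [t] := by
  have hne : q ≠ [] := by rintro rfl; simp at h
  have h2 := List.dropLast_append_getLast hne
  rw [List.getLast?_eq_getLast hne] at h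
  have : q.getLast hne = t := by injection h
  rw [← this]; exact h2.symm

/-- The `A`-side splitting: for a nonempty prefix, the weak set splits into the strict
set and a copy of the set with the last prefix entry merged with the middle entry. -/
lemma ncard_WS_concat (p : ℕ) (u₀ : List ℕ) (x b : ℕ) (v : List ℕ) (m : ℕ)
    (hA : (TrS p (u₀ ++ [x]) b v m).Finite) (hB : (TrS p u₀ (x + b) v m).Finite) :
    (WS p (u₀ ++ [x]) b v m).ncard
      = (TrS p (u₀ ++ [x]) b v m).ncard + (TrS p u₀ (x + b) v m).ncard := by
  classical
  set Weq : Set (List ℕ × ℕ × List ℕ) :=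
    {y ∈ WS p (u₀ ++ [x]) b v m | y.1.getLast? = some y.2.1} with hWeq
  have hcover : WS p (u₀ ++ [x]) b v m = TrS p (u₀ ++ [x]) b v m ∪ Weq := by
    ext ⟨q, t, r⟩
    constructor
    · rintro ⟨h1, h2, hq, htr, hwk, h4⟩
      have hqne : q ≠ [] := by
        intro h; rw [h] at h1; simp at h1
      have hlast := List.getLast?_eq_getLast hqne
      have hle : t ≤ q.getLast hqne := hwk _ (by rw [hlast]; rfl)
      rcases lt_or_eq_of_le hle with hlt | heq
      · left
        rw [TrS_eq]
        refine ⟨⟨h1, h2, hq, htr, hwk, h4⟩, ?_⟩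
        intro z hz
        dsimp only at hz ⊢
        rw [hlast] at hz
        simp only [Option.mem_def, Option.some.injEq] at hz
        omega
      · right
        refine ⟨⟨h1, h2, hq, htr, hwk, h4⟩, ?_⟩
        dsimp only
        rw [hlast, heq]
    · rintro (hy | hy)
      · rw [TrS_eq] at hy; exact hy.1
      · exact hy.1
  have hdisj : Disjoint (TrS p (u₀ ++ [x]) b v m) Weq := by
    rw [Set.disjoint_left]
    rintro ⟨q, t, r⟩ hx1 hx2
    rw [TrS_eq] at hx1
    have h5 := hx1.2 t (by rw [hx2.2]; rfl)
    dsimp only at h5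
    omega
  set F : List ℕ × ℕ × List ℕ → List ℕ × ℕ × List ℕ :=
    fun y => (y.1.dropLast, y.2.1, y.2.2) with hF
  have himg : F '' Weq = TrS p u₀ (x + b) v m := by
    ext y
    constructor
    · rintro ⟨⟨q, t, r⟩, ⟨⟨h1, h2, hq, htr, hwk, h4⟩, hlast⟩, rfl⟩
      dsimp only at h1 h2 hq htr hwk h4 hlast
      simp only [hF]
      have hqe : q = q.dropLast ++ [t] := eq_concat_of_getLast? hlast
      have hlen : q.dropLast.length = u₀.length := by
        have h6 := congrArg List.length hqe
        simp only [List.length_append, List.length_cons, List.length_nil] at h6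
        simp only [List.length_append, List.length_cons, List.length_nil] at h1
        omega
      obtain ⟨hq₀, -, hbd⟩ := (chain'_glue_iff q.dropLast t []).1 (by rw [← hqe]; exact hq)
      refine ⟨hlen, h2, ?_, ?_⟩
      · exact (chain'_glue_iff q.dropLast t r).2 ⟨hq₀, htr, hbd⟩
      · dsimp only
        have hzq : Zf p (u₀ ++ [x]) q = Zf p u₀ q.dropLast + x * p ^ t := by
          rw [hqe, Zf_append p _ _ hlen.symm]; simp
        have hadd : (x + b) * p ^ t = x * p ^ t + b * p ^ t := add_mul x b _
        rw [hzq] at h4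
        omega
    · obtain ⟨q₀, t, r⟩ := y
      rintro ⟨h1, h2, hch, h4⟩
      dsimp only at h1 h2 hch h4
      obtain ⟨hq₀, htr, hbd⟩ := (chain'_glue_iff q₀ t r).1 hch
      refine ⟨(q₀ ++ [t], t, r), ⟨⟨?_, h2, ?_, htr, ?_, ?_⟩, ?_⟩, ?_⟩
      · simp [h1]
      · exact (chain'_glue_iff q₀ t []).2 ⟨hq₀, List.isChain_singleton t, hbd⟩
      · intro z hz
        dsimp only at hz ⊢
        rw [List.getLast?_concat] at hz
        simp only [Option.mem_def, Option.some.injEq] at hz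
        omega
      · dsimp only
        have hzq : Zf p (u₀ ++ [x]) (q₀ ++ [t]) = Zf p u₀ q₀ + x * p ^ t := by
          rw [Zf_append p _ _ h1.symm]; simp
        have hadd : (x + b) * p ^ t = x * p ^ t + b * p ^ t := add_mul x b _
        rw [hzq]
        omega
      · dsimp only
        rw [List.getLast?_concat]
      · simp [hF, List.dropLast_concat]
  have hinj : Set.InjOn F Weq := by
    rintro ⟨q1, t1, r1⟩ hx1 ⟨q2, t2, r2⟩ hx2 he
    obtain ⟨e1, e2, e3⟩ : q1.dropLast = q2.dropLast ∧ t1 = t2 ∧ r1 = r2 := by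
      simpa [hF, Prod.ext_iff] using he
    have hq1 := eq_concat_of_getLast? hx1.2
    have hq2 := eq_concat_of_getLast? hx2.2
    dsimp only at hq1 hq2
    subst e2; subst e3
    have : q1 = q2 := by rw [hq1, hq2, e1]
    simp [this]
  have hWeqfin : Weq.Finite :=
    Set.Finite.of_finite_image (himg ▸ hB) hinj
  rw [hcover, Set.ncard_union_eq hdisj hA hWeqfin]
  congr 1
  rw [← himg, Set.ncard_image_of_injOn hinj]

/-- The `L`-side splitting with a nonempty suffix. -/
lemma ncard_WS_cons (p : ℕ) (u : List ℕ) (b w : ℕ) (v₀ : List ℕ) (m : ℕ)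
    (hL : (TrS p u (p * b) (w :: v₀) m).Finite) (hC : (TrS p u (p * b + w) v₀ m).Finite) :
    (WS p u b (w :: v₀) m).ncard
      = (TrS p u (p * b) (w :: v₀) m).ncard + (TrS p u (p * b + w) v₀ m).ncard := by
  classical
  set Ws : Set (List ℕ × ℕ × List ℕ) :=
    {y ∈ WS p u b (w :: v₀) m | ∀ hd ∈ y.2.2.head?, hd + 2 ≤ y.2.1} with hWs
  set Wc : Set (List ℕ × ℕ × List ℕ) :=
    {y ∈ WS p u b (w :: v₀) m | ∀ hd ∈ y.2.2.head?, y.2.1 = hd + 1} with hWc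
  have hcover : WS p u b (w :: v₀) m = Ws ∪ Wc := by
    ext ⟨q, t, r⟩
    constructor
    · rintro ⟨h1, h2, hq, htr, hwk, h4⟩
      dsimp only at h1 h2 hq htr hwk h4
      obtain ⟨hd, tl, rfl⟩ : ∃ hd tl, r = hd :: tl := by
        cases r with
        | nil => simp at h2
        | cons a l => exact ⟨a, l, rfl⟩
      have hgt : t > hd := (List.isChain_cons_cons.1 htr).1
      rcases Nat.lt_or_ge (hd + 1) t with h | h
      · left
        refine ⟨⟨h1, h2, hq, htr, hwk, h4⟩, ?_⟩
        intro z hz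
        simp only [List.head?_cons, Option.mem_def, Option.some.injEq] at hz
        dsimp only
        omega
      · right
        refine ⟨⟨h1, h2, hq, htr, hwk, h4⟩, ?_⟩
        intro z hz
        simp only [List.head?_cons, Option.mem_def, Option.some.injEq] at hz
        dsimp only
        omega
    · rintro (hy | hy) <;> exact hy.1
  have hdisj : Disjoint Ws Wc := by
    rw [Set.disjoint_left]
    rintro ⟨q, t, r⟩ hx1 hx2
    obtain ⟨hd, tl, rfl⟩ : ∃ hd tl, r = hd :: tl := by
      cases h2 : r with
      | nil =>
        exfalso
        have := hx1.1.2.1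
        rw [h2] at this
        simp at this
      | cons a l => exact ⟨a, l, rfl⟩
    have e1 := hx1.2 hd (by simp)
    have e2 := hx2.2 hd (by simp)
    dsimp only at e1 e2
    omega
  set G : List ℕ × ℕ × List ℕ → List ℕ × ℕ × List ℕ :=
    fun y => (y.1, y.2.1 - 1, y.2.2) with hG
  have himgs : G '' Ws = TrS p u (p * b) (w :: v₀) m := by
    ext y
    constructor
    · rintro ⟨⟨q, t, r⟩, ⟨⟨h1, h2, hq, htr, hwk, h4⟩, hcond⟩, rfl⟩
      dsimp only at h1 h2 hq htr hwk h4 hcond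
      simp only [hG]
      obtain ⟨hd, tl, rfl⟩ : ∃ hd tl, r = hd :: tl := by
        cases r with
        | nil => simp at h2
        | cons a l => exact ⟨a, l, rfl⟩
      have hge : hd + 2 ≤ t := hcond hd (by simp)
      refine ⟨h1, h2, ?_, ?_⟩
      · refine (chain'_glue_iff q (t - 1) (hd :: tl)).2 ⟨hq, ?_, ?_⟩
        · exact List.isChain_cons_cons.2 ⟨by omega, (List.isChain_cons_cons.1 htr).2⟩
        · intro z hz
          have := hwk z hz
          omega
      · dsimp only
        have he : b * p ^ t = p * b * p ^ (t - 1) := by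
          conv_lhs => rw [show t = (t - 1) + 1 from by omega]
          rw [pow_succ]; ring
        omega
    · obtain ⟨q, s, r⟩ := y
      rintro ⟨h1, h2, hch, h4⟩
      dsimp only at h1 h2 hch h4
      obtain ⟨hd, tl, rfl⟩ : ∃ hd tl, r = hd :: tl := by
        cases r with
        | nil => simp at h2
        | cons a l => exact ⟨a, l, rfl⟩
      obtain ⟨hq, htr, hbd⟩ := (chain'_glue_iff q s (hd :: tl)).1 hch
      have hshd : s > hd := (List.isChain_cons_cons.1 htr).1
      refine ⟨(q, s + 1, hd :: tl), ⟨⟨h1, h2, hq, ?_, ?_, ?_⟩, ?_⟩, ?_⟩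
      · dsimp only
        exact List.isChain_cons_cons.2 ⟨by omega, (List.isChain_cons_cons.1 htr).2⟩
      · intro z hz
        dsimp only at hz ⊢
        have := hbd z hz
        omega
      · dsimp only
        have he : b * p ^ (s + 1) = p * b * p ^ s := by rw [pow_succ]; ring
        omega
      · intro z hz
        simp only [List.head?_cons, Option.mem_def, Option.some.injEq] at hz
        dsimp only
        omega
      · simp [hG]
  have hinjs : Set.InjOn G Ws := by
    rintro ⟨q1, t1, r1⟩ hx1 ⟨q2, t2, r2⟩ hx2 he
    obtain ⟨rfl, e2, rfl⟩ : q1 = q2 ∧ t1 - 1 = t2 - 1 ∧ r1 = r2 := by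
      simpa [hG, Prod.ext_iff] using he
    obtain ⟨hd, tl, rfl⟩ : ∃ hd tl, r1 = hd :: tl := by
      cases h2 : r1 with
      | nil =>
        exfalso
        have := hx1.1.2.1
        rw [h2] at this
        simp at this
      | cons a l => exact ⟨a, l, rfl⟩
    have g1 := hx1.2 hd (by simp)
    have g2 := hx2.2 hd (by simp)
    dsimp only at g1 g2
    have : t1 = t2 := by omega
    simp [this]
  set G' : List ℕ × ℕ × List ℕ → List ℕ × ℕ × List ℕ :=
    fun y => (y.1, y.2.1 - 1, y.2.2.tail) with hG'
  have himgc : G' '' Wc = TrS p u (p * b + w) v₀ m := by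
    ext y
    constructor
    · rintro ⟨⟨q, t, r⟩, ⟨⟨h1, h2, hq, htr, hwk, h4⟩, hcond⟩, rfl⟩
      dsimp only at h1 h2 hq htr hwk h4 hcond
      simp only [hG']
      obtain ⟨hd, tl, rfl⟩ : ∃ hd tl, r = hd :: tl := by
        cases r with
        | nil => simp at h2
        | cons a l => exact ⟨a, l, rfl⟩
      have hteq : t = hd + 1 := hcond hd (by simp)
      have hth : t - 1 = hd := by omega
      refine ⟨h1, by simpa using h2, ?_, ?_⟩
      · simp only [List.tail_cons, hth]
        refine (chain'_glue_iff q hd tl).2 ⟨hq, (List.isChain_cons_cons.1 htr).2, ?_⟩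
        intro z hz
        have := hwk z hz
        omega
      · dsimp only
        simp only [List.tail_cons, hth, hteq, Nat.add_sub_cancel] at *
        have he : b * p ^ (hd + 1) + w * p ^ hd = (p * b + w) * p ^ hd := by
          rw [pow_succ]; ring
        simp only [Zf_cons] at h4
        omega
    · obtain ⟨q, s, r⟩ := y
      rintro ⟨h1, h2, hch, h4⟩
      dsimp only at h1 h2 hch h4
      obtain ⟨hq, htr, hbd⟩ := (chain'_glue_iff q s r).1 hch
      refine ⟨(q, s + 1, s :: r), ⟨⟨h1, by simp [h2], hq, ?_, ?_, ?_⟩, ?_⟩, ?_⟩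
      · dsimp only
        exact List.isChain_cons_cons.2 ⟨by omega, htr⟩
      · intro z hz
        dsimp only at hz ⊢
        have := hbd z hz
        omega
      · dsimp only
        have he : b * p ^ (s + 1) + w * p ^ s = (p * b + w) * p ^ s := by
          rw [pow_succ]; ring
        simp only [Zf_cons]
        omega
      · intro z hz
        simp only [List.head?_cons, Option.mem_def, Option.some.injEq] at hz
        dsimp only
        omega
      · simp [hG']
  have hinjc : Set.InjOn G' Wc := by
    rintro ⟨q1, t1, r1⟩ hx1 ⟨q2, t2, r2⟩ hx2 he
    obtain ⟨rfl, e2, e3⟩ : q1 = q2 ∧ t1 - 1 = t2 - 1 ∧ r1.tail = r2.tail := by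
      simpa [hG', Prod.ext_iff] using he
    obtain ⟨hd1, tl1, rfl⟩ : ∃ hd tl, r1 = hd :: tl := by
      cases h2 : r1 with
      | nil =>
        exfalso
        have := hx1.1.2.1
        rw [h2] at this
        simp at this
      | cons a l => exact ⟨a, l, rfl⟩
    obtain ⟨hd2, tl2, rfl⟩ : ∃ hd tl, r2 = hd :: tl := by
      cases h2 : r2 with
      | nil =>
        exfalso
        have := hx2.1.2.1
        rw [h2] at this
        simp at this
      | cons a l => exact ⟨a, l, rfl⟩
    have g1 := hx1.2 hd1 (by simp)
    have g2 := hx2.2 hd2 (by simp)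
    dsimp only at g1 g2
    simp only [List.tail_cons] at e3
    have ht : t1 = t2 := by omega
    have hhd : hd1 = hd2 := by omega
    simp [ht, hhd, e3]
  have hWsfin : Ws.Finite := Set.Finite.of_finite_image (himgs ▸ hL) hinjs
  have hWcfin : Wc.Finite := Set.Finite.of_finite_image (himgc ▸ hC) hinjc
  rw [hcover, Set.ncard_union_eq hdisj hWsfin hWcfin]
  rw [← himgs, ← himgc, Set.ncard_image_of_injOn hinjs, Set.ncard_image_of_injOn hinjc]

/-- The `L`-side splitting with an empty suffix. -/
lemma ncard_WS_nil (p : ℕ) (u : List ℕ) (b : ℕ) (m : ℕ)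
    (hL : (TrS p u (p * b) [] m).Finite) (hD : ∀ k, (Dset p u k).Finite) :
    (WS p u b [] m).ncard
      = (TrS p u (p * b) [] m).ncard
        + (if b ≤ m then (Dset p u (m - b)).ncard else 0) := by
  classical
  set Ws : Set (List ℕ × ℕ × List ℕ) :=
    {y ∈ WS p u b [] m | 1 ≤ y.2.1} with hWs
  set W0 : Set (List ℕ × ℕ × List ℕ) :=
    {y ∈ WS p u b [] m | y.2.1 = 0} with hW0
  have hcover : WS p u b [] m = Ws ∪ W0 := by
    ext ⟨q, t, r⟩
    constructor
    · intro hy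
      rcases Nat.eq_zero_or_pos t with h | h
      · right; exact ⟨hy, h⟩
      · left; exact ⟨hy, h⟩
    · rintro (hy | hy) <;> exact hy.1
  have hdisj : Disjoint Ws W0 := by
    rw [Set.disjoint_left]
    rintro ⟨q, t, r⟩ hx1 hx2
    have g1 := hx1.2
    have g2 := hx2.2
    dsimp only at g1 g2
    omega
  set G : List ℕ × ℕ × List ℕ → List ℕ × ℕ × List ℕ :=
    fun y => (y.1, y.2.1 - 1, y.2.2) with hG
  have himgs : G '' Ws = TrS p u (p * b) [] m := by
    ext y
    constructor
    · rintro ⟨⟨q, t, r⟩, ⟨⟨h1, h2, hq, htr, hwk, h4⟩, hpos⟩, rfl⟩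
      dsimp only at h1 h2 hq htr hwk h4 hpos
      simp only [hG]
      obtain rfl : r = [] := List.length_eq_zero_iff.1 h2
      refine ⟨h1, rfl, ?_, ?_⟩
      · refine (chain'_glue_iff q (t - 1) []).2 ⟨hq, List.isChain_singleton _, ?_⟩
        intro z hz
        have := hwk z hz
        omega
      · dsimp only
        have he : b * p ^ t = p * b * p ^ (t - 1) := by
          conv_lhs => rw [show t = (t - 1) + 1 from by omega]
          rw [pow_succ]; ring
        omega
    · obtain ⟨q, s, r⟩ := y
      rintro ⟨h1, h2, hch, h4⟩
      dsimp only at h1 h2 hch h4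
      obtain rfl : r = [] := List.length_eq_zero_iff.1 h2
      obtain ⟨hq, -, hbd⟩ := (chain'_glue_iff q s []).1 hch
      refine ⟨(q, s + 1, []), ⟨⟨h1, rfl, hq, List.isChain_singleton _, ?_, ?_⟩, by dsimp only; omega⟩, ?_⟩
      · intro z hz
        dsimp only at hz ⊢
        have := hbd z hz
        omega
      · dsimp only
        have he : b * p ^ (s + 1) = p * b * p ^ s := by rw [pow_succ]; ring
        omega
      · simp [hG]
  have hinjs : Set.InjOn G Ws := by
    rintro ⟨q1, t1, r1⟩ hx1 ⟨q2, t2, r2⟩ hx2 he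
    obtain ⟨rfl, e2, rfl⟩ : q1 = q2 ∧ t1 - 1 = t2 - 1 ∧ r1 = r2 := by
      simpa [hG, Prod.ext_iff] using he
    have g1 := hx1.2
    have g2 := hx2.2
    dsimp only at g1 g2
    have : t1 = t2 := by omega
    simp [this]
  have hWsfin : Ws.Finite := Set.Finite.of_finite_image (himgs ▸ hL) hinjs
  rcases le_or_gt b m with hbm | hbm
  · have himg0 : Prod.fst '' W0 = Dset p u (m - b) := by
      ext q
      constructor
      · rintro ⟨⟨q', t, r⟩, ⟨⟨h1, h2, hq, htr, hwk, h4⟩, ht⟩, rfl⟩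
        dsimp only at h1 h2 hq htr hwk h4 ht
        obtain rfl : r = [] := List.length_eq_zero_iff.1 h2
        subst ht
        simp only [pow_zero, mul_one, Zf_nil_right] at h4
        dsimp only
        exact ⟨h1, hq, by omega⟩
      · rintro ⟨h1, hq, hz⟩
        refine ⟨(q, 0, []), ⟨⟨h1, rfl, hq, List.isChain_singleton _, ?_, ?_⟩, rfl⟩, rfl⟩
        · intro z hz2; dsimp only; omega
        · dsimp only
          simp only [pow_zero, mul_one, Zf_nil_right]
          omega
    have hinj0 : Set.InjOn Prod.fst W0 := by
      rintro ⟨q1, t1, r1⟩ hx1 ⟨q2, t2, r2⟩ hx2 he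
      dsimp only at he
      obtain rfl : r1 = [] := List.length_eq_zero_iff.1 hx1.1.2.1
      obtain rfl : r2 = [] := List.length_eq_zero_iff.1 hx2.1.2.1
      have g1 := hx1.2
      have g2 := hx2.2
      dsimp only at g1 g2
      simp [he, g1, g2]
    have hW0fin : W0.Finite := Set.Finite.of_finite_image (himg0 ▸ hD (m - b)) hinj0
    rw [hcover, Set.ncard_union_eq hdisj hWsfin hW0fin, if_pos hbm]
    rw [← himgs, ← himg0, Set.ncard_image_of_injOn hinjs, Set.ncard_image_of_injOn hinj0]
  · have hW0e : W0 = ∅ := by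
      ext ⟨q, t, r⟩
      simp only [Set.mem_empty_iff_false, iff_false]
      rintro ⟨⟨h1, h2, hq, htr, hwk, h4⟩, ht⟩
      dsimp only at h4 ht
      subst ht
      simp only [pow_zero, mul_one] at h4
      omega
    rw [hcover, hW0e, Set.union_empty, if_neg (by omega), Nat.add_zero]
    rw [← himgs, Set.ncard_image_of_injOn hinjs]

lemma WS_nil_prefix (p : ℕ) (b : ℕ) (v : List ℕ) (m : ℕ) :
    WS p [] b v m = TrS p [] b v m := by
  ext ⟨q, t, r⟩
  constructor
  · rintro ⟨h1, h2, hq, htr, hwk, h4⟩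
    obtain rfl : q = [] := List.length_eq_zero_iff.1 h1
    exact ⟨rfl, h2, by simpa [glue] using htr, h4⟩
  · rintro ⟨h1, h2, hch, h4⟩
    obtain rfl : q = [] := List.length_eq_zero_iff.1 h1
    refine ⟨rfl, h2, List.isChain_nil, by simpa [glue] using hch, ?_, h4⟩
    intro z hz
    simp at hz

lemma ncard_Dset_nil (p k : ℕ) : (Dset p [] k).ncard = if k = 0 then 1 else 0 := by
  rcases Nat.eq_zero_or_pos k with rfl | hk
  · have : Dset p [] 0 = {([] : List ℕ)} := by
      ext c
      constructor
      · rintro ⟨h1, -, -⟩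
        simpa using List.length_eq_zero_iff.1 h1
      · rintro rfl
        exact ⟨rfl, List.isChain_nil, by simp⟩
    rw [this, if_pos rfl, Set.ncard_singleton]
  · have : Dset p [] k = ∅ := by
      ext c
      simp only [Set.mem_empty_iff_false, iff_false]
      rintro ⟨h1, -, hz⟩
      obtain rfl : c = [] := List.length_eq_zero_iff.1 h1
      simp only [Zf_nil_right] at hz
      omega
    rw [this, if_neg (by omega), Set.ncard_empty]

lemma pos_append {u v : List ℕ} (hu : ∀ y ∈ u, 0 < y) (hv : ∀ y ∈ v, 0 < y) :
    ∀ y ∈ u ++ v, 0 < y := by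
  intro y hy
  rcases List.mem_append.1 hy with h | h
  exacts [hu y h, hv y h]

lemma pos_cons {b : ℕ} {v : List ℕ} (hb : 0 < b) (hv : ∀ y ∈ v, 0 < y) :
    ∀ y ∈ b :: v, 0 < y := by
  intro y hy
  rcases List.mem_cons.1 hy with rfl | h
  exacts [hb, hv y h]

lemma pos_nil : ∀ y ∈ ([] : List ℕ), 0 < y := by
  intro y hy
  simp at hy

lemma coeff_HserL (p : ℕ) (l : List ℕ) (m : ℕ) :
    (PowerSeries.coeff m) (HserL p l) = ((Sset p l m).ncard : ℤ) := by
  rw [HserL, coeff_mk]; rfl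

end HouAux

open HouAux in
/-- The four reduction identities of Hou for the series `H_{b_1,…,b_r}(z)`, used to
remove a parameter `p·b'_h` divisible by `p` at position `h`.  Case (1) is `1 < h < r`
(the prefix `b_1,…,b_{h−1}` is written `u₀ ++ [x]` and the suffix `b_{h+1},…,b_r` is
written `w :: v₀`), case (2) is `1 = h < r`, case (3) is `1 < h = r`, and case (4) is
`1 = h = r`. -/
theorem stmt_8 (p : ℕ) (hp : p.Prime) :
    (∀ (u₀ : List ℕ) (x b' w : ℕ) (v₀ : List ℕ),
        (∀ y ∈ u₀, 0 < y) → 0 < x → 0 < b' → 0 < w → (∀ y ∈ v₀, 0 < y) →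
        HserL p (u₀ ++ [x] ++ (p * b') :: w :: v₀) =
          HserL p (u₀ ++ [x] ++ b' :: w :: v₀)
          + HserL p (u₀ ++ (x + b') :: w :: v₀)
          - HserL p (u₀ ++ [x] ++ (p * b' + w) :: v₀)) ∧
    (∀ (b' w : ℕ) (v₀ : List ℕ),
        0 < b' → 0 < w → (∀ y ∈ v₀, 0 < y) →
        HserL p ((p * b') :: w :: v₀) =
          HserL p (b' :: w :: v₀) - HserL p ((p * b' + w) :: v₀)) ∧
    (∀ (u₀ : List ℕ) (x b' : ℕ),
        (∀ y ∈ u₀, 0 < y) → 0 < x → 0 < b' →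
        HserL p (u₀ ++ [x, p * b']) =
          HserL p (u₀ ++ [x, b'])
          + HserL p (u₀ ++ [x + b'])
          - PowerSeries.X ^ b' * HserL p (u₀ ++ [x])) ∧
    (∀ b' : ℕ, 0 < b' →
        HserL p [p * b'] = HserL p [b'] - PowerSeries.X ^ b') := by
  have hp2 : 2 ≤ p := hp.two_le
  refine ⟨?_, ?_, ?_, ?_⟩
  · -- case 1 : 1 < h < r
    intro u₀ x b' w v₀ hu hx hb hw hv
    have hu' : ∀ y ∈ u₀ ++ [x], 0 < y := pos_append hu (pos_cons hx pos_nil)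
    have hv' : ∀ y ∈ w :: v₀, 0 < y := pos_cons hw hv
    apply PowerSeries.ext
    intro m
    simp only [map_add, map_sub, coeff_HserL]
    have hA := finite_TrS (p := p) hp2 (pos_append hu' (pos_cons hb hv')) m
    have hB := finite_TrS (p := p) hp2
      (pos_append hu (pos_cons (by omega : 0 < x + b') hv')) m
    have hL := finite_TrS (p := p) hp2
      (pos_append hu' (pos_cons (Nat.mul_pos (show 0 < p by omega) hb) hv')) m
    have hC := finite_TrS (p := p) hp2
      (pos_append hu' (pos_cons (show 0 < p * b' + w by have := Nat.mul_pos (show 0 < p by omega) hb; omega) hv)) m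
    have e1 := ncard_WS_concat p u₀ x b' (w :: v₀) m hA hB
    have e2 := ncard_WS_cons p (u₀ ++ [x]) b' w v₀ m hL hC
    have eA := ncard_TrS_eq_Sset p (u₀ ++ [x]) b' (w :: v₀) m
    have eB := ncard_TrS_eq_Sset p u₀ (x + b') (w :: v₀) m
    have eL := ncard_TrS_eq_Sset p (u₀ ++ [x]) (p * b') (w :: v₀) m
    have eC := ncard_TrS_eq_Sset p (u₀ ++ [x]) (p * b' + w) v₀ m
    rw [← eA, ← eB, ← eL, ← eC]
    omega
  · -- case 2 : 1 = h < r
    intro b' w v₀ hb hw hv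
    have hv' : ∀ y ∈ w :: v₀, 0 < y := pos_cons hw hv
    apply PowerSeries.ext
    intro m
    simp only [map_sub, coeff_HserL]
    have hL := finite_TrS (p := p) hp2
      (pos_append pos_nil (pos_cons (Nat.mul_pos (show 0 < p by omega) hb) hv')) m
    have hC := finite_TrS (p := p) hp2
      (pos_append pos_nil (pos_cons (show 0 < p * b' + w by have := Nat.mul_pos (show 0 < p by omega) hb; omega) hv)) m
    have e1 : WS p [] b' (w :: v₀) m = TrS p [] b' (w :: v₀) m := WS_nil_prefix p b' (w :: v₀) m
    have e2 := ncard_WS_cons p [] b' w v₀ m hL hC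
    have e1' := congrArg Set.ncard e1
    have eA := ncard_TrS_eq_Sset p [] b' (w :: v₀) m
    have eL := ncard_TrS_eq_Sset p [] (p * b') (w :: v₀) m
    have eC := ncard_TrS_eq_Sset p [] (p * b' + w) v₀ m
    simp only [List.nil_append] at eA eL eC
    rw [← eA, ← eL, ← eC]
    omega
  · -- case 3 : 1 < h = r
    intro u₀ x b' hu hx hb
    have hu' : ∀ y ∈ u₀ ++ [x], 0 < y := pos_append hu (pos_cons hx pos_nil)
    have hxl : u₀ ++ [x, p * b'] = (u₀ ++ [x]) ++ [p * b'] := by simp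
    have hxb : u₀ ++ [x, b'] = (u₀ ++ [x]) ++ [b'] := by simp
    rw [hxl, hxb]
    apply PowerSeries.ext
    intro m
    simp only [map_add, map_sub, PowerSeries.coeff_X_pow_mul', coeff_HserL]
    have hA := finite_TrS (p := p) hp2 (pos_append hu' (pos_cons hb pos_nil)) m
    have hB := finite_TrS (p := p) hp2
      (pos_append hu (pos_cons (by omega : 0 < x + b') pos_nil)) m
    have hL := finite_TrS (p := p) hp2
      (pos_append hu' (pos_cons (Nat.mul_pos (show 0 < p by omega) hb) pos_nil)) m
    have hD : ∀ k, (Dset p (u₀ ++ [x]) k).Finite := fun k => finite_Dset hp2 hu' k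
    have e1 := ncard_WS_concat p u₀ x b' [] m hA hB
    have e2 := ncard_WS_nil p (u₀ ++ [x]) b' m hL hD
    rw [ncard_Dset p (u₀ ++ [x]) (m - b')] at e2
    have eA := ncard_TrS_eq_Sset p (u₀ ++ [x]) b' [] m
    have eB := ncard_TrS_eq_Sset p u₀ (x + b') [] m
    have eL := ncard_TrS_eq_Sset p (u₀ ++ [x]) (p * b') [] m
    rw [← eA, ← eB, ← eL]
    split_ifs at e2 ⊢ with hbm
    · omega
    · omega
  · -- case 4 : 1 = h = r
    intro b' hb
    apply PowerSeries.ext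
    intro m
    simp only [map_sub, PowerSeries.coeff_X_pow, coeff_HserL]
    have hL := finite_TrS (p := p) hp2
      (pos_append pos_nil (pos_cons (Nat.mul_pos (show 0 < p by omega) hb) pos_nil)) m
    have hD : ∀ k, (Dset p ([] : List ℕ) k).Finite := fun k => finite_Dset hp2 pos_nil k
    have e1 : WS p [] b' [] m = TrS p [] b' [] m := WS_nil_prefix p b' [] m
    have e1' := congrArg Set.ncard e1
    have e2 := ncard_WS_nil p [] b' m hL hD
    rw [ncard_Dset_nil p (m - b')] at e2
    have eA := ncard_TrS_eq_Sset p [] b' [] m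
    have eL := ncard_TrS_eq_Sset p [] (p * b') [] m
    simp only [List.nil_append] at eA eL
    rw [← eA, ← eL]
    split_ifs at e2 ⊢ <;> omega
end

section
/- Let α be a non-negative integer, and let N(z) be the generating function for the numbers of non-crossing connected graphs. Then there exist Laurent polynomials a_0(z), a_1(z), …, a_{3^{α+1}−1}(z) with integer coefficients such that N(z) = Σ_{i=0}^{3^{α+1}−1} a_i(z) · Φ(z)^i modulo 3^{3^α}, where Φ(z) = Σ_{n≥0} z^{3^n}; i.e. the images of the two sides in the ring of formal Laurent series over ℤ/3^{3^α}ℤ are equal. -/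
open PowerSeries
open scoped Classical

/-- `Φ(z) = Σ_{n≥0} z^{3^n}` as a formal power series over `ℤ`. -/
noncomputable def Phi3 : PowerSeries ℤ :=
  PowerSeries.mk fun m => if ∃ n : ℕ, m = 3 ^ n then 1 else 0

namespace NCG

noncomputable abbrev emb : Polynomial ℤ →+* PowerSeries ℤ := Polynomial.coeToPowerSeries.ringHom

noncomputable def evB : Polynomial (Polynomial ℤ) →+* PowerSeries ℤ :=
  Polynomial.eval₂RingHom emb Phi3

@[simp] lemma evB_C (a : Polynomial ℤ) : evB (Polynomial.C a) = emb a := by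
  simp [evB]

@[simp] lemma evB_X : evB Polynomial.X = Phi3 := by
  simp [evB]

@[simp] lemma evB_two : evB 2 = 2 := map_ofNat _ 2

@[simp] lemma emb_X : emb Polynomial.X = PowerSeries.X := Polynomial.coe_X

@[simp] lemma emb_X_pow (j : ℕ) : emb (Polynomial.X ^ j) = PowerSeries.X ^ j := by
  simp [Polynomial.coeToPowerSeries.ringHom_apply, Polynomial.coe_pow, Polynomial.coe_X]

/-- congruence modulo `M` of power series -/
def congM (M : ℤ) (f g : PowerSeries ℤ) : Prop := ∃ h, f = g + PowerSeries.C (R := ℤ) M * h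

lemma congM_coeff {M : ℤ} {f g : PowerSeries ℤ} (h : congM M f g) (n : ℕ) :
    M ∣ PowerSeries.coeff (R := ℤ) n (f - g) := by
  obtain ⟨h, rfl⟩ := h
  rw [add_sub_cancel_left, PowerSeries.coeff_C_mul]
  exact Dvd.intro _ rfl

lemma congM_of_forall_dvd {M : ℤ} {f g : PowerSeries ℤ}
    (h : ∀ n, M ∣ PowerSeries.coeff (R := ℤ) n (f - g)) : congM M f g := by
  refine ⟨PowerSeries.mk fun n => (PowerSeries.coeff (R := ℤ) n (f - g)) / M, ?_⟩
  ext n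
  rw [map_add, PowerSeries.coeff_C_mul, PowerSeries.coeff_mk,
    Int.mul_ediv_cancel' (h n), map_sub]
  ring

lemma congM_dvd {M M' : ℤ} (hd : M' ∣ M) {f g : PowerSeries ℤ} (h : congM M f g) :
    congM M' f g := by
  obtain ⟨c, rfl⟩ := hd
  obtain ⟨h, rfl⟩ := h
  exact ⟨PowerSeries.C (R := ℤ) c * h, by rw [map_mul]; ring⟩

end NCG

namespace NCG

lemma trunc_decomp (f : PowerSeries (ZMod 3)) (m : ℕ) :
    ∃ g, f = ((f.trunc (m+1) : Polynomial (ZMod 3)) : PowerSeries (ZMod 3)) + X^(m+1)*g := by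
  refine ⟨PowerSeries.mk fun n => PowerSeries.coeff (n+(m+1)) f, ?_⟩
  ext n
  rw [map_add, Polynomial.coeff_coe, PowerSeries.coeff_trunc, PowerSeries.coeff_X_pow_mul',
    PowerSeries.coeff_mk]
  by_cases h : n < m + 1
  · simp [h, Nat.not_le.2 h]
  · rw [if_neg h, if_pos (Nat.le_of_not_lt h), Nat.sub_add_cancel (Nat.le_of_not_lt h), zero_add]

lemma coeff_cube (f : PowerSeries (ZMod 3)) (m : ℕ) :
    PowerSeries.coeff m (f^3) = if 3 ∣ m then PowerSeries.coeff (m/3) f else 0 := by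
  obtain ⟨g, hg⟩ := trunc_decomp f m
  set T := f.trunc (m+1) with hT
  have h3 : f^3 = ((T:PowerSeries (ZMod 3)))^3
      + X^(m+1) * (g*(3*(T:PowerSeries (ZMod 3))^2 + 3*(T:PowerSeries (ZMod 3))*(X^(m+1)*g)
        + (X^(m+1)*g)^2)) := by
    rw [hg]; ring
  have hTe : T^3 = Polynomial.expand (ZMod 3) 3 T := by
    haveI : Fact (Nat.Prime 3) := ⟨by norm_num⟩
    have := Polynomial.map_frobenius_expand (p := 3) (f := T)
    rw [ZMod.frobenius_zmod, Polynomial.map_id] at this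
    exact this.symm
  rw [h3, map_add, PowerSeries.coeff_X_pow_mul', if_neg (by omega), add_zero,
    ← Polynomial.coe_pow, Polynomial.coeff_coe, hTe,
    Polynomial.coeff_expand (by norm_num : 0 < 3)]
  by_cases hd : 3 ∣ m
  · rw [if_pos hd, if_pos hd, hT, PowerSeries.coeff_trunc, if_pos (by omega : m/3 < m+1)]
  · rw [if_neg hd, if_neg hd]

lemma phi3_dvd3 : ∀ n, (3:ℤ) ∣ PowerSeries.coeff (R := ℤ) n (Phi3^3 - (Phi3 - X)) := by
  intro n
  have hmap : PowerSeries.coeff (R := (ZMod 3)) n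
      (PowerSeries.map (Int.castRingHom (ZMod 3)) (Phi3^3 - (Phi3 - X))) = 0 := by
    set μ := Int.castRingHom (ZMod 3)
    set F := PowerSeries.map μ Phi3 with hF
    have hFc : ∀ m : ℕ, PowerSeries.coeff m F = (if ∃ j : ℕ, m = 3 ^ j then 1 else 0 : ZMod 3) := by
      intro m
      rw [hF, PowerSeries.coeff_map, Phi3, PowerSeries.coeff_mk, apply_ite μ, map_one, map_zero]
    simp only [map_sub, map_pow, PowerSeries.map_X, ← hF]
    rw [coeff_cube, hFc, hFc, PowerSeries.coeff_X]
    by_cases hm : ∃ j : ℕ, n = 3 ^ j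
    · obtain ⟨j, rfl⟩ := hm
      cases j with
      | zero =>
        rw [pow_zero, if_neg (by norm_num : ¬ (3:ℕ) ∣ 1), if_pos ⟨0, by norm_num⟩,
          if_pos rfl]
        ring
      | succ j =>
        have hd : 3 ∣ 3^(j+1) := ⟨3^j, by ring⟩
        have hq : 3^(j+1)/3 = 3^j := by
          rw [pow_succ, mul_comm, Nat.mul_div_cancel_left _ (by norm_num)]
        rw [if_pos hd, hq, if_pos ⟨j, rfl⟩, if_pos ⟨j+1, rfl⟩,
          if_neg (by have h3 : (3:ℕ) ≤ 3^(j+1) := Nat.le_self_pow (by omega) 3; omega)]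
        ring
    · have h1 : n ≠ 1 := fun h => hm ⟨0, by omega⟩
      rw [if_neg hm, if_neg h1]
      by_cases hd : 3 ∣ n
      · rw [if_pos hd, if_neg, sub_zero, sub_zero]
        rintro ⟨j, hj⟩
        exact hm ⟨j+1, by rw [pow_succ, ← hj, mul_comm]; exact (Nat.mul_div_cancel' hd).symm⟩
      · rw [if_neg hd]; ring
  rw [PowerSeries.coeff_map] at hmap
  exact_mod_cast (ZMod.intCast_zmod_eq_zero_iff_dvd _ 3).1 hmap

lemma phi3_rel : ∃ Wit, Phi3^3 = Phi3 - X + 3*Wit := by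
  obtain ⟨h, hh⟩ := congM_of_forall_dvd (M := 3) (g := Phi3 - X) (by simpa using phi3_dvd3)
  exact ⟨h, by rw [hh, map_ofNat]⟩

end NCG

namespace NCG

lemma X_shift {R : Type*} [CommRing R] (f : PowerSeries R)
    (h : PowerSeries.constantCoeff (R := R) f = 0) :
    f = X * (PowerSeries.mk fun n => PowerSeries.coeff (R := R) (n+1) f) := by
  ext n
  cases n with
  | zero =>
    simp [PowerSeries.coeff_zero_eq_constantCoeff, map_mul, h]
  | succ n => rw [PowerSeries.coeff_succ_X_mul, PowerSeries.coeff_mk]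

lemma X_regular {R : Type*} [CommRing R] {f : PowerSeries R} (h : X * f = 0) : f = 0 := by
  ext n
  have := congrArg (PowerSeries.coeff (R := R) (n+1)) h
  rw [PowerSeries.coeff_succ_X_mul] at this
  simpa using this

lemma base_N (N : PowerSeries ℤ)
    (h0 : PowerSeries.coeff (R := ℤ) 0 N = 0)
    (h1 : PowerSeries.coeff (R := ℤ) 1 N = 1)
    (heq : N ^ 3 + N ^ 2 - 3 * PowerSeries.X * N + 2 * PowerSeries.X ^ 2 = 0)
    (W : PowerSeries ℤ) (hW : Phi3^3 = Phi3 - X + 3*W) :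
    congM 3 N (Phi3 + Phi3^2) := by
  have hPhi0 : PowerSeries.constantCoeff (R := ℤ) Phi3 = 0 := by
    rw [← PowerSeries.coeff_zero_eq_constantCoeff, Phi3, PowerSeries.coeff_mk]
    rw [if_neg]
    rintro ⟨n, hn⟩
    have := pow_pos (by norm_num : (0:ℕ) < 3) n
    omega
  have hPhi1 : PowerSeries.coeff (R := ℤ) 1 Phi3 = 1 := by
    rw [Phi3, PowerSeries.coeff_mk, if_pos ⟨0, by norm_num⟩]
  have h0' : PowerSeries.constantCoeff (R := ℤ) N = 0 := by
    rwa [← PowerSeries.coeff_zero_eq_constantCoeff]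
  set Ns := PowerSeries.mk fun n => PowerSeries.coeff (R := ℤ) (n+1) N with hNs
  have hN : N = X * Ns := X_shift N h0'
  set Fs := PowerSeries.mk fun n => PowerSeries.coeff (R := ℤ) (n+1) Phi3 with hFs
  have hF : Phi3 = X * Fs := X_shift Phi3 hPhi0
  have hNs0 : PowerSeries.constantCoeff (R := ℤ) Ns = 1 := by
    rw [hNs, ← PowerSeries.coeff_zero_eq_constantCoeff, PowerSeries.coeff_mk, zero_add, h1]
  have hFs0 : PowerSeries.constantCoeff (R := ℤ) Fs = 1 := by
    rw [hFs, ← PowerSeries.coeff_zero_eq_constantCoeff, PowerSeries.coeff_mk, zero_add, hPhi1]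
  set Ps : PowerSeries ℤ := Fs + X * Fs^2 with hPs
  set U : PowerSeries ℤ := X*(Ns^2 + Ns*Ps + Ps^2) + Ns + Ps - 3 with hU
  set Om : PowerSeries ℤ := 6*W + 3*W^2 - 2*X - 2*X*W + X^2 + 2*Phi3 + 6*Phi3*W - 3*Phi3*X
      + 2*Phi3^2 + 3*Phi3^2*W - 2*Phi3^2*X with hOm
  have hkey : (N - (Phi3 + Phi3^2)) * (X * U) = 3 * (-Om) := by
    have hE : X * U = N*N + N*(Phi3+Phi3^2) + (Phi3+Phi3^2)*(Phi3+Phi3^2) + N + (Phi3+Phi3^2)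
        - 3*X := by
      rw [hU, hPs, hN, hF]
      ring
    rw [hE, hOm]
    linear_combination heq - (6 + 3*W - X + 5*Phi3 + 3*Phi3^2 + Phi3^3) * hW
  -- move to ZMod 3
  set mu := PowerSeries.map (Int.castRingHom (ZMod 3)) with hmu
  have h30 : (3 : PowerSeries (ZMod 3)) = 0 := by
    rw [← map_ofNat (PowerSeries.C (R := (ZMod 3))) 3, show ((3:ZMod 3)) = 0 from by decide, map_zero]
  have hmap : mu (N - (Phi3 + Phi3^2)) * (X * mu U) = 0 := by
    have h5 := congrArg mu hkey
    rw [map_mul, map_mul, map_mul, PowerSeries.map_X, map_ofNat, h30, zero_mul] at h5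
    exact h5
  have hU0 : PowerSeries.constantCoeff (R := (ZMod 3)) (mu U) = ((-1 : (ZMod 3)ˣ) : ZMod 3) := by
    have hU0' : PowerSeries.constantCoeff (R := ℤ) U = -1 := by
      rw [hU, hPs]
      simp only [map_sub, map_add, map_mul, map_pow, map_ofNat, PowerSeries.constantCoeff_X,
        zero_mul, hNs0, hFs0, one_pow, one_mul, mul_one]
      ring
    rw [← PowerSeries.coeff_zero_eq_constantCoeff, hmu, PowerSeries.coeff_map,
      PowerSeries.coeff_zero_eq_constantCoeff, hU0']
    decide
  have hXz : mu (N - (Phi3 + Phi3^2)) * X = 0 := by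
    have h6 := congrArg (· * PowerSeries.invOfUnit (mu U) (-1)) hmap
    simp only [zero_mul] at h6
    calc mu (N - (Phi3 + Phi3^2)) * X
        = mu (N - (Phi3 + Phi3^2)) * (X * mu U) * PowerSeries.invOfUnit (mu U) (-1) := by
          rw [mul_assoc, mul_assoc, PowerSeries.mul_invOfUnit _ _ hU0, mul_one]
      _ = 0 := by rw [h6]
  have hz : mu (N - (Phi3 + Phi3^2)) = 0 := X_regular (by rwa [mul_comm] at hXz)
  apply congM_of_forall_dvd
  intro n
  have h7 := congrArg (PowerSeries.coeff (R := (ZMod 3)) n) hz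
  rw [hmu, PowerSeries.coeff_map, map_zero] at h7
  exact_mod_cast (ZMod.intCast_zmod_eq_zero_iff_dvd _ 3).1 h7

end NCG

namespace NCG

def GoodPair (N V : PowerSeries ℤ) (k : ℕ) : Prop :=
  ∃ (d e : ℕ) (p v : Polynomial (Polynomial ℤ)),
    congM ((3:ℤ)^k) (X^d * N) (evB p) ∧ congM ((3:ℤ)^k) (X^e * V) (evB v)

lemma base_V (N V : PowerSeries ℤ)
    (hTV : (3*N^2 + 2*N - 3*X) * V = X)
    (W : PowerSeries ℤ) (hW : Phi3^3 = Phi3 - X + 3*W)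
    (hbN : congM 3 N (Phi3 + Phi3^2)) :
    congM 3 V (2 + Phi3) := by
  obtain ⟨A0, hA0⟩ := hbN
  rw [show (PowerSeries.C (R := ℤ)) (3:ℤ) = 3 from map_ofNat _ 3] at hA0
  set H2 : PowerSeries ℤ := (N^2 - X)*(2+Phi3) + 2*A0*(2+Phi3) + (2*Phi3 + 2*Phi3^2 + 2*W - X)
    with hH2
  have h2 : (3*N^2 + 2*N - 3*X)*(2+Phi3) = X + 3*H2 := by
    rw [hH2]
    linear_combination (2*(2+Phi3))*hA0 + 2*hW
  have h3 : X*(2+Phi3) = X*V + 3*(H2*V) := by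
    linear_combination (-(2+Phi3))*hTV + V*h2
  apply congM_of_forall_dvd
  intro n
  have h4 : PowerSeries.coeff (R := ℤ) (n+1) (X*((2+Phi3) - V)) = 3 * PowerSeries.coeff (R := ℤ) (n+1) (H2*V) := by
    have : X*((2+Phi3) - V) = 3*(H2*V) := by linear_combination h3
    rw [this, ← PowerSeries.coeff_C_mul, show (PowerSeries.C (R := ℤ)) (3:ℤ) = 3 from map_ofNat _ 3]
  rw [PowerSeries.coeff_succ_X_mul] at h4
  have : V - (2+Phi3) = -(((2:PowerSeries ℤ)+Phi3) - V) := by ring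
  rw [this, map_neg]
  exact (dvd_neg.2 ⟨_, h4⟩)

lemma goodpair_base (N V : PowerSeries ℤ)
    (h0 : PowerSeries.coeff (R := ℤ) 0 N = 0)
    (h1 : PowerSeries.coeff (R := ℤ) 1 N = 1)
    (heq : N ^ 3 + N ^ 2 - 3 * PowerSeries.X * N + 2 * PowerSeries.X ^ 2 = 0)
    (hTV : (3*N^2 + 2*N - 3*X) * V = X)
    (W : PowerSeries ℤ) (hW : Phi3^3 = Phi3 - X + 3*W) :
    GoodPair N V 1 := by
  refine ⟨0, 0, Polynomial.X + Polynomial.X^2, 2 + Polynomial.X, ?_, ?_⟩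
  · have := base_N N h0 h1 heq W hW
    simpa [pow_one, map_add, map_pow] using this
  · have := base_V N V hTV W hW (base_N N h0 h1 heq W hW)
    simpa [pow_one, map_add] using this

lemma goodpair_step (N V : PowerSeries ℤ)
    (heq : N ^ 3 + N ^ 2 - 3 * PowerSeries.X * N + 2 * PowerSeries.X ^ 2 = 0)
    (hTV : (3*N^2 + 2*N - 3*X) * V = X)
    {k : ℕ} (hk : GoodPair N V k) : GoodPair N V (2*k) := by
  obtain ⟨d, e, p, v, ⟨A, hA⟩, ⟨B, hB⟩⟩ := hk
  set S : PowerSeries ℤ := PowerSeries.C (R := ℤ) ((3:ℤ)^k) with hS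
  have hC2 : PowerSeries.C (R := ℤ) ((3:ℤ)^(2*k)) = S * S := by
    rw [hS, ← map_mul, ← pow_add, two_mul]
  have hA' : evB p = X^d*N - S*A := by rw [hA]; ring
  have hB' : evB v = X^e*V - S*B := by rw [hB]; ring
  set cpoly : Polynomial (Polynomial ℤ) := p^3 + Polynomial.C (Polynomial.X^d) * p^2
      - 3*Polynomial.C (Polynomial.X^(2*d+1)) * p + 2*Polynomial.C (Polynomial.X^(3*d+2))
    with hcpoly
  set p' : Polynomial (Polynomial ℤ) := Polynomial.C (Polynomial.X^(2*d+1+e)) * p - cpoly * v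
    with hp'
  set D : PowerSeries ℤ := A^2*(3*X^d*N + X^d) - S*A^3 with hD
  set A' : PowerSeries ℤ := D*(X^e*V) - S*(D*B) + A*B*X^(2*d)*(3*N^2+2*N-3*X) with hA'2
  have hev : evB p' = X^(2*d+1+e) * evB p - ((evB p)^3 + X^d*(evB p)^2 - 3*X^(2*d+1)*(evB p)
      + 2*X^(3*d+2)) * evB v := by
    rw [hp', hcpoly]
    simp only [map_sub, map_add, map_mul, map_pow, map_ofNat, evB_C, emb_X, emb_X_pow]
  have goal1 : X^(3*d+1+e) * N = evB p' + PowerSeries.C (R := ℤ) ((3:ℤ)^(2*k)) * A' := by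
    rw [hC2, hev, hA', hB', hA'2, hD]
    linear_combination (X^d*X^d*X^d*(X^e*V - S*B)) * heq - (S*A*X^d*X^d*X^e)*hTV
  set d' : ℕ := 3*d+1+e with hd'
  set v' : Polynomial (Polynomial ℤ) := 2*Polynomial.C (Polynomial.X^(e+2*d'+1))*v
      - v^2*(3*p'^2 + 2*Polynomial.C (Polynomial.X^(d'))*p' - 3*Polynomial.C (Polynomial.X^(2*d'+1)))
    with hv'
  set C2 : PowerSeries ℤ := A'*(6*X^(d')*N + 2*X^(d')) - 3*(S*S)*A'^2 with hC2'
  set B' : PowerSeries ℤ := B^2*X^(2*d')*(3*N^2+2*N-3*X) - (X^e*V - S*B)^2*C2 with hB'2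
  have hA2' : evB p' = X^(d')*N - S*S*A' := by
    rw [hd'] at goal1 ⊢
    rw [hC2] at goal1
    linear_combination -goal1
  have hev2 : evB v' = 2*X^(e+2*d'+1)*evB v - (evB v)^2*(3*(evB p')^2 + 2*X^(d')*evB p'
      - 3*X^(2*d'+1)) := by
    rw [hv']
    simp only [map_sub, map_add, map_mul, map_pow, map_ofNat, evB_C, emb_X, emb_X_pow]
  have goal2 : X^(2*e+2*d'+1) * V = evB v' + PowerSeries.C (R := ℤ) ((3:ℤ)^(2*k)) * B' := by
    rw [hC2, hev2, hA2', hB', hB'2, hC2']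
    linear_combination (X^(2*d')*(X^e*X^e*V - 2*X^e*(S*B))) * hTV
  exact ⟨d', 2*e+2*d'+1, p', v', ⟨A', goal1⟩, ⟨B', goal2⟩⟩

end NCG

namespace NCG

lemma goodpair_mono (N V : PowerSeries ℤ) {j k : ℕ} (h : j ≤ k) (hk : GoodPair N V k) :
    GoodPair N V j := by
  obtain ⟨d, e, p, v, hp, hv⟩ := hk
  exact ⟨d, e, p, v, congM_dvd (pow_dvd_pow 3 h) hp, congM_dvd (pow_dvd_pow 3 h) hv⟩

lemma goodpair_all (N V : PowerSeries ℤ)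
    (h0 : PowerSeries.coeff (R := ℤ) 0 N = 0)
    (h1 : PowerSeries.coeff (R := ℤ) 1 N = 1)
    (heq : N ^ 3 + N ^ 2 - 3 * PowerSeries.X * N + 2 * PowerSeries.X ^ 2 = 0)
    (hTV : (3*N^2 + 2*N - 3*X) * V = X)
    (W : PowerSeries ℤ) (hW : Phi3^3 = Phi3 - X + 3*W) (k : ℕ) :
    GoodPair N V k := by
  have h2 : ∀ m, GoodPair N V (2^m) := by
    intro m
    induction m with
    | zero => rw [pow_zero]; exact goodpair_base N V h0 h1 heq hTV W hW
    | succ m ih =>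
      have := goodpair_step N V heq hTV ih
      rwa [show 2*2^m = 2^(m+1) from by rw [pow_succ]; ring] at this
  exact goodpair_mono N V (Nat.le_of_lt (Nat.lt_two_pow_self (n := k))) (h2 k)

lemma emb_coeff (q : Polynomial ℤ) (n : ℕ) :
    PowerSeries.coeff (R := ℤ) n (emb q) = q.coeff n := by
  rw [Polynomial.coeToPowerSeries.ringHom_apply, Polynomial.coeff_coe]

end NCG

/-- Theorem (non-crossing connected graphs): for every non-negative integer `α`, the
generating function `N(z)` of the numbers of non-crossing connected graphs (the unique
power series with `N_0 = 0`, `N_1 = 1` and `N³ + N² − 3zN + 2z² = 0`) agrees, modulo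
`3^{3^α}`, with a polynomial of degree at most `3^{α+1} − 1` in `Φ(z)` whose
coefficients are Laurent polynomials in `z` over `ℤ` (represented here as Laurent
series with finite support). -/
theorem stmt_9 (α : ℕ) (N : PowerSeries ℤ)
    (h0 : PowerSeries.coeff 0 N = 0)
    (h1 : PowerSeries.coeff 1 N = 1)
    (heq : N ^ 3 + N ^ 2 - 3 * PowerSeries.X * N + 2 * PowerSeries.X ^ 2 = 0) :
    ∃ q : Fin (3 ^ (α + 1)) → LaurentSeries ℤ,
      (∀ i, (q i).support.Finite) ∧
      ∀ m : ℤ, (3 : ℤ) ^ (3 ^ α) ∣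
        ((HahnSeries.ofPowerSeries ℤ ℤ) N -
          ∑ i, q i * ((HahnSeries.ofPowerSeries ℤ ℤ) Phi3) ^ (i : ℕ)).coeff m := by
  classical
  obtain ⟨W, hW⟩ := NCG.phi3_rel
  -- the inverse V with (3N²+2N-3X)·V = X
  set t : PowerSeries ℤ := 3*N^2 + 2*N - 3*X with ht
  have h0' : PowerSeries.constantCoeff (R := ℤ) N = 0 := by
    rwa [← PowerSeries.coeff_zero_eq_constantCoeff]
  have ht0 : PowerSeries.constantCoeff (R := ℤ) t = 0 := by
    rw [ht]
    simp [map_sub, map_add, map_mul, map_pow, h0']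
  set u : PowerSeries ℤ := PowerSeries.mk fun n => PowerSeries.coeff (R := ℤ) (n+1) t with hu
  have hXu : t = X * u := NCG.X_shift t ht0
  have hNsh : N = X * (PowerSeries.mk fun n => PowerSeries.coeff (R := ℤ) (n+1) N) :=
    NCG.X_shift N h0'
  have hu0 : PowerSeries.constantCoeff (R := ℤ) u = ((-1 : ℤˣ) : ℤ) := by
    rw [hu, ← PowerSeries.coeff_zero_eq_constantCoeff, PowerSeries.coeff_mk, zero_add]
    have hN2 : PowerSeries.coeff (R := ℤ) 1 (N^2) = 0 := by
      rw [show N^2 = X^2 * ((PowerSeries.mk fun n => PowerSeries.coeff (R := ℤ) (n+1) N))^2 from by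
        rw [← mul_pow, ← hNsh]]
      rw [PowerSeries.coeff_X_pow_mul', if_neg (by omega)]
    rw [ht]
    simp only [map_sub, map_add]
    rw [show (3:PowerSeries ℤ)*N^2 = PowerSeries.C (R := ℤ) 3 * N^2 from by rw [map_ofNat],
      show (2:PowerSeries ℤ)*N = PowerSeries.C (R := ℤ) 2 * N from by rw [map_ofNat],
      show (3:PowerSeries ℤ)*X = PowerSeries.C (R := ℤ) 3 * X from by rw [map_ofNat]]
    rw [PowerSeries.coeff_C_mul, PowerSeries.coeff_C_mul, PowerSeries.coeff_C_mul, hN2, h1,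
      PowerSeries.coeff_X, if_pos rfl]
    norm_num
  set V : PowerSeries ℤ := PowerSeries.invOfUnit u (-1) with hV
  have huV : u * V = 1 := PowerSeries.mul_invOfUnit u (-1) hu0
  have hTV : t * V = X := by rw [hXu, mul_assoc, huV, mul_one]
  -- good pair at k = 3^α
  set k : ℕ := 3^α with hk
  obtain ⟨d, e, p, v, ⟨H, hH⟩, -⟩ :=
    NCG.goodpair_all N V h0 h1 heq (by rw [← ht]; exact hTV) W hW k
  -- reduce the degree of p modulo ρ^k
  set ρ : Polynomial (Polynomial ℤ) := Polynomial.X^3 - Polynomial.X + Polynomial.C Polynomial.X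
    with hρ
  have hmρ : ρ.Monic := by
    have : ρ = Polynomial.X^(2+1) - (Polynomial.X - Polynomial.C Polynomial.X) := by
      rw [hρ]; ring
    rw [this]
    apply Polynomial.monic_X_pow_sub
    have hd1 : (Polynomial.X - Polynomial.C (Polynomial.X : Polynomial ℤ)).degree ≤ 1 := by
      apply le_trans (Polynomial.degree_sub_le _ _)
      rw [Polynomial.degree_X]
      simp only [max_le_iff]
      exact ⟨le_refl _, le_trans Polynomial.degree_C_le (by exact_mod_cast Nat.zero_le 1)⟩
    exact lt_of_le_of_lt hd1 (by exact_mod_cast (by norm_num : (1:ℕ) < 2+1))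
  have hmρk : (ρ^k).Monic := hmρ.pow k
  have hevρ : NCG.evB ρ = 3*W := by
    rw [hρ]
    simp only [map_sub, map_add, map_pow, NCG.evB_X, NCG.evB_C, NCG.emb_X]
    linear_combination hW
  set r := p %ₘ ρ^k with hr
  have hsplit := Polynomial.modByMonic_add_div p (ρ^k)
  have hre : NCG.evB p = NCG.evB r + (3*W)^k * NCG.evB (p /ₘ ρ^k) := by
    conv_lhs => rw [← hsplit]
    rw [map_add, map_mul, map_pow, hevρ, hr]
  have hC3k : (PowerSeries.C (R := ℤ)) ((3:ℤ)^k) = 3^k := by rw [map_pow, map_ofNat]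
  have hfin : X^d * N = NCG.evB r
      + PowerSeries.C (R := ℤ) ((3:ℤ)^k) * (W^k * NCG.evB (p /ₘ ρ^k) + H) := by
    rw [hH, hre, hC3k]
    ring
  -- degree bound on r
  have hkpos : 1 ≤ k := Nat.one_le_iff_ne_zero.2 (by positivity)
  have hρk1 : ρ^k ≠ 1 := by
    intro hcon
    have h3W0 : PowerSeries.constantCoeff (R := ℤ) (3*W) = 0 := by
      have : (3:PowerSeries ℤ)*W = Phi3^3 - Phi3 + X := by linear_combination -hW
      rw [this]
      have hPhi0 : PowerSeries.constantCoeff (R := ℤ) Phi3 = 0 := by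
        rw [← PowerSeries.coeff_zero_eq_constantCoeff, Phi3, PowerSeries.coeff_mk]
        rw [if_neg]
        rintro ⟨n, hn⟩
        have := pow_pos (by norm_num : (0:ℕ) < 3) n
        omega
      simp [map_sub, map_add, map_pow, hPhi0]
    have := congrArg NCG.evB hcon
    rw [map_pow, hevρ, map_one] at this
    have := congrArg (PowerSeries.constantCoeff (R := ℤ)) this
    rw [map_pow, h3W0, map_one, zero_pow (by omega : k ≠ 0)] at this
    exact zero_ne_one this
  have hdeg : r.natDegree < 3^(α+1) := by
    have hlt : r.natDegree < (ρ^k).natDegree :=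
      Polynomial.natDegree_modByMonic_lt p hmρk hρk1
    have hdb : (ρ^k).natDegree ≤ 3^(α+1) := by
      rw [Polynomial.natDegree_pow]
      have hρ3 : ρ.natDegree ≤ 3 := by
        rw [hρ]
        apply le_trans (Polynomial.natDegree_add_le _ _)
        simp only [max_le_iff]
        constructor
        · apply le_trans (Polynomial.natDegree_sub_le _ _)
          simp [Polynomial.natDegree_X_pow, Polynomial.natDegree_X]
        · simp [Polynomial.natDegree_C]
      calc k * ρ.natDegree ≤ k * 3 := Nat.mul_le_mul_left k hρ3
        _ = 3^(α+1) := by rw [hk, pow_succ]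
    omega
  -- the sum expression for evB r
  have hsum0 : NCG.evB r = ∑ i ∈ Finset.range (3^(α+1)), NCG.emb (r.coeff i) * Phi3^i := by
    rw [NCG.evB, Polynomial.coe_eval₂RingHom]
    exact Polynomial.eval₂_eq_sum_range' NCG.emb hdeg Phi3
  -- final witnesses
  refine ⟨fun i => HahnSeries.single (-(d:ℤ)) 1
      * (HahnSeries.ofPowerSeries ℤ ℤ) (NCG.emb (r.coeff (i:ℕ))), ?_, ?_⟩
  · intro i
    apply Set.Finite.subset
      (Set.Finite.image (fun n : ℕ => (n:ℤ) - d) (r.coeff (i:ℕ)).support.finite_toSet)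
    intro m hm
    rw [HahnSeries.mem_support] at hm
    rw [show m = (m + d) + (-(d:ℤ)) from by ring, HahnSeries.coeff_single_mul_add, one_mul] at hm
    rcases le_or_gt 0 (m + (d:ℤ)) with hpos | hneg
    · lift (m + (d:ℤ)) to ℕ using hpos with n hn
      rw [HahnSeries.ofPowerSeries_apply_coeff, NCG.emb_coeff] at hm
      refine ⟨n, by simpa [Polynomial.mem_support_iff] using hm, ?_⟩
      show (n:ℤ) - d = m
      omega
    · exfalso
      apply hm
      rw [HahnSeries.ofPowerSeries_apply]
      apply HahnSeries.embDomain_notin_range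
      rintro ⟨n, hn⟩
      replace hn : (n:ℤ) = m + d := hn
      omega
  · intro m
    have hsum : (∑ i : Fin (3^(α+1)), (HahnSeries.single (-(d:ℤ)) 1
          * (HahnSeries.ofPowerSeries ℤ ℤ) (NCG.emb (r.coeff (i:ℕ))))
          * ((HahnSeries.ofPowerSeries ℤ ℤ) Phi3) ^ (i:ℕ))
        = HahnSeries.single (-(d:ℤ)) 1 * (HahnSeries.ofPowerSeries ℤ ℤ) (NCG.evB r) := by
      rw [hsum0, map_sum, Finset.mul_sum, ← Fin.sum_univ_eq_sum_range
        (fun i => HahnSeries.single (-(d:ℤ)) 1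
          * (HahnSeries.ofPowerSeries ℤ ℤ) (NCG.emb (r.coeff i) * Phi3^i)) (3^(α+1))]
      apply Finset.sum_congr rfl
      intro i _
      rw [map_mul, map_pow]
      ring
    rw [hsum]
    have hdiff : (HahnSeries.ofPowerSeries ℤ ℤ) N
        - HahnSeries.single (-(d:ℤ)) 1 * (HahnSeries.ofPowerSeries ℤ ℤ) (NCG.evB r)
        = HahnSeries.single (-(d:ℤ)) 1 * (HahnSeries.ofPowerSeries ℤ ℤ)
            (PowerSeries.C (R := ℤ) ((3:ℤ)^k) * (W^k * NCG.evB (p /ₘ ρ^k) + H)) := by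
      have h9 : (HahnSeries.ofPowerSeries ℤ ℤ) (X^d * N)
          = HahnSeries.single ((d:ℤ)) 1 * (HahnSeries.ofPowerSeries ℤ ℤ) N := by
        rw [map_mul, HahnSeries.ofPowerSeries_X_pow]
      have h10 : HahnSeries.single (-(d:ℤ)) 1 * HahnSeries.single ((d:ℤ)) (1:ℤ) = 1 := by
        rw [HahnSeries.single_mul_single, neg_add_cancel, mul_one, HahnSeries.single_zero_one]
      calc (HahnSeries.ofPowerSeries ℤ ℤ) N
            - HahnSeries.single (-(d:ℤ)) 1 * (HahnSeries.ofPowerSeries ℤ ℤ) (NCG.evB r)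
          = HahnSeries.single (-(d:ℤ)) 1 * ((HahnSeries.ofPowerSeries ℤ ℤ) (X^d*N)
            - (HahnSeries.ofPowerSeries ℤ ℤ) (NCG.evB r)) := by
            rw [h9, mul_sub, ← mul_assoc, h10, one_mul]
        _ = _ := by
            rw [← map_sub]
            congr 1
            congr 1
            rw [hfin]
            ring
    rw [hdiff]
    rw [show m = (m + d) + (-(d:ℤ)) from by ring, HahnSeries.coeff_single_mul_add, one_mul]
    rcases le_or_gt 0 (m + (d:ℤ)) with hpos | hneg
    · lift (m + (d:ℤ)) to ℕ using hpos with n hn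
      rw [HahnSeries.ofPowerSeries_apply_coeff, PowerSeries.coeff_C_mul]
      exact Dvd.intro _ rfl
    · have hnr : (m + (d:ℤ)) ∉ Set.range ((↑) : ℕ → ℤ) := by
        rintro ⟨n, hn⟩
        omega
      rw [HahnSeries.ofPowerSeries_apply, HahnSeries.embDomain_notin_range]
      · exact dvd_zero _
      · simpa using hnr
end
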